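/- arXiv:1703.06444 — 6 statements merged into one kernel-verified Lean document; each statement's English description precedes it below -/
import Mathlib

section
/- Let (X, d) be a quasiconvex and complete metric space and let A ⊂ X be a separable subset. Then there is a subset X̃ ⊂ X containing A such that (X̃, d), with the metric induced from X, is separable, quasiconvex, and complete. Moreover, if C_q is a quasiconvexity constant for X, then X̃ is quasiconvex with any quasiconvexity constant larger than C_q. -/
open MeasureTheory Set ENNReal NNReal

noncomputable section

/-- A metric space `X` is quasiconvex with constant `C ≥ 1` if any two points can be joined
by a rectifiable curve of length at most `C` times their distance. -/
def IsQuasiconvexWith (X : Type*) [MetricSpace X] (C : ℝ≥0) : Prop :=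
  ∀ x y : X, ∃ γ : ℝ → X, ContinuousOn γ (Set.Icc 0 1) ∧ γ 0 = x ∧ γ 1 = y ∧
    eVariationOn γ (Set.Icc 0 1) ≤ (C : ℝ≥0∞) * edist x y

/-- A subset `S` of a metric space `X` is quasiconvex with constant `C` if any two points of `S`
can be joined by a rectifiable curve lying in `S` of length at most `C` times their distance. -/
def IsQuasiconvexOn {X : Type*} [MetricSpace X] (C : ℝ≥0) (S : Set X) : Prop :=
  ∀ x ∈ S, ∀ y ∈ S, ∃ γ : ℝ → X, ContinuousOn γ (Set.Icc 0 1) ∧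
    Set.MapsTo γ (Set.Icc 0 1) S ∧ γ 0 = x ∧ γ 1 = y ∧
    eVariationOn γ (Set.Icc 0 1) ≤ (C : ℝ≥0∞) * edist x y

open Filter

private lemma qc_image_affine {p r : ℝ} (hr : 0 < r) :
    (fun t => (t - p) / r) '' Icc p (p + r) = Icc 0 1 := by
  ext s
  constructor
  · rintro ⟨t, ⟨h1, h2⟩, rfl⟩
    exact ⟨div_nonneg (by linarith) hr.le, (div_le_one hr).2 (by linarith)⟩
  · rintro ⟨h0, h1⟩
    refine ⟨p + s * r, ⟨by nlinarith, by nlinarith⟩, ?_⟩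
    field_simp
    ring

private lemma qc_image_affine' {q r : ℝ} (hr : 0 < r) :
    (fun t => (q - t) / r) '' Icc (q - r) q = Icc 0 1 := by
  ext s
  constructor
  · rintro ⟨t, ⟨h1, h2⟩, rfl⟩
    exact ⟨div_nonneg (by linarith) hr.le, (div_le_one hr).2 (by linarith)⟩
  · rintro ⟨h0, h1⟩
    refine ⟨q - s * r, ⟨by nlinarith, by nlinarith⟩, ?_⟩
    field_simp
    ring

private lemma qc_contOn_union_Icc {X : Type*} [MetricSpace X] {f : ℝ → X} {a b c : ℝ}
    (hab : a ≤ b) (hbc : b ≤ c)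
    (h1 : ContinuousOn f (Icc a b)) (h2 : ContinuousOn f (Icc b c)) :
    ContinuousOn f (Icc a c) := by
  rw [← Icc_union_Icc_eq_Icc hab hbc]
  intro t _
  have c1 : ContinuousWithinAt f (Icc a b) t := by
    by_cases h : t ∈ Icc a b
    · exact h1 t h
    · exact continuousWithinAt_of_notMem_closure (by rwa [isClosed_Icc.closure_eq])
  have c2 : ContinuousWithinAt f (Icc b c) t := by
    by_cases h : t ∈ Icc b c
    · exact h2 t h
    · exact continuousWithinAt_of_notMem_closure (by rwa [isClosed_Icc.closure_eq])
  exact c1.union c2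

private lemma qc_Icc_add_Icc {X : Type*} [MetricSpace X] (f : ℝ → X) {a b c : ℝ}
    (hab : a ≤ b) (hbc : b ≤ c) :
    eVariationOn f (Icc a c) = eVariationOn f (Icc a b) + eVariationOn f (Icc b c) := by
  have := eVariationOn.Icc_add_Icc f (s := univ) hab hbc (mem_univ b)
  simpa [univ_inter] using this.symm

section Chain

variable {X : Type*} [MetricSpace X]

private lemma qc_chain (S : Set X) (x : X) (a : ℕ → X)
    (γ : ℕ → ℝ → X) (L : ℕ → ℝ≥0∞)
    (hγc : ∀ k, ContinuousOn (γ k) (Icc 0 1))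
    (hγS : ∀ k, MapsTo (γ k) (Icc 0 1) S)
    (hγ0 : ∀ k, γ k 0 = a (k + 1))
    (hγ1 : ∀ k, γ k 1 = a k)
    (hγv : ∀ k, eVariationOn (γ k) (Icc 0 1) ≤ L k)
    (hsum : ∑' k, L k ≠ ∞)
    (hax : Tendsto a atTop (nhds x)) :
    ∃ f : ℝ → X, ContinuousOn f (Icc 0 1) ∧ MapsTo f (Icc 0 1) (insert x S) ∧
      f 0 = x ∧ f 1 = a 0 ∧ eVariationOn f (Icc 0 1) ≤ 3 * ∑' k, L k := by
  classical
  set c : ℕ → ℝ := fun k => (2⁻¹ : ℝ) ^ k with hc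
  have hcpos : ∀ k, 0 < c k := fun k => pow_pos (by norm_num) k
  have hclt : ∀ {k l : ℕ}, k < l → c l < c k := by
    intro k l h
    exact pow_lt_pow_right_of_lt_one₀ (by norm_num) (by norm_num) h
  have hcle : ∀ {k l : ℕ}, k ≤ l → c l ≤ c k := by
    intro k l h
    exact pow_le_pow_of_le_one (by norm_num) (by norm_num) h
  have hcone : c 0 = 1 := pow_zero _
  have hsucc : ∀ k, c (k + 1) + c (k + 1) = c k := by
    intro k
    simp only [hc, pow_succ]
    ring
  have ex : ∀ t : ℝ, 0 < t → ∃ k, c (k + 1) < t := by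
    intro t ht
    obtain ⟨n, hn⟩ := exists_pow_lt_of_lt_one ht (by norm_num : (2⁻¹ : ℝ) < 1)
    exact ⟨n, lt_of_lt_of_le (hclt (Nat.lt_succ_self n)) hn.le⟩
  set φ : ℕ → ℝ → ℝ := fun k t => (t - c (k + 1)) / c (k + 1) with hφ
  set f : ℝ → X := fun t =>
    if ht : 0 < t then γ (Nat.find (ex t ht)) (φ (Nat.find (ex t ht)) t) else x with hf
  have hK1 : ∀ t (ht : 0 < t), c (Nat.find (ex t ht) + 1) < t := fun t ht => Nat.find_spec (ex t ht)
  have hK2 : ∀ t (ht : 0 < t), ∀ j, j < Nat.find (ex t ht) → t ≤ c (j + 1) :=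
    fun t ht j hj => not_lt.1 (Nat.find_min (ex t ht) hj)
  have hKe : ∀ t (ht : 0 < t) (k : ℕ), c (k + 1) < t → (∀ j, j < k → t ≤ c (j + 1)) →
      Nat.find (ex t ht) = k := by
    intro t ht k h1 h2
    exact (Nat.find_eq_iff _).2 ⟨h1, fun j hj => not_lt.2 (h2 j hj)⟩
  have hφone : ∀ k, φ k (c k) = 1 := by
    intro k
    have h := hsucc k
    rw [hφ]
    field_simp
    rw [div_eq_one_iff_eq (hcpos (k + 1)).ne']; linarith
  have hφzero : ∀ k, φ k (c (k + 1)) = 0 := by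
    intro k
    simp [hφ]
  have hfd : ∀ t (ht : 0 < t), f t = γ (Nat.find (ex t ht)) (φ (Nat.find (ex t ht)) t) := by
    intro t ht
    show (if ht : 0 < t then γ (Nat.find (ex t ht)) (φ (Nat.find (ex t ht)) t) else x) = _
    rw [dif_pos ht]
  have hfseg : ∀ k, EqOn f (fun t => γ k (φ k t)) (Icc (c (k + 1)) (c k)) := by
    intro k t ht
    obtain ⟨ht1, ht2⟩ := ht
    have htpos : 0 < t := lt_of_lt_of_le (hcpos (k + 1)) ht1
    show f t = γ k (φ k t)
    rcases eq_or_lt_of_le ht1 with he | hlt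
    · -- t = c (k+1)
      have hKt : Nat.find (ex t htpos) = k + 1 := by
        refine hKe t htpos (k + 1) ?_ ?_
        · rw [← he]; exact hclt (Nat.lt_succ_self (k + 1))
        · intro j hj
          rw [← he]; exact hcle (Nat.succ_le_succ (Nat.lt_succ_iff.1 hj))
      have h1 : f t = γ (k + 1) (φ (k + 1) t) := by rw [hfd t htpos, hKt]
      have h2 : φ (k + 1) t = 1 := by rw [← he]; exact hφone (k + 1)
      have h3 : φ k t = 0 := by rw [← he]; exact hφzero k
      rw [h1, h2, h3, hγ1, hγ0]
    · -- c (k+1) < t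
      have hKt : Nat.find (ex t htpos) = k := by
        refine hKe t htpos k ?_ ?_
        · exact hlt
        · intro j hj
          exact le_trans ht2 (hcle (Nat.succ_le_of_lt hj))
      rw [hfd t htpos, hKt]
  have hφmaps : ∀ k, MapsTo (φ k) (Icc (c (k + 1)) (c k)) (Icc 0 1) := by
    intro k t ht
    obtain ⟨h1, h2⟩ := ht
    have h := hsucc k
    constructor
    · exact div_nonneg (by linarith) (hcpos (k + 1)).le
    · rw [div_le_one (hcpos (k + 1))]; linarith
  have himg : ∀ k, φ k '' Icc (c (k + 1)) (c k) = Icc 0 1 := by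
    intro k
    have h := qc_image_affine (p := c (k + 1)) (r := c (k + 1)) (hcpos (k + 1))
    rw [hsucc k] at h
    exact h
  have hφmono : ∀ k, MonotoneOn (φ k) (Icc (c (k + 1)) (c k)) := by
    intro k u _ v _ huv
    exact (div_le_div_iff_of_pos_right (hcpos (k + 1))).2 (by linarith)
  have hvar_seg : ∀ k, eVariationOn f (Icc (c (k + 1)) (c k)) ≤ L k := by
    intro k
    rw [eVariationOn.eq_of_eqOn (hfseg k)]
    have h := eVariationOn.comp_eq_of_monotoneOn (γ k) (φ k) (hφmono k)
    rw [himg k] at h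
    calc eVariationOn (fun t => γ k (φ k t)) (Icc (c (k + 1)) (c k))
        = eVariationOn (γ k ∘ φ k) (Icc (c (k + 1)) (c k)) := rfl
      _ = eVariationOn (γ k) (Icc 0 1) := h
      _ ≤ L k := hγv k
  have hf0 : f 0 = x := by
    show (if ht : (0:ℝ) < 0 then γ (Nat.find (ex 0 ht)) (φ (Nat.find (ex 0 ht)) 0) else x) = x
    rw [dif_neg (lt_irrefl (0:ℝ))]
  have hfc : ∀ k, f (c k) = a k := by
    intro k
    have hmem : c k ∈ Icc (c (k + 1)) (c k) := ⟨(hclt (Nat.lt_succ_self k)).le, le_rfl⟩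
    rw [hfseg k hmem]
    simp only [hφone k, hγ1]
  have hf1 : f 1 = a 0 := by
    have := hfc 0
    rwa [hcone] at this
  have hKmem : ∀ t (ht : 0 < t), t ≤ 1 →
      t ∈ Icc (c (Nat.find (ex t ht) + 1)) (c (Nat.find (ex t ht))) := by
    intro t ht ht1
    refine ⟨(hK1 t ht).le, ?_⟩
    cases hfind : Nat.find (ex t ht) with
    | zero => rw [hcone]; exact ht1
    | succ m => exact hK2 t ht m (by rw [hfind]; exact Nat.lt_succ_self m)
  have hmaps : MapsTo f (Icc 0 1) (insert x S) := by
    intro t ht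
    obtain ⟨h0, h1⟩ := ht
    rcases eq_or_lt_of_le h0 with he | htpos
    · rw [← he, hf0]; exact mem_insert _ _
    · have hft : f t = γ (Nat.find (ex t htpos)) (φ (Nat.find (ex t htpos)) t) := by
        rw [hf]; simp only [dif_pos htpos]
      rw [hft]
      exact mem_insert_of_mem _ (hγS _ (hφmaps _ (hKmem t htpos h1)))
  have hedist_piece : ∀ p, edist (a (p + 1)) (a p) ≤ L p := by
    intro p
    rw [← hγ0 p, ← hγ1 p]
    have h := eVariationOn.edist_le (γ p) (s := Icc (0:ℝ) 1) (x := 0) (y := 1)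
      ⟨le_rfl, zero_le_one⟩ ⟨zero_le_one, le_rfl⟩
    exact h.trans (hγv p)
  have hedist_a : ∀ k m, k ≤ m → edist (a m) x ≤ ∑' j, L (j + k) := by
    intro k m hkm
    have hstep : ∀ p, m ≤ p → edist (a m) (a p) ≤ ∑ j ∈ Finset.Ico k p, L j := by
      intro p hp
      induction p, hp using Nat.le_induction with
      | base => simp
      | succ p hmp ih =>
        calc edist (a m) (a (p + 1)) ≤ edist (a m) (a p) + edist (a p) (a (p + 1)) :=
              edist_triangle _ _ _
          _ ≤ (∑ j ∈ Finset.Ico k p, L j) + L p := by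
              refine add_le_add ih ?_
              rw [edist_comm]; exact hedist_piece p
          _ = ∑ j ∈ Finset.Ico k (p + 1), L j :=
              (Finset.sum_Ico_succ_top (le_trans hkm hmp) L).symm
    have hsum' : ∀ p, m ≤ p → edist (a m) (a p) ≤ ∑' j, L (j + k) := by
      intro p hp
      refine (hstep p hp).trans ?_
      rw [Finset.sum_Ico_eq_sum_range]
      calc ∑ i ∈ Finset.range (p - k), L (k + i)
          = ∑ i ∈ Finset.range (p - k), L (i + k) := by
            refine Finset.sum_congr rfl fun i _ => ?_
            rw [Nat.add_comm]
        _ ≤ ∑' j, L (j + k) := ENNReal.sum_le_tsum _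
    have ht : Tendsto (fun p => edist (a m) (a p)) atTop (nhds (edist (a m) x)) :=
      Tendsto.edist tendsto_const_nhds hax
    exact le_of_tendsto ht (eventually_atTop.2 ⟨m, hsum'⟩)
  have hclose : ∀ (k : ℕ) (t : ℝ), 0 < t → t ≤ c k → edist (f t) x ≤ 2 * ∑' j, L (j + k) := by
    intro k t ht htc
    have ht1 : t ≤ 1 := le_trans htc (by rw [← hcone]; exact hcle (Nat.zero_le k))
    set m := Nat.find (ex t ht) with hm
    have hkm : k ≤ m := by
      by_contra h
      push_neg at h
      have h1 := hK1 t ht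
      have h2 : c k ≤ c (m + 1) := hcle (Nat.succ_le_of_lt h)
      linarith
    have hft : f t = γ m (φ m t) := hfd t ht
    have h1 : edist (f t) (a (m + 1)) ≤ L m := by
      rw [hft, ← hγ0 m]
      have h := eVariationOn.edist_le (γ m) (s := Icc (0:ℝ) 1) (x := φ m t) (y := 0)
        (hφmaps m (hKmem t ht ht1)) ⟨le_rfl, zero_le_one⟩
      exact h.trans (hγv m)
    have h2 : edist (a (m + 1)) x ≤ ∑' j, L (j + k) :=
      hedist_a k (m + 1) (le_trans hkm (Nat.le_succ m))
    have h3 : L m ≤ ∑' j, L (j + k) := by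
      have he : L m = L ((m - k) + k) := by rw [Nat.sub_add_cancel hkm]
      rw [he]
      exact ENNReal.le_tsum _
    calc edist (f t) x ≤ edist (f t) (a (m + 1)) + edist (a (m + 1)) x := edist_triangle _ _ _
      _ ≤ (∑' j, L (j + k)) + ∑' j, L (j + k) := add_le_add (h1.trans h3) h2
      _ = 2 * ∑' j, L (j + k) := (two_mul _).symm
  have hcont_seg : ∀ k, ContinuousOn f (Icc (c (k + 1)) (c k)) := by
    intro k
    refine ContinuousOn.congr ?_ (hfseg k)
    exact (hγc k).comp ((continuous_id.sub continuous_const).div_const _).continuousOn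
      (hφmaps k)
  have hcont_right : ∀ k, ContinuousOn f (Icc (c k) 1) := by
    intro k
    induction k with
    | zero => rw [hcone, Icc_self]; exact subsingleton_singleton.continuousOn f
    | succ k ih =>
      have h2 : c k ≤ 1 := by rw [← hcone]; exact hcle (Nat.zero_le k)
      exact qc_contOn_union_Icc (hclt (Nat.lt_succ_self k)).le h2 (hcont_seg k) ih
  have hcont : ContinuousOn f (Icc 0 1) := by
    intro t ht
    obtain ⟨h0, h1⟩ := ht
    rcases eq_or_lt_of_le h0 with he | htpos
    · -- t = 0
      rw [← he]
      have hx0 : f 0 = x := hf0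
      rw [ContinuousWithinAt, hx0, EMetric.tendsto_nhds]
      intro ε hε
      have hmin : (0 : ℝ≥0∞) < min ε 1 / 2 :=
        ENNReal.div_pos (ne_of_gt (lt_min hε zero_lt_one)) (by norm_num)
      obtain ⟨k, hk⟩ : ∃ k, ∑' j, L (j + k) < min ε 1 / 2 :=
        ((ENNReal.tendsto_sum_nat_add L hsum).eventually (gt_mem_nhds hmin)).exists
      have hmem' : Icc (0 : ℝ) 1 ∩ Iio (c k) ∈ nhdsWithin (0 : ℝ) (Icc 0 1) :=
        inter_mem_nhdsWithin _ (Iio_mem_nhds (hcpos k))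
      filter_upwards [hmem'] with s hs
      obtain ⟨⟨hs0, hs1⟩, hsk⟩ := hs
      rcases eq_or_lt_of_le hs0 with he2 | hspos
      · rw [← he2, hf0]
        simpa using hε
      · calc edist (f s) x ≤ 2 * ∑' j, L (j + k) := hclose k s hspos hsk.le
          _ < 2 * (min ε 1 / 2) := by
              exact (ENNReal.mul_lt_mul_iff_right (by norm_num) (by norm_num)).2 hk
          _ = min ε 1 := ENNReal.mul_div_cancel' (by norm_num) (by norm_num)
          _ ≤ ε := min_le_left _ _
    · -- t > 0
      obtain ⟨k, hk⟩ := ex t htpos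
      have hsub : Icc (c (k + 1)) 1 ∈ nhdsWithin t (Icc 0 1) := by
        refine Filter.mem_of_superset (inter_mem_nhdsWithin _ (Ioi_mem_nhds hk)) ?_
        rintro s ⟨⟨_, hs1⟩, hs2⟩
        exact ⟨le_of_lt hs2, hs1⟩
      exact ContinuousWithinAt.mono_of_mem_nhdsWithin
        (hcont_right (k + 1) t ⟨hk.le, h1⟩) hsub
  have hvar_right : ∀ k, eVariationOn f (Icc (c k) 1) ≤ ∑ j ∈ Finset.range k, L j := by
    intro k
    induction k with
    | zero =>
      rw [hcone, Icc_self]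
      simp [eVariationOn.subsingleton f subsingleton_singleton]
    | succ k ih =>
      have h1 : c (k + 1) ≤ c k := (hclt (Nat.lt_succ_self k)).le
      have h2 : c k ≤ 1 := by rw [← hcone]; exact hcle (Nat.zero_le k)
      rw [qc_Icc_add_Icc f h1 h2]
      calc eVariationOn f (Icc (c (k + 1)) (c k)) + eVariationOn f (Icc (c k) 1)
          ≤ L k + ∑ j ∈ Finset.range k, L j := add_le_add (hvar_seg k) ih
        _ = ∑ j ∈ Finset.range (k + 1), L j := by rw [Finset.sum_range_succ, add_comm]
  have hvar_pos : ∀ b : ℝ, 0 < b → eVariationOn f (Icc b 1) ≤ ∑' k, L k := by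
    intro b hb
    obtain ⟨n, hn⟩ := exists_pow_lt_of_lt_one hb (by norm_num : (2⁻¹ : ℝ) < 1)
    calc eVariationOn f (Icc b 1) ≤ eVariationOn f (Icc (c n) 1) :=
          eVariationOn.mono f (Icc_subset_Icc_left hn.le)
      _ ≤ ∑ j ∈ Finset.range n, L j := hvar_right n
      _ ≤ ∑' k, L k := ENNReal.sum_le_tsum _
  have hvar : eVariationOn f (Icc 0 1) ≤ 3 * ∑' k, L k := by
    set V := ∑' k, L k with hV
    have hVle : V ≤ 3 * V := by
      conv_lhs => rw [← one_mul V]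
      exact mul_le_mul_left (by norm_num) V
    rw [eVariationOn]
    refine iSup_le ?_
    rintro ⟨n, u, hu, hus⟩
    dsimp only
    by_cases h0 : 0 < u 0
    · have hmem : ∀ i, u i ∈ Icc (u 0) 1 := fun i => ⟨hu (Nat.zero_le i), (hus i).2⟩
      calc ∑ i ∈ Finset.range n, edist (f (u (i + 1))) (f (u i))
          ≤ eVariationOn f (Icc (u 0) 1) := eVariationOn.sum_le (f := f) (n := n) hu hmem
        _ ≤ V := hvar_pos _ h0
        _ ≤ 3 * V := hVle
    · have hu0 : u 0 = 0 := le_antisymm (not_lt.1 h0) (hus 0).1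
      set g : ℕ → ℝ≥0∞ := fun i => edist (f (u (i + 1))) (f (u i)) with hg
      set m := Nat.findGreatest (fun i => u i = 0) n with hm
      have hmn : m ≤ n := Nat.findGreatest_le n
      have hum : u m = 0 := by
        rw [hm]
        exact Nat.findGreatest_spec (P := fun i => u i = 0) (Nat.zero_le n) hu0
      have hlt : ∀ i, m < i → i ≤ n → 0 < u i := by
        intro i hi1 hi2
        rw [hm] at hi1
        have := Nat.findGreatest_is_greatest (P := fun i => u i = 0) hi1 hi2
        exact lt_of_le_of_ne (hus i).1 (Ne.symm this)
      have hsplit : ∑ i ∈ Finset.range n, g i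
          = ∑ i ∈ Finset.range m, g i + ∑ i ∈ Finset.Ico m n, g i :=
        (Finset.sum_range_add_sum_Ico g hmn).symm
      have hzero : ∑ i ∈ Finset.range m, g i = 0 := by
        refine Finset.sum_eq_zero fun i hi => ?_
        have hi' : i + 1 ≤ m := Finset.mem_range.1 hi
        have hui : u i = 0 :=
          le_antisymm (hum ▸ hu (le_trans (Nat.le_succ i) hi')) (hus i).1
        have hui1 : u (i + 1) = 0 := le_antisymm (hum ▸ hu hi') (hus (i + 1)).1
        simp [hg, hui, hui1]
      rcases eq_or_lt_of_le hmn with he | hmlt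
      · rw [hsplit, hzero, he, Finset.Ico_self, Finset.sum_empty]
        simp
      · have hpos1 : 0 < u (m + 1) := hlt (m + 1) (Nat.lt_succ_self m) hmlt
        have hsum2 : ∑ i ∈ Finset.Ico m n, g i = g m + ∑ i ∈ Finset.Ico (m + 1) n, g i :=
          Finset.sum_eq_sum_Ico_succ_bot hmlt g
        have hgm : g m ≤ 2 * V := by
          have h1 : edist (f (u (m + 1))) x ≤ 2 * ∑' j, L (j + 0) :=
            hclose 0 (u (m + 1)) hpos1 (by rw [hcone]; exact (hus (m + 1)).2)
          simp only [Nat.add_zero] at h1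
          calc g m = edist (f (u (m + 1))) x := by
                show edist (f (u (m + 1))) (f (u m)) = _
                rw [hum, hf0]
            _ ≤ 2 * V := h1
        have htail : ∑ i ∈ Finset.Ico (m + 1) n, g i ≤ V := by
          rw [Finset.sum_Ico_eq_sum_range]
          set v : ℕ → ℝ := fun i => u (m + 1 + i) with hv
          have hvmono : Monotone v := fun i j hij => hu (by omega)
          have hvmem : ∀ i, v i ∈ Icc (u (m + 1)) 1 :=
            fun i => ⟨hu (Nat.le_add_right _ _), (hus _).2⟩
          have hle := eVariationOn.sum_le (f := f) (n := n - (m + 1)) hvmono hvmem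
          have heq : ∀ i, g (m + 1 + i) = edist (f (v (i + 1))) (f (v i)) := by
            intro i
            have h1 : m + 1 + i + 1 = m + 1 + (i + 1) := by omega
            simp only [hg, hv, h1]
          calc ∑ i ∈ Finset.range (n - (m + 1)), g (m + 1 + i)
              = ∑ i ∈ Finset.range (n - (m + 1)), edist (f (v (i + 1))) (f (v i)) :=
                Finset.sum_congr rfl fun i _ => heq i
            _ ≤ eVariationOn f (Icc (u (m + 1)) 1) := hle
            _ ≤ V := hvar_pos _ hpos1
        calc ∑ i ∈ Finset.range n, g i = 0 + (g m + ∑ i ∈ Finset.Ico (m + 1) n, g i) := by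
              rw [hsplit, hzero, hsum2]
          _ ≤ 0 + (2 * V + V) := by
              exact add_le_add le_rfl (add_le_add hgm htail)
          _ = 3 * V := by ring
  exact ⟨f, hcont, hmaps, hf0, hf1, hvar⟩

end Chain

private lemma qc_reparam {X : Type*} [MetricSpace X] {g : ℝ → X} (hg : ContinuousOn g (Icc 0 1))
    {p r : ℝ} (hr : 0 < r) :
    ContinuousOn (fun t => g ((t - p) / r)) (Icc p (p + r)) ∧
    MapsTo (fun t : ℝ => (t - p) / r) (Icc p (p + r)) (Icc 0 1) ∧
    eVariationOn (fun t => g ((t - p) / r)) (Icc p (p + r)) = eVariationOn g (Icc 0 1) := by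
  have himg := qc_image_affine (p := p) (r := r) hr
  have hmaps : MapsTo (fun t : ℝ => (t - p) / r) (Icc p (p + r)) (Icc 0 1) := by
    rw [← himg]; exact mapsTo_image _ _
  have hmono : MonotoneOn (fun t : ℝ => (t - p) / r) (Icc p (p + r)) := fun u _ v _ huv =>
    (div_le_div_iff_of_pos_right hr).2 (by linarith)
  refine ⟨?_, hmaps, ?_⟩
  · exact hg.comp ((continuous_id.sub continuous_const).div_const _).continuousOn hmaps
  · have h := eVariationOn.comp_eq_of_monotoneOn g _ hmono
    rw [himg] at h
    exact h

private lemma qc_reparam' {X : Type*} [MetricSpace X] {g : ℝ → X} (hg : ContinuousOn g (Icc 0 1))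
    {q r : ℝ} (hr : 0 < r) :
    ContinuousOn (fun t => g ((q - t) / r)) (Icc (q - r) q) ∧
    MapsTo (fun t : ℝ => (q - t) / r) (Icc (q - r) q) (Icc 0 1) ∧
    eVariationOn (fun t => g ((q - t) / r)) (Icc (q - r) q) = eVariationOn g (Icc 0 1) := by
  have himg := qc_image_affine' (q := q) (r := r) hr
  have hmaps : MapsTo (fun t : ℝ => (q - t) / r) (Icc (q - r) q) (Icc 0 1) := by
    rw [← himg]; exact mapsTo_image _ _
  have hanti : AntitoneOn (fun t : ℝ => (q - t) / r) (Icc (q - r) q) := fun u _ v _ huv =>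
    (div_le_div_iff_of_pos_right hr).2 (by linarith)
  refine ⟨?_, hmaps, ?_⟩
  · exact hg.comp ((continuous_const.sub continuous_id).div_const _).continuousOn hmaps
  · have h := eVariationOn.comp_eq_of_antitoneOn g _ hanti
    rw [himg] at h
    exact h


/-- **Lemma 2.1.** If `X` is a quasiconvex complete metric space and `A ⊆ X` is separable, then
there is a subset `X̃ ⊆ X` containing `A` which is separable, quasiconvex and complete (with the
induced metric); moreover `X̃` is quasiconvex with any quasiconvexity constant larger than the
quasiconvexity constant `C_q` of `X`. -/
theorem exists_separable_quasiconvex_complete_superset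
    {X : Type*} [MetricSpace X] [CompleteSpace X]
    (Cq : ℝ≥0) (hCq : 1 ≤ Cq) (hX : IsQuasiconvexWith X Cq)
    (A : Set X) (hA : TopologicalSpace.IsSeparable A) :
    ∃ Xt : Set X, A ⊆ Xt ∧ TopologicalSpace.IsSeparable Xt ∧ IsComplete Xt ∧
      (∃ C : ℝ≥0, 1 ≤ C ∧ IsQuasiconvexOn C Xt) ∧
      ∀ C : ℝ≥0, Cq < C → IsQuasiconvexOn C Xt := by
  classical
  choose Γ hΓc hΓ0 hΓ1 hΓv using hX
  have himgsep : ∀ p q : X, ∃ T : Set X, T.Countable ∧ Γ p q '' Icc 0 1 ⊆ closure T := by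
    intro p q
    exact (isCompact_Icc.image_of_continuousOn (hΓc p q)).isSeparable
  choose T hTc hTsub using himgsep
  obtain ⟨c0, hc0c, hAc0⟩ := hA
  set D : ℕ → Set X := fun n =>
    Nat.rec (motive := fun _ => Set X) c0
      (fun _ Dn => Dn ∪ ⋃ p ∈ Dn, ⋃ q ∈ Dn, T p q) n with hD
  have hDsucc : ∀ n, D (n + 1) = D n ∪ ⋃ p ∈ D n, ⋃ q ∈ D n, T p q := fun n => rfl
  have hDcount : ∀ n, (D n).Countable := by
    intro n
    induction n with
    | zero => exact hc0c
    | succ n ih =>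
      rw [hDsucc]
      exact ih.union (ih.biUnion fun p _ => ih.biUnion fun q _ => hTc p q)
  have hDmonot : Monotone D := monotone_nat_of_le_succ fun n => by
    rw [hDsucc]; exact subset_union_left
  set DU : Set X := ⋃ n, D n with hDU
  have hDUc : DU.Countable := countable_iUnion hDcount
  set Xt : Set X := closure DU with hXt
  have hxDU : DU ⊆ Xt := subset_closure
  have hconn : ∀ p ∈ DU, ∀ q ∈ DU, MapsTo (Γ p q) (Icc 0 1) Xt := by
    intro p hp q hq
    obtain ⟨m, hm⟩ := mem_iUnion.1 hp
    obtain ⟨n, hn⟩ := mem_iUnion.1 hq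
    have hp' : p ∈ D (max m n) := hDmonot (le_max_left m n) hm
    have hq' : q ∈ D (max m n) := hDmonot (le_max_right m n) hn
    have hT : T p q ⊆ D (max m n + 1) := by
      rw [hDsucc]
      intro z hz
      exact Or.inr (mem_biUnion hp' (mem_biUnion hq' hz))
    have hTD : T p q ⊆ DU := hT.trans (subset_iUnion D (max m n + 1))
    intro t ht
    exact closure_mono hTD (hTsub p q (mem_image_of_mem _ ht))
  have hmemDU : ∀ p ∈ DU, p ∈ Xt := fun p hp => hxDU hp
  -- the main quasiconvexity statement
  have main : ∀ C : ℝ≥0, Cq < C → IsQuasiconvexOn C Xt := by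
    intro C hC x hx y hy
    by_cases hxy : x = y
    · subst hxy
      refine ⟨fun _ => x, continuousOn_const, fun t _ => hx, rfl, rfl, ?_⟩
      have h0 : eVariationOn (fun _ : ℝ => x) (Icc 0 1) = 0 := by
        apply eVariationOn.constant_on
        rintro _ ⟨t, _, rfl⟩ _ ⟨t', _, rfl⟩
        rfl
      rw [h0]
      exact bot_le
    · have hd0 : 0 < edist x y := edist_pos.2 hxy
      have hdtop : edist x y ≠ ∞ := edist_ne_top x y
      have hCq0 : (Cq : ℝ≥0∞) ≠ 0 := by
        simp only [ne_eq, ENNReal.coe_eq_zero]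
        exact (zero_lt_one.trans_le hCq).ne'
      have hCC : (Cq : ℝ≥0∞) < (C : ℝ≥0∞) := by exact_mod_cast hC
      have h30ne : (30 : ℝ≥0∞) * Cq ≠ 0 := mul_ne_zero (by norm_num) hCq0
      have h30top : (30 : ℝ≥0∞) * Cq ≠ ∞ := ENNReal.mul_ne_top (by norm_num) ENNReal.coe_ne_top
      set δ : ℝ≥0∞ := ((C : ℝ≥0∞) - Cq) * edist x y / (30 * Cq) with hδ
      have hδ0 : δ ≠ 0 := by
        refine (ENNReal.div_pos (mul_ne_zero ?_ hd0.ne') h30top).ne'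
        exact (tsub_pos_of_lt hCC).ne'
      have hδtop : δ ≠ ∞ := by
        refine (ENNReal.div_lt_top ?_ h30ne).ne
        exact ENNReal.mul_ne_top (ne_top_of_le_ne_top ENNReal.coe_ne_top tsub_le_self) hdtop
      have hhalfle : (2⁻¹ : ℝ≥0∞) ≤ 1 := ENNReal.inv_le_one.2 one_le_two
      have hhalf : ∀ k : ℕ, (0 : ℝ≥0∞) < δ * 2⁻¹ ^ k := by
        intro k
        exact ENNReal.mul_pos hδ0 (pow_ne_zero k (by norm_num))
      have haex : ∀ k : ℕ, ∃ z ∈ DU, edist x z < δ * 2⁻¹ ^ k := by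
        intro k
        exact EMetric.mem_closure_iff.1 hx _ (hhalf k)
      have hbex : ∀ k : ℕ, ∃ z ∈ DU, edist y z < δ * 2⁻¹ ^ k := by
        intro k
        exact EMetric.mem_closure_iff.1 hy _ (hhalf k)
      choose av havD havd using haex
      choose bv hbvD hbvd using hbex
      have hpow : Tendsto (fun k : ℕ => δ * 2⁻¹ ^ k) atTop (nhds 0) := by
        have h2 : Tendsto (fun k : ℕ => (2⁻¹ : ℝ≥0∞) ^ k) atTop (nhds 0) :=
          ENNReal.tendsto_pow_atTop_nhds_zero_of_lt_one (ENNReal.inv_lt_one.2 one_lt_two)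
        simpa using ENNReal.Tendsto.const_mul h2 (Or.inr hδtop)
      have hav_t : Tendsto av atTop (nhds x) := by
        rw [EMetric.tendsto_atTop]
        intro ε hε
        obtain ⟨N, hN⟩ := eventually_atTop.1 (hpow.eventually (gt_mem_nhds hε))
        exact ⟨N, fun n hn =>
          lt_of_le_of_lt (by rw [edist_comm]; exact (havd n).le) (hN n hn)⟩
      have hbv_t : Tendsto bv atTop (nhds y) := by
        rw [EMetric.tendsto_atTop]
        intro ε hε
        obtain ⟨N, hN⟩ := eventually_atTop.1 (hpow.eventually (gt_mem_nhds hε))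
        exact ⟨N, fun n hn =>
          lt_of_le_of_lt (by rw [edist_comm]; exact (hbvd n).le) (hN n hn)⟩
      set L : ℕ → ℝ≥0∞ := fun k => (Cq : ℝ≥0∞) * (2 * δ * 2⁻¹ ^ k) with hL
      have hsumL : ∑' k, L k = 4 * Cq * δ := by
        rw [hL]
        calc ∑' k : ℕ, (Cq : ℝ≥0∞) * (2 * δ * 2⁻¹ ^ k)
            = ∑' k : ℕ, ((Cq : ℝ≥0∞) * (2 * δ)) * 2⁻¹ ^ k := by
              congr 1; funext k; ring
          _ = ((Cq : ℝ≥0∞) * (2 * δ)) * ∑' k : ℕ, (2⁻¹ : ℝ≥0∞) ^ k := ENNReal.tsum_mul_left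
          _ = ((Cq : ℝ≥0∞) * (2 * δ)) * 2 := by
              rw [ENNReal.tsum_geometric]
              congr 1
              rw [ENNReal.one_sub_inv_two, inv_inv]
          _ = 4 * Cq * δ := by ring
      have hsumL_ne : ∑' k, L k ≠ ∞ := by
        rw [hsumL]
        exact ENNReal.mul_ne_top (ENNReal.mul_ne_top (by norm_num) ENNReal.coe_ne_top) hδtop
      have hdist_seq : ∀ (v : ℕ → X) (z : X), (∀ k, edist z (v k) < δ * 2⁻¹ ^ k) →
          ∀ k, edist (v (k + 1)) (v k) ≤ 2 * δ * 2⁻¹ ^ k := by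
        intro v z hv k
        have h1 : edist (v (k + 1)) z ≤ δ * 2⁻¹ ^ k := by
          rw [edist_comm]
          refine (hv (k + 1)).le.trans (mul_le_mul_right ?_ δ)
          exact pow_le_pow_right_of_le_one' hhalfle (Nat.le_succ k)
        have h2 : edist z (v k) ≤ δ * 2⁻¹ ^ k := (hv k).le
        calc edist (v (k + 1)) (v k) ≤ edist (v (k + 1)) z + edist z (v k) := edist_triangle _ _ _
          _ ≤ δ * 2⁻¹ ^ k + δ * 2⁻¹ ^ k := add_le_add h1 h2
          _ = 2 * δ * 2⁻¹ ^ k := by ring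
      have hγv' : ∀ (v : ℕ → X) (z : X), (∀ k, v k ∈ DU) → (∀ k, edist z (v k) < δ * 2⁻¹ ^ k) →
          ∀ k, eVariationOn (Γ (v (k + 1)) (v k)) (Icc 0 1) ≤ L k := by
        intro v z hvD hv k
        refine (hΓv _ _).trans ?_
        rw [hL]
        exact mul_le_mul_right (hdist_seq v z hv k) _
      obtain ⟨fa, hfac, hfam, hfa0, hfa1, hfav⟩ :=
        qc_chain Xt x av (fun k => Γ (av (k + 1)) (av k)) L
          (fun k => hΓc _ _) (fun k => hconn _ (havD _) _ (havD _))
          (fun k => hΓ0 _ _) (fun k => hΓ1 _ _)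
          (hγv' av x havD havd) hsumL_ne hav_t
      obtain ⟨fb, hfbc, hfbm, hfb0, hfb1, hfbv⟩ :=
        qc_chain Xt y bv (fun k => Γ (bv (k + 1)) (bv k)) L
          (fun k => hΓc _ _) (fun k => hconn _ (hbvD _) _ (hbvD _))
          (fun k => hΓ0 _ _) (fun k => hΓ1 _ _)
          (hγv' bv y hbvD hbvd) hsumL_ne hbv_t
      rw [insert_eq_self.2 hx] at hfam
      rw [insert_eq_self.2 hy] at hfbm
      set gm : ℝ → X := Γ (av 0) (bv 0) with hgm
      have hgmc : ContinuousOn gm (Icc 0 1) := hΓc _ _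
      have hgmm : MapsTo gm (Icc 0 1) Xt := hconn _ (havD 0) _ (hbvD 0)
      have hgm0 : gm 0 = av 0 := hΓ0 _ _
      have hgm1 : gm 1 = bv 0 := hΓ1 _ _
      have hgmv : eVariationOn gm (Icc 0 1) ≤ Cq * edist x y + 2 * Cq * δ := by
        refine (hΓv _ _).trans ?_
        have hbnd : edist (av 0) (bv 0) ≤ edist x y + 2 * δ := by
          have h1 : edist (av 0) x ≤ δ := by
            rw [edist_comm]; simpa using (havd 0).le
          have h2 : edist y (bv 0) ≤ δ := by simpa using (hbvd 0).le
          calc edist (av 0) (bv 0) ≤ edist (av 0) x + edist x (bv 0) := edist_triangle _ _ _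
            _ ≤ edist (av 0) x + (edist x y + edist y (bv 0)) :=
                add_le_add le_rfl (edist_triangle _ _ _)
            _ ≤ δ + (edist x y + δ) := add_le_add h1 (add_le_add le_rfl h2)
            _ = edist x y + 2 * δ := by ring
        calc (Cq : ℝ≥0∞) * edist (av 0) (bv 0) ≤ Cq * (edist x y + 2 * δ) :=
              mul_le_mul_right hbnd _
          _ = Cq * edist x y + 2 * Cq * δ := by ring
      -- assemble the three pieces
      have h3 : (0 : ℝ) < 1/3 := by norm_num
      obtain ⟨hP1c, hP1m, hP1v⟩ := qc_reparam hfac (p := 0) h3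
      obtain ⟨hP2c, hP2m, hP2v⟩ := qc_reparam hgmc (p := 1/3) h3
      obtain ⟨hP3c, hP3m, hP3v⟩ := qc_reparam' hfbc (q := 1) h3
      rw [show (0 : ℝ) + 1/3 = 1/3 by norm_num] at hP1c hP1m hP1v
      rw [show (1/3 : ℝ) + 1/3 = 2/3 by norm_num] at hP2c hP2m hP2v
      rw [show (1 : ℝ) - 1/3 = 2/3 by norm_num] at hP3c hP3m hP3v
      set F : ℝ → X := fun t =>
        if t ≤ 1/3 then fa ((t - 0) / (1/3))
        else if t ≤ 2/3 then gm ((t - 1/3) / (1/3))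
        else fb ((1 - t) / (1/3)) with hF
      have hE1 : EqOn F (fun t => fa ((t - 0) / (1/3))) (Icc 0 (1/3)) := by
        intro t ht
        exact if_pos ht.2
      have hE2 : EqOn F (fun t => gm ((t - 1/3) / (1/3))) (Icc (1/3) (2/3)) := by
        intro t ht
        obtain ⟨h1, h2⟩ := ht
        show (if t ≤ 1/3 then fa ((t - 0) / (1/3))
          else if t ≤ 2/3 then gm ((t - 1/3) / (1/3)) else fb ((1 - t) / (1/3)))
          = gm ((t - 1/3) / (1/3))
        by_cases h : t ≤ 1/3
        · have ht13 : t = 1/3 := le_antisymm h h1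
          rw [if_pos h, ht13]
          norm_num
          rw [hfa1, hgm0]
        · rw [if_neg h, if_pos h2]
      have hE3 : EqOn F (fun t => fb ((1 - t) / (1/3))) (Icc (2/3) 1) := by
        intro t ht
        obtain ⟨h1, h2⟩ := ht
        show (if t ≤ 1/3 then fa ((t - 0) / (1/3))
          else if t ≤ 2/3 then gm ((t - 1/3) / (1/3)) else fb ((1 - t) / (1/3)))
          = fb ((1 - t) / (1/3))
        by_cases h : t ≤ 2/3
        · have ht23 : t = 2/3 := le_antisymm h h1
          rw [if_neg (by linarith : ¬ t ≤ 1/3), if_pos h, ht23]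
          norm_num
          rw [hgm1, hfb1]
        · rw [if_neg (by linarith : ¬ t ≤ 1/3), if_neg h]
      have hFc : ContinuousOn F (Icc 0 1) := by
        refine qc_contOn_union_Icc (by norm_num) (by norm_num)
          (ContinuousOn.congr hP1c hE1) ?_
        exact qc_contOn_union_Icc (by norm_num) (by norm_num)
          (ContinuousOn.congr hP2c hE2) (ContinuousOn.congr hP3c hE3)
      have hFm : MapsTo F (Icc 0 1) Xt := by
        intro t ht
        obtain ⟨h0, h1⟩ := ht
        by_cases hu : t ≤ 1/3
        · rw [hE1 ⟨h0, hu⟩]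
          exact hfam (hP1m ⟨h0, hu⟩)
        · by_cases hv : t ≤ 2/3
          · rw [hE2 ⟨le_of_not_ge hu, hv⟩]
            exact hgmm (hP2m ⟨le_of_not_ge hu, hv⟩)
          · rw [hE3 ⟨le_of_not_ge hv, h1⟩]
            exact hfbm (hP3m ⟨le_of_not_ge hv, h1⟩)
      have hF0 : F 0 = x := by
        have := hE1 (⟨le_rfl, by norm_num⟩ : (0:ℝ) ∈ Icc 0 (1/3))
        rw [this]
        norm_num [hfa0]
      have hF1 : F 1 = y := by
        have := hE3 (⟨by norm_num, le_rfl⟩ : (1:ℝ) ∈ Icc (2/3) 1)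
        rw [this]
        norm_num [hfb0]
      have hFv : eVariationOn F (Icc 0 1) ≤ (C : ℝ≥0∞) * edist x y := by
        have e1 : eVariationOn F (Icc 0 (1/3)) ≤ 12 * Cq * δ := by
          rw [eVariationOn.eq_of_eqOn hE1, hP1v]
          refine hfav.trans ?_
          rw [hsumL]
          exact le_of_eq (by ring)
        have e2 : eVariationOn F (Icc (1/3) (2/3)) ≤ Cq * edist x y + 2 * Cq * δ := by
          rw [eVariationOn.eq_of_eqOn hE2, hP2v]
          exact hgmv
        have e3 : eVariationOn F (Icc (2/3) 1) ≤ 12 * Cq * δ := by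
          rw [eVariationOn.eq_of_eqOn hE3, hP3v]
          refine hfbv.trans ?_
          rw [hsumL]
          exact le_of_eq (by ring)
        have h30 : 30 * (Cq : ℝ≥0∞) * δ = ((C : ℝ≥0∞) - Cq) * edist x y := by
          rw [hδ, mul_assoc]
          rw [show (30 : ℝ≥0∞) * ((Cq : ℝ≥0∞) * (((C : ℝ≥0∞) - Cq) * edist x y / (30 * Cq)))
            = (30 * Cq) * ((((C : ℝ≥0∞) - Cq) * edist x y) / (30 * Cq)) by ring]
          exact ENNReal.mul_div_cancel h30ne h30top
        calc eVariationOn F (Icc 0 1)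
            = eVariationOn F (Icc 0 (1/3)) + (eVariationOn F (Icc (1/3) (2/3))
              + eVariationOn F (Icc (2/3) 1)) := by
              rw [qc_Icc_add_Icc F (by norm_num : (0:ℝ) ≤ 1/3) (by norm_num : (1/3:ℝ) ≤ 1),
                qc_Icc_add_Icc F (by norm_num : (1/3:ℝ) ≤ 2/3) (by norm_num : (2/3:ℝ) ≤ 1)]
          _ ≤ 12 * Cq * δ + ((Cq * edist x y + 2 * Cq * δ) + 12 * Cq * δ) :=
              add_le_add e1 (add_le_add e2 e3)
          _ = Cq * edist x y + 26 * (Cq : ℝ≥0∞) * δ := by ring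
          _ ≤ Cq * edist x y + 30 * (Cq : ℝ≥0∞) * δ := by
              refine add_le_add le_rfl ?_
              exact mul_le_mul_left (mul_le_mul_left (by norm_num) _) _
          _ = Cq * edist x y + ((C : ℝ≥0∞) - Cq) * edist x y := by rw [h30]
          _ = ((Cq : ℝ≥0∞) + ((C : ℝ≥0∞) - Cq)) * edist x y := by rw [add_mul]
          _ = (C : ℝ≥0∞) * edist x y := by
              rw [add_tsub_cancel_of_le hCC.le]
      exact ⟨F, hFc, hFm, hF0, hF1, hFv⟩
  refine ⟨Xt, ?_, ?_, ?_, ⟨Cq + 1, ?_, main (Cq + 1) (lt_add_one Cq)⟩, main⟩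
  · exact hAc0.trans (closure_mono (subset_iUnion D 0))
  · exact hDUc.isSeparable.closure
  · exact isClosed_closure.isComplete
  · exact le_add_self
end
end

section
/- Let E ⊂ Q be a measurable subset of a cube Q ⊂ ℝ^n. Then there is a constant C = C(n) > 0, depending only on n, such that for any x ∈ Q, ℋ^n({y ∈ Q : ℋ^1(\overline{xy} ∩ E) ≤ C ℋ^n(E)^{1/n}}) > ℋ^n(Q)/2, where \overline{xy} denotes the straight line segment from x to y. -/
open MeasureTheory Set ENNReal NNReal

noncomputable section

lemma vol_preimage_affine {n : ℕ} (x : Fin n → ℝ) {t : ℝ} (ht : t ≠ 0) (E : Set (Fin n → ℝ)) :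
    volume ((fun y => x + t • (y - x)) ⁻¹' E)
      = ENNReal.ofReal |(t ^ n)⁻¹| * volume E := by
  have hc : (fun y : Fin n → ℝ => x + t • (y - x)) = (fun z => (x - t • x) + z) ∘ (t • ·) := by
    funext y
    show x + t • (y - x) = (x - t • x) + t • y
    module
  rw [hc, Set.preimage_comp, MeasureTheory.Measure.addHaar_preimage_smul volume ht,
    measure_preimage_add, Module.finrank_fin_fun]

lemma lint_rpow_bound {r t0 : ℝ} (hr : 1 < r) (h0 : 0 < t0) (h1 : t0 ≤ 1) :
    ∫⁻ t in Set.Ioc t0 1, ENNReal.ofReal (t ^ (-r)) ≤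
      ENNReal.ofReal (t0 ^ (1 - r) / (r - 1)) := by
  have hI : MeasureTheory.IntegrableOn (fun t : ℝ => t ^ (-r)) (Set.Ioc t0 1) := by
    refine (ContinuousOn.integrableOn_Icc ?_).mono_set Set.Ioc_subset_Icc_self
    intro s hs
    exact (Real.continuousAt_rpow_const s (-r)
      (Or.inl (ne_of_gt (lt_of_lt_of_le h0 hs.1)))).continuousWithinAt
  rw [← MeasureTheory.ofReal_integral_eq_lintegral_ofReal hI ?nn]
  case nn =>
    filter_upwards [MeasureTheory.ae_restrict_mem measurableSet_Ioc] with s hs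
    exact Real.rpow_nonneg (le_of_lt (lt_of_lt_of_le h0 hs.1.le)) _
  apply ENNReal.ofReal_le_ofReal
  rw [← intervalIntegral.integral_of_le h1]
  rw [integral_rpow (Or.inr ⟨by intro h; rw [neg_eq_iff_eq_neg] at h; linarith,
    by rw [Set.uIcc_of_le h1]; intro h; exact absurd h.1 (by linarith)⟩)]
  have hne : -r + 1 = 1 - r := by ring
  rw [hne, Real.one_rpow]
  have hA : 0 ≤ t0 ^ (1 - r) := Real.rpow_nonneg h0.le _
  have hr1 : (0:ℝ) < r - 1 := by linarith
  have heq : (1 - t0 ^ (1 - r)) / (1 - r) = (t0 ^ (1 - r) - 1) / (r - 1) := by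
    rw [div_eq_div_iff (by linarith) hr1.ne']
    ring
  rw [heq]
  gcongr
  linarith

lemma half_lt_sub_quarter {V : ℝ≥0∞} (h0 : V ≠ 0) (ht : V ≠ ∞) : V / 2 < V - V / 4 := by
  have hv : 0 < V.toReal := ENNReal.toReal_pos h0 ht
  have hV : V = ENNReal.ofReal V.toReal := (ENNReal.ofReal_toReal ht).symm
  rw [hV]
  rw [← ENNReal.ofReal_ofNat 2, ← ENNReal.ofReal_ofNat 4,
    ← ENNReal.ofReal_div_of_pos (by norm_num), ← ENNReal.ofReal_div_of_pos (by norm_num),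
    ← ENNReal.ofReal_sub _ (by positivity)]
  exact ENNReal.ofReal_lt_ofReal_iff_of_nonneg (by positivity) |>.2 (by linarith)

lemma hausdorff_seg_le {n : ℕ} (x y : Fin n → ℝ) (E : Set (Fin n → ℝ)) :
    μH[(1:ℝ)] (segment ℝ x y ∩ E) ≤
      (‖y - x‖₊ : ℝ≥0∞) * volume ((fun t : ℝ => x + t • (y - x)) ⁻¹' E ∩ Set.Icc 0 1) := by
  set f : ℝ → (Fin n → ℝ) := fun t => x + t • (y - x) with hf
  have hlip : LipschitzWith ‖y - x‖₊ f := by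
    apply LipschitzWith.of_dist_le_mul
    intro a b
    have hab : f a - f b = (a - b) • (y - x) := by
      show x + a • (y - x) - (x + b • (y - x)) = (a - b) • (y - x); module
    rw [dist_eq_norm, hab, norm_smul, Real.dist_eq, coe_nnnorm, Real.norm_eq_abs, mul_comm]
  have himg : segment ℝ x y ∩ E = f '' (f ⁻¹' E ∩ Set.Icc 0 1) := by
    rw [segment_eq_image' (𝕜 := ℝ) x y, Set.inter_comm (f ⁻¹' E), Set.image_inter_preimage]
  rw [himg]
  calc μH[(1:ℝ)] (f '' (f ⁻¹' E ∩ Set.Icc 0 1))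
      ≤ (‖y - x‖₊ : ℝ≥0∞) ^ (1:ℝ) * μH[(1:ℝ)] (f ⁻¹' E ∩ Set.Icc 0 1) :=
        hlip.hausdorffMeasure_image_le (by norm_num) _
    _ = (‖y - x‖₊ : ℝ≥0∞) * volume (f ⁻¹' E ∩ Set.Icc 0 1) := by
        rw [ENNReal.rpow_one, MeasureTheory.hausdorffMeasure_real]

lemma lint_indicator_preimage {α β : Type*} [MeasurableSpace α] [MeasurableSpace β]
    (μ : Measure α) {g : α → β} (hg : Measurable g) {E : Set β} (hE : MeasurableSet E)
    {S : Set α} :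
    ∫⁻ z in S, E.indicator (fun _ => (1:ℝ≥0∞)) (g z) ∂μ = μ (g ⁻¹' E ∩ S) := by
  have h1 : ∀ z, E.indicator (fun _ => (1:ℝ≥0∞)) (g z)
      = (g ⁻¹' E).indicator (fun _ => (1:ℝ≥0∞)) z := by
    intro z; by_cases h : g z ∈ E <;> simp [h]
  simp only [h1]
  rw [MeasureTheory.lintegral_indicator (hg hE), MeasureTheory.Measure.restrict_restrict (hg hE),
    MeasureTheory.setLIntegral_one]

/-- A (nondegenerate) cube in `ℝⁿ` with edges parallel to the coordinate axes. -/
def IsCube {n : ℕ} (Q : Set (Fin n → ℝ)) : Prop :=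
  ∃ (a : Fin n → ℝ) (d : ℝ), 0 < d ∧ Q = Set.Icc a (fun i => a i + d)

/-- **Lemma 3.2 (Lemma 4.4 of [HM1]).** There is a constant `C = C(n) > 0` such that for any
cube `Q ⊆ ℝⁿ`, any measurable `E ⊆ Q` and any `x ∈ Q`, the set of `y ∈ Q` for which the segment
`\overline{xy}` meets `E` in a set of `ℋ¹`-measure at most `C ℋⁿ(E)^{1/n}` has `ℋⁿ`-measure
greater than `ℋⁿ(Q)/2`. -/
theorem segment_intersection_lemma (n : ℕ) (hn : 0 < n) :
    ∃ C : ℝ, 0 < C ∧ ∀ Q E : Set (Fin n → ℝ), IsCube Q → E ⊆ Q → MeasurableSet E →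
      ∀ x ∈ Q,
        μH[(n : ℝ)] Q / 2 <
          μH[(n : ℝ)] {y | y ∈ Q ∧
            μH[(1 : ℝ)] (segment ℝ x y ∩ E) ≤
              ENNReal.ofReal C * (μH[(n : ℝ)] E) ^ ((1 : ℝ) / n)} := by
  refine ⟨8, by norm_num, ?_⟩
  rintro Q E hQ hEQ hE x hx
  obtain ⟨a, d, hd, rfl⟩ := hQ
  have hHn : (μH[(n : ℝ)] : Measure (Fin n → ℝ)) = volume := by
    simpa using MeasureTheory.hausdorffMeasure_pi_real (ι := Fin n)
  rw [hHn]
  set b : Fin n → ℝ := fun i => a i + d with hb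
  set T : ℝ≥0∞ := ENNReal.ofReal 8 * (volume E) ^ ((1 : ℝ) / n) with hT
  set G : Set (Fin n → ℝ) :=
    {y | y ∈ Set.Icc a b ∧ μH[(1 : ℝ)] (segment ℝ x y ∩ E) ≤ T} with hG
  have hVq : volume (Set.Icc a b) = ENNReal.ofReal (d ^ n) := by
    rw [Real.volume_Icc_pi]
    simp only [hb, add_sub_cancel_left]
    rw [Finset.prod_const, Finset.card_univ, Fintype.card_fin, ← ENNReal.ofReal_pow hd.le]
  have hdn : (0:ℝ) < d ^ n := by positivity
  have hVq0 : volume (Set.Icc a b) ≠ 0 := by rw [hVq]; exact (ENNReal.ofReal_pos.2 hdn).ne'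
  have hVqt : volume (Set.Icc a b) ≠ ∞ := by rw [hVq]; exact ENNReal.ofReal_ne_top
  -- the case n = 1
  rcases eq_or_lt_of_le (Nat.one_le_iff_ne_zero.mpr hn.ne') with h1 | hn2
  · subst h1
    have hQG : Set.Icc a b ⊆ G := by
      intro y hy
      refine ⟨hy, ?_⟩
      have h1' : μH[(1 : ℝ)] (segment ℝ x y ∩ E) ≤ μH[(1 : ℝ)] E :=
        measure_mono Set.inter_subset_right
      have hE1 : (μH[(1 : ℝ)] : Measure (Fin 1 → ℝ)) = volume := by
        simpa using hHn
      have hpow : (volume E) ^ ((1 : ℝ) / (1:ℕ)) = volume E := by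
        rw [Nat.cast_one, div_one, ENNReal.rpow_one]
      refine h1'.trans ?_
      rw [hE1, hT, hpow]
      calc volume E = 1 * volume E := (one_mul _).symm
        _ ≤ ENNReal.ofReal 8 * volume E := by
            gcongr
            exact ENNReal.one_le_ofReal.2 (by norm_num)
    calc volume (Set.Icc a b) / 2 < volume (Set.Icc a b) :=
          ENNReal.half_lt_self hVq0 hVqt
      _ ≤ volume G := measure_mono hQG
  -- now 2 ≤ n
  have hφcont : ∀ y : Fin n → ℝ, Measurable fun t : ℝ => x + t • (y - x) := fun y =>
    (continuous_const.add (continuous_id.smul continuous_const)).measurable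
  have hψcont : ∀ t : ℝ, Measurable fun y : Fin n → ℝ => x + t • (y - x) := fun t =>
    (show Continuous fun y : Fin n → ℝ => x + t • (y - x) from
      by fun_prop).measurable
  set m : (Fin n → ℝ) → ℝ≥0∞ :=
    fun y => volume ((fun t : ℝ => x + t • (y - x)) ⁻¹' E ∩ Set.Icc 0 1) with hm
  have hmeq : ∀ y, m y = ∫⁻ t in Set.Icc (0:ℝ) 1,
      E.indicator (fun _ => (1:ℝ≥0∞)) (x + t • (y - x)) := fun y =>
    (lint_indicator_preimage volume (hφcont y) hE).symm
  have hkM : Measurable (Function.uncurry fun (y : Fin n → ℝ) (t : ℝ) =>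
      E.indicator (fun _ => (1:ℝ≥0∞)) (x + t • (y - x))) := by
    have hmap : Measurable fun p : (Fin n → ℝ) × ℝ => x + p.2 • (p.1 - x) :=
      (continuous_const.add (continuous_snd.smul (continuous_fst.sub continuous_const))).measurable
    exact (measurable_const.indicator hE).comp hmap
  have hmM : Measurable m := by
    rw [show m = fun y => ∫⁻ t in Set.Icc (0:ℝ) 1,
        E.indicator (fun _ => (1:ℝ≥0∞)) (x + t • (y - x)) from funext hmeq]
    exact Measurable.lintegral_prod_right hkM
  have hswap : ∫⁻ y in Set.Icc a b, m y =
      ∫⁻ t in Set.Icc (0:ℝ) 1, volume ((fun y => x + t • (y - x)) ⁻¹' E ∩ Set.Icc a b) := by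
    calc ∫⁻ y in Set.Icc a b, m y
        = ∫⁻ y in Set.Icc a b, ∫⁻ t in Set.Icc (0:ℝ) 1,
            E.indicator (fun _ => (1:ℝ≥0∞)) (x + t • (y - x)) :=
          lintegral_congr fun y => hmeq y
      _ = ∫⁻ t in Set.Icc (0:ℝ) 1, ∫⁻ y in Set.Icc a b,
            E.indicator (fun _ => (1:ℝ≥0∞)) (x + t • (y - x)) :=
          MeasureTheory.lintegral_lintegral_swap hkM.aemeasurable
      _ = _ := lintegral_congr fun t => lint_indicator_preimage volume (hψcont t) hE
  have hptw : ∀ y ∈ Set.Icc a b, μH[(1:ℝ)] (segment ℝ x y ∩ E) ≤ ENNReal.ofReal d * m y := by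
    intro y hy
    refine (hausdorff_seg_le x y E).trans ?_
    have hnorm : (‖y - x‖₊ : ℝ≥0∞) ≤ ENNReal.ofReal d := by
      rw [← ENNReal.ofReal_coe_nnreal, coe_nnnorm]
      apply ENNReal.ofReal_le_ofReal
      rw [pi_norm_le_iff_of_nonneg hd.le]
      intro i
      have h1 := hy.1 i; have h2 := hy.2 i; have h3 := hx.1 i; have h4 := hx.2 i
      simp only [hb] at h2 h4
      rw [Pi.sub_apply, Real.norm_eq_abs, abs_le]
      constructor <;> linarith
    exact mul_le_mul_left hnorm _
  rcases eq_or_ne (volume E) 0 with hVe | hVe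
  · -- E is null
    have hg0 : ∀ t : ℝ, t ≠ 0 →
        volume ((fun y => x + t • (y - x)) ⁻¹' E ∩ Set.Icc a b) = 0 := by
      intro t ht
      refine le_antisymm ?_ zero_le
      calc volume ((fun y => x + t • (y - x)) ⁻¹' E ∩ Set.Icc a b)
          ≤ volume ((fun y => x + t • (y - x)) ⁻¹' E) := measure_mono Set.inter_subset_left
        _ = ENNReal.ofReal |(t ^ n)⁻¹| * volume E := vol_preimage_affine x ht E
        _ = 0 := by rw [hVe, mul_zero]
    have hnull : volume.restrict (Set.Icc (0:ℝ) 1) {(0:ℝ)} = 0 := by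
      rw [Measure.restrict_apply (measurableSet_singleton 0)]
      exact measure_mono_null Set.inter_subset_left Real.volume_singleton
    have hae : (fun t : ℝ => volume ((fun y => x + t • (y - x)) ⁻¹' E ∩ Set.Icc a b))
        =ᵐ[volume.restrict (Set.Icc (0:ℝ) 1)] (fun _ => 0) := by
      rw [Filter.EventuallyEq, ae_iff]
      refine measure_mono_null (fun t htm => ?_) hnull
      simp only [Set.mem_setOf_eq] at htm
      simp only [Set.mem_singleton_iff]
      by_contra h0
      exact htm (hg0 t h0)
    have hint0 : ∫⁻ y in Set.Icc a b, m y = 0 := by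
      rw [hswap, lintegral_congr_ae hae, lintegral_zero]
    have hmz := (lintegral_eq_zero_iff hmM).1 hint0
    have hN : volume ({y | m y ≠ 0} ∩ Set.Icc a b) = 0 := by
      rw [← Measure.restrict_apply' measurableSet_Icc]
      rw [Filter.EventuallyEq, ae_iff] at hmz
      simpa using hmz
    have hsub : Set.Icc a b \ ({y | m y ≠ 0} ∩ Set.Icc a b) ⊆ G := by
      intro y hy
      refine ⟨hy.1, ?_⟩
      have hmy : m y = 0 := by
        by_contra h0
        exact hy.2 ⟨h0, hy.1⟩
      calc μH[(1:ℝ)] (segment ℝ x y ∩ E) ≤ ENNReal.ofReal d * m y := hptw y hy.1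
        _ = 0 := by rw [hmy, mul_zero]
        _ ≤ T := zero_le
    calc volume (Set.Icc a b) / 2 < volume (Set.Icc a b) := ENNReal.half_lt_self hVq0 hVqt
      _ = volume (Set.Icc a b \ ({y | m y ≠ 0} ∩ Set.Icc a b)) := (measure_diff_null hN).symm
      _ ≤ volume G := measure_mono hsub
  · -- E has positive measure
    set e := (volume E).toReal with he'
    have hVeQ : volume E ≤ volume (Set.Icc a b) := measure_mono hEQ
    have hVet : volume E ≠ ∞ := (lt_of_le_of_lt hVeQ (lt_top_iff_ne_top.2 hVqt)).ne
    have he : 0 < e := ENNReal.toReal_pos hVe hVet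
    have heE : volume E = ENNReal.ofReal e := (ENNReal.ofReal_toReal hVet).symm
    have hedn : e ≤ d ^ n := by
      have h := ENNReal.toReal_mono hVqt hVeQ
      rwa [hVq, ENNReal.toReal_ofReal hdn.le] at h
    have hncast : (n:ℝ) ≠ 0 := Nat.cast_ne_zero.2 hn.ne'
    set s := e ^ ((1:ℝ)/n) with hs'
    have hs : 0 < s := Real.rpow_pos_of_pos he _
    have hsn : s ^ (n:ℝ) = e := by
      rw [hs', ← Real.rpow_mul he.le]
      have hne : (1:ℝ)/n * n = 1 := by field_simp
      rw [hne, Real.rpow_one]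
    have hsd : s ≤ d := by
      have hnn : (n:ℝ) * ((1:ℝ)/n) = 1 := by field_simp
      calc s ≤ (d ^ n) ^ ((1:ℝ)/n) := Real.rpow_le_rpow he.le hedn (by positivity)
        _ = d := by rw [← Real.rpow_natCast d n, ← Real.rpow_mul hd.le, hnn, Real.rpow_one]
    set t0 := s / d with ht0'
    have ht0 : 0 < t0 := div_pos hs hd
    have ht01 : t0 ≤ 1 := (div_le_one hd).2 hsd
    have hnR : (1:ℝ) < (n:ℝ) := by exact_mod_cast hn2
    have hn2R : (2:ℝ) ≤ (n:ℝ) := by exact_mod_cast hn2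
    have hbound : ∫⁻ y in Set.Icc a b, m y ≤ ENNReal.ofReal (2 * s * d ^ n / d) := by
      rw [hswap]
      rw [show Set.Icc (0:ℝ) 1 = Set.Icc 0 t0 ∪ Set.Ioc t0 1 from
        (Set.Icc_union_Ioc_eq_Icc ht0.le ht01).symm]
      refine le_trans (MeasureTheory.lintegral_union_le _ _ _) ?_
      have hp1 : ∫⁻ t in Set.Icc (0:ℝ) t0,
          volume ((fun y => x + t • (y - x)) ⁻¹' E ∩ Set.Icc a b)
          ≤ ENNReal.ofReal (d ^ n * t0) := by
        calc ∫⁻ t in Set.Icc (0:ℝ) t0,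
              volume ((fun y => x + t • (y - x)) ⁻¹' E ∩ Set.Icc a b)
            ≤ ∫⁻ _ in Set.Icc (0:ℝ) t0, ENNReal.ofReal (d ^ n) := by
              refine setLIntegral_mono measurable_const fun t _ => ?_
              rw [← hVq]; exact measure_mono Set.inter_subset_right
          _ = ENNReal.ofReal (d ^ n) * volume (Set.Icc (0:ℝ) t0) := setLIntegral_const _ _
          _ = ENNReal.ofReal (d ^ n * t0) := by
              rw [Real.volume_Icc, sub_zero, ← ENNReal.ofReal_mul hdn.le]
      have hmeasf : Measurable fun t : ℝ => ENNReal.ofReal (t ^ (-(n:ℝ))) := by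
        fun_prop
      have hp2 : ∫⁻ t in Set.Ioc t0 1,
          volume ((fun y => x + t • (y - x)) ⁻¹' E ∩ Set.Icc a b)
          ≤ ENNReal.ofReal (t0 ^ (1 - (n:ℝ)) / ((n:ℝ) - 1)) * ENNReal.ofReal e := by
        calc ∫⁻ t in Set.Ioc t0 1,
              volume ((fun y => x + t • (y - x)) ⁻¹' E ∩ Set.Icc a b)
            ≤ ∫⁻ t in Set.Ioc t0 1, ENNReal.ofReal (t ^ (-(n:ℝ))) * ENNReal.ofReal e := by
              refine setLIntegral_mono (hmeasf.mul_const _) fun t htm => ?_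
              have htpos : 0 < t := ht0.trans htm.1
              calc volume ((fun y => x + t • (y - x)) ⁻¹' E ∩ Set.Icc a b)
                  ≤ volume ((fun y => x + t • (y - x)) ⁻¹' E) :=
                    measure_mono Set.inter_subset_left
                _ = ENNReal.ofReal |(t ^ n)⁻¹| * volume E := vol_preimage_affine x htpos.ne' E
                _ = ENNReal.ofReal (t ^ (-(n:ℝ))) * ENNReal.ofReal e := by
                    rw [heE]; congr 2
                    rw [abs_of_nonneg (by positivity), ← Real.rpow_natCast t n,
                      ← Real.rpow_neg htpos.le]
          _ = (∫⁻ t in Set.Ioc t0 1, ENNReal.ofReal (t ^ (-(n:ℝ)))) * ENNReal.ofReal e :=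
              lintegral_mul_const _ hmeasf
          _ ≤ ENNReal.ofReal (t0 ^ (1 - (n:ℝ)) / ((n:ℝ) - 1)) * ENNReal.ofReal e := by
              gcongr
              exact lint_rpow_bound hnR ht0 ht01
      refine le_trans (add_le_add hp1 hp2) ?_
      have habc : t0 ^ (1 - (n:ℝ)) * e = s * d ^ n / d := by
        have h1 : s ^ (1 - (n:ℝ)) * e = s := by
          rw [← hsn, ← Real.rpow_add hs]
          have : 1 - (n:ℝ) + n = 1 := by ring
          rw [this, Real.rpow_one]
        rw [ht0', Real.div_rpow hs.le hd.le, Real.rpow_sub hd, Real.rpow_one,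
          Real.rpow_natCast]
        have h2 : s ^ (1-(n:ℝ)) / (d / d^n) * e = (s ^ (1-(n:ℝ)) * e) * d ^ n / d := by
          field_simp
        rw [h2, h1]
      have hq1 : 0 ≤ t0 ^ (1 - (n:ℝ)) / ((n:ℝ) - 1) :=
        div_nonneg (Real.rpow_nonneg ht0.le _) (by linarith)
      rw [← ENNReal.ofReal_mul hq1, ← ENNReal.ofReal_add (mul_nonneg hdn.le ht0.le)
        (mul_nonneg hq1 he.le)]
      apply ENNReal.ofReal_le_ofReal
      have hterm2 : t0 ^ (1 - (n:ℝ)) / ((n:ℝ) - 1) * e ≤ s * d ^ n / d := by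
        rw [div_mul_eq_mul_div, habc]
        rw [div_le_iff₀ (by linarith)]
        nlinarith [mul_pos (mul_pos hs hdn) (inv_pos.2 hd), div_nonneg (mul_nonneg hs.le hdn.le) hd.le]
      have hterm1 : d ^ n * t0 = s * d ^ n / d := by rw [ht0']; ring
      rw [hterm1]
      have : 2 * s * d ^ n / d = s * d ^ n / d + s * d ^ n / d := by ring
      rw [this]
      gcongr
    have hFb : ∫⁻ y in Set.Icc a b, ENNReal.ofReal d * m y ≤ ENNReal.ofReal (2 * s * d ^ n) := by
      rw [lintegral_const_mul _ hmM]
      calc ENNReal.ofReal d * ∫⁻ y in Set.Icc a b, m y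
          ≤ ENNReal.ofReal d * ENNReal.ofReal (2 * s * d ^ n / d) := by gcongr
        _ = ENNReal.ofReal (d * (2 * s * d ^ n / d)) := (ENNReal.ofReal_mul hd.le).symm
        _ = ENNReal.ofReal (2 * s * d ^ n) := by
            congr 1; field_simp
    have hTs : T = ENNReal.ofReal (8 * s) := by
      rw [hT, heE, ENNReal.ofReal_rpow_of_pos he, ← ENNReal.ofReal_mul (by norm_num)]
    have hT0 : T ≠ 0 := by
      rw [hTs]; exact (ENNReal.ofReal_pos.2 (by positivity)).ne'
    have hTt : T ≠ ∞ := by rw [hTs]; exact ENNReal.ofReal_ne_top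
    have hBmeas : volume ({y | T ≤ ENNReal.ofReal d * m y} ∩ Set.Icc a b)
        ≤ volume (Set.Icc a b) / 4 := by
      rw [← Measure.restrict_apply' measurableSet_Icc]
      have hmark := mul_meas_ge_le_lintegral₀
        (((hmM.const_mul (ENNReal.ofReal d)).aemeasurable) :
          AEMeasurable (fun y => ENNReal.ofReal d * m y) (volume.restrict (Set.Icc a b))) T
      have h2 : (volume.restrict (Set.Icc a b)) {y | T ≤ ENNReal.ofReal d * m y} * T
          ≤ ENNReal.ofReal (2 * s * d ^ n) := by
        rw [mul_comm]; exact le_trans hmark hFb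
      have h3 := (ENNReal.le_div_iff_mul_le (Or.inl hT0) (Or.inl hTt)).2 h2
      refine h3.trans ?_
      have h8s : (0:ℝ) < 8 * s := by linarith
      rw [hTs, ← ENNReal.ofReal_div_of_pos h8s, hVq]
      rw [show (4:ℝ≥0∞) = ENNReal.ofReal 4 from (ENNReal.ofReal_ofNat 4).symm,
        ← ENNReal.ofReal_div_of_pos (by norm_num)]
      apply ENNReal.ofReal_le_ofReal
      have heq48 : 2 * s * d ^ n / (8 * s) = d ^ n / 4 := by
        field_simp
        ring
      rw [heq48]
    have hsub : Set.Icc a b \ ({y | T ≤ ENNReal.ofReal d * m y} ∩ Set.Icc a b) ⊆ G := by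
      intro y hy
      refine ⟨hy.1, ?_⟩
      have hlt : ¬ T ≤ ENNReal.ofReal d * m y := fun h => hy.2 ⟨h, hy.1⟩
      exact le_trans (hptw y hy.1) (not_le.1 hlt).le
    calc volume (Set.Icc a b) / 2
        < volume (Set.Icc a b) - volume (Set.Icc a b) / 4 :=
          half_lt_sub_quarter hVq0 hVqt
      _ ≤ volume (Set.Icc a b) -
            volume ({y | T ≤ ENNReal.ofReal d * m y} ∩ Set.Icc a b) :=
          tsub_le_tsub_left hBmeas _
      _ ≤ volume (Set.Icc a b \ ({y | T ≤ ENNReal.ofReal d * m y} ∩ Set.Icc a b)) :=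
          le_measure_diff
      _ ≤ volume G := measure_mono hsub
end
end

section
/- Let E ⊂ Q be a measurable subset of a cube Q ⊂ ℝ^n. Then there is a constant C = C(n) > 0, depending only on n, such that for any x, y ∈ Q there exists z ∈ Q with ℋ^1(\overline{xz} ∩ E) + ℋ^1(\overline{zy} ∩ E) ≤ C ℋ^n(E)^{1/n}. In particular, x and y can be joined by a curve in Q of length at most 2 diam(Q) whose intersection with E has ℋ^1-measure at most C ℋ^n(E)^{1/n}. -/
open MeasureTheory Set ENNReal NNReal

noncomputable section

namespace TwoSegAux

variable {n : ℕ}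

/-- The parameter set: pairs `(t, z)` with `t ∈ [0,1]` and the point `t•(z-x)+x` in `E`. -/
def W (E : Set (Fin n → ℝ)) (x : Fin n → ℝ) : Set (ℝ × (Fin n → ℝ)) :=
  {p | p.1 ∈ Icc (0:ℝ) 1 ∧ p.1 • (p.2 - x) + x ∈ E}

lemma measurableSet_W {E : Set (Fin n → ℝ)} (hE : MeasurableSet E) (x : Fin n → ℝ) :
    MeasurableSet (W E x) := by
  have h2 : Measurable (fun p : ℝ × (Fin n → ℝ) => p.1 • (p.2 - x) + x) := by fun_prop
  exact (measurable_fst measurableSet_Icc).inter (h2 hE)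

lemma seg_le {E : Set (Fin n → ℝ)} {x z : Fin n → ℝ} {d : ℝ} (hdist : dist x z ≤ d) :
    μH[(1:ℝ)] (segment ℝ x z ∩ E) ≤ ENNReal.ofReal d * volume ((fun t => (t, z)) ⁻¹' W E x) := by
  have himg : segment ℝ x z ∩ E
      = (AffineMap.lineMap x z) '' (Icc (0:ℝ) 1 ∩ (AffineMap.lineMap x z) ⁻¹' E) := by
    rw [segment_eq_image_lineMap, image_inter_preimage]
  have hset : Icc (0:ℝ) 1 ∩ (AffineMap.lineMap x z) ⁻¹' E = (fun t => (t, z)) ⁻¹' W E x := by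
    ext t
    simp [W, AffineMap.lineMap_apply]
  rw [himg, hausdorffMeasure_lineMap_image, hausdorffMeasure_real, hset, ENNReal.smul_def]
  have h1 : ((nndist x z : ℝ≥0∞)) ≤ ENNReal.ofReal d := by
    rw [← edist_nndist, edist_dist]
    exact ENNReal.ofReal_le_ofReal hdist
  exact mul_le_mul_left h1 _

lemma scaling (hn : 0 < n) {t : ℝ} (ht : 0 < t) (E : Set (Fin n → ℝ)) (x : Fin n → ℝ) :
    volume ((fun z : Fin n → ℝ => t • (z - x) + x) ⁻¹' E)
      = ENNReal.ofReal ((t ^ n)⁻¹) * volume E := by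
  have hvol : (volume : Measure (Fin n → ℝ)) = μH[(n:ℝ)] := by
    rw [← hausdorffMeasure_pi_real (ι := Fin n)]; simp
  have hco : (fun z : Fin n → ℝ => t • (z - x) + x) = ⇑(AffineMap.homothety x t) := by
    ext z i
    simp [AffineMap.homothety_apply]
  rw [hco, hvol, hausdorffMeasure_homothety_preimage (Nat.cast_nonneg n) x (ne_of_gt ht) E,
    ENNReal.smul_def]
  congr 1
  have h1 : (‖t‖₊⁻¹ ^ ((n:ℕ):ℝ) : ℝ≥0) = ((t ^ n)⁻¹).toNNReal := by
    apply NNReal.coe_injective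
    rw [NNReal.coe_rpow, NNReal.coe_inv, coe_nnnorm, Real.norm_eq_abs, abs_of_pos ht,
      Real.coe_toNNReal _ (by positivity), Real.rpow_natCast, inv_pow]
  rw [h1, ENNReal.ofReal]

lemma tonelli {E Q : Set (Fin n → ℝ)} (hE : MeasurableSet E) (hQ : MeasurableSet Q)
    (x : Fin n → ℝ) :
    ∫⁻ z in Q, volume ((fun t => (t, z)) ⁻¹' W E x)
      = ∫⁻ t in Icc (0:ℝ) 1, volume (Q ∩ (fun z => t • (z - x) + x) ⁻¹' E) := by
  have hW := measurableSet_W hE x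
  have hmz : ∀ z : Fin n → ℝ, MeasurableSet ((fun t => (t, z)) ⁻¹' W E x) :=
    fun z => hW.preimage measurable_prodMk_right
  have h1 : ∀ z, volume ((fun t => (t, z)) ⁻¹' W E x)
      = (volume.restrict (Icc (0:ℝ) 1)) ((fun t => (t, z)) ⁻¹' W E x) := by
    intro z
    rw [Measure.restrict_apply (hmz z)]
    congr 1
    ext t
    simp only [W, mem_inter_iff, mem_preimage, mem_setOf_eq]
    tauto
  simp_rw [h1]
  rw [← Measure.prod_apply_symm (μ := volume.restrict (Icc (0:ℝ) 1)) (ν := volume.restrict Q) hW,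
    Measure.prod_apply hW]
  refine setLIntegral_congr_fun measurableSet_Icc (fun t ht => ?_)
  rw [Measure.restrict_apply (hW.preimage measurable_prodMk_left)]
  rw [inter_comm]
  congr 1
  ext z
  simp [W, ht]
  exact fun _ _ => ht

lemma integral_pow_inv (hn : 2 ≤ n) {t₀ : ℝ} (h0 : 0 < t₀) (h1 : t₀ ≤ 1) :
    ∫⁻ t in Ioc t₀ 1, ENNReal.ofReal ((t ^ n)⁻¹) ≤ ENNReal.ofReal ((t₀ ^ (n - 1))⁻¹) := by
  have hzero : (0:ℝ) ∉ Set.uIcc t₀ 1 := by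
    rw [Set.uIcc_of_le h1]
    intro h
    exact absurd h.1 (not_le.mpr h0)
  have hfun : ∀ t : ℝ, t ^ (-(n:ℤ)) = (t ^ n)⁻¹ := by
    intro t; rw [zpow_neg, zpow_natCast]
  have hII : IntervalIntegrable (fun t : ℝ => t ^ (-(n:ℤ))) volume t₀ 1 :=
    intervalIntegral.intervalIntegrable_zpow (Or.inr hzero)
  have hInt : IntegrableOn (fun t : ℝ => (t ^ n)⁻¹) (Ioc t₀ 1) := by
    have := (intervalIntegrable_iff_integrableOn_Ioc_of_le h1).mp hII
    simpa only [hfun] using this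
  rw [← MeasureTheory.ofReal_integral_eq_lintegral_ofReal hInt ?_]
  · apply ENNReal.ofReal_le_ofReal
    have heq : ∫ t in Ioc t₀ 1, (t ^ n)⁻¹ = ∫ t in t₀..1, t ^ (-(n:ℤ)) := by
      rw [intervalIntegral.integral_of_le h1]
      exact setIntegral_congr_fun measurableSet_Ioc (fun t _ => (hfun t).symm)
    rw [heq, integral_zpow (Or.inr ⟨by omega, hzero⟩)]
    set B : ℝ := (t₀ ^ (n - 1))⁻¹ with hB
    have hp : (0:ℝ) < t₀ ^ (n - 1) := by positivity
    have hB1 : (1:ℝ) ≤ B := by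
      rw [hB, one_le_inv₀ hp]
      calc t₀ ^ (n-1) ≤ 1 ^ (n-1) := pow_le_pow_left₀ h0.le h1 _
        _ = 1 := one_pow _
    have ht₀B : t₀ ^ (-(n:ℤ) + 1) = B := by
      have hexp : (-(n:ℤ) + 1) = -((n - 1 : ℕ) : ℤ) := by omega
      rw [hexp, zpow_neg, hB, zpow_natCast]
    rw [ht₀B]
    have h1pow : (1:ℝ) ^ (-(n:ℤ) + 1) = 1 := one_zpow _
    rw [h1pow]
    have hnR : (2:ℝ) ≤ (n:ℝ) := by exact_mod_cast hn
    have hneg : ((↑(-(n:ℤ)) : ℝ) + 1) < 0 := by push_cast; linarith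
    rw [div_le_iff_of_neg hneg]
    push_cast
    nlinarith [hB1]
  · filter_upwards [ae_restrict_mem measurableSet_Ioc] with t ht
    have : 0 < t := lt_trans h0 ht.1
    positivity

lemma key (hn : 2 ≤ n) {a : Fin n → ℝ} {d : ℝ} (hd : 0 < d) {E : Set (Fin n → ℝ)}
    (hEQ : E ⊆ Icc a (fun i => a i + d)) (hE : MeasurableSet E) (x : Fin n → ℝ) :
    ∫⁻ z in Icc a (fun i => a i + d), volume ((fun t => (t, z)) ⁻¹' W E x)
      ≤ 2 * ENNReal.ofReal (d ^ (n - 1)) * (volume E) ^ ((1:ℝ)/n) := by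
  have hn0 : 0 < n := by omega
  have hnR : (0:ℝ) < (n:ℝ) := by exact_mod_cast hn0
  have hQvol : volume (Icc a (fun i => a i + d)) = ENNReal.ofReal (d ^ n) := by
    rw [Real.volume_Icc_pi]
    simp only [add_sub_cancel_left]
    rw [Finset.prod_const, Finset.card_univ, Fintype.card_fin, ← ENNReal.ofReal_pow hd.le]
  have hVle : volume E ≤ ENNReal.ofReal (d ^ n) := hQvol ▸ measure_mono hEQ
  have hVne : volume E ≠ ∞ := ne_top_of_le_ne_top ENNReal.ofReal_ne_top hVle
  set m : ℝ := (volume E).toReal with hmdef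
  have hVm : volume E = ENNReal.ofReal m := (ENNReal.ofReal_toReal hVne).symm
  have hm0 : 0 ≤ m := ENNReal.toReal_nonneg
  have hmd : m ≤ d ^ n := ENNReal.toReal_le_of_le_ofReal (by positivity) hVle
  set t₀ : ℝ := m ^ ((1:ℝ)/n) / d with ht₀def
  have ht₀0 : 0 ≤ t₀ := by positivity
  have ht₀1 : t₀ ≤ 1 := by
    rw [ht₀def, div_le_one hd]
    calc m ^ ((1:ℝ)/n) ≤ (d ^ n) ^ ((1:ℝ)/n) :=
          Real.rpow_le_rpow hm0 hmd (by positivity)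
      _ = d := by
          rw [← Real.rpow_natCast d n, ← Real.rpow_mul hd.le]
          rw [mul_one_div, div_self (ne_of_gt hnR), Real.rpow_one]
  rw [tonelli hE measurableSet_Icc x]
  have hsub : Icc (0:ℝ) 1 ⊆ Icc 0 t₀ ∪ Ioc t₀ 1 := by
    intro t ht
    rcases le_or_gt t t₀ with h | h
    · exact Or.inl ⟨ht.1, h⟩
    · exact Or.inr ⟨h, ht.2⟩
  calc ∫⁻ t in Icc (0:ℝ) 1,
          volume (Icc a (fun i => a i + d) ∩ (fun z => t • (z - x) + x) ⁻¹' E)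
      ≤ ∫⁻ t in Icc 0 t₀ ∪ Ioc t₀ 1,
          volume (Icc a (fun i => a i + d) ∩ (fun z => t • (z - x) + x) ⁻¹' E) :=
        lintegral_mono_set hsub
    _ ≤ (∫⁻ t in Icc 0 t₀,
          volume (Icc a (fun i => a i + d) ∩ (fun z => t • (z - x) + x) ⁻¹' E))
        + ∫⁻ t in Ioc t₀ 1,
          volume (Icc a (fun i => a i + d) ∩ (fun z => t • (z - x) + x) ⁻¹' E) :=
        lintegral_union_le _ _ _
    _ ≤ ENNReal.ofReal (d ^ n) * ENNReal.ofReal t₀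
        + ENNReal.ofReal ((t₀ ^ (n-1))⁻¹) * ENNReal.ofReal m := by
        gcongr ?_ + ?_
        · calc ∫⁻ t in Icc 0 t₀,
                volume (Icc a (fun i => a i + d) ∩ (fun z => t • (z - x) + x) ⁻¹' E)
              ≤ ∫⁻ _ in Icc 0 t₀, ENNReal.ofReal (d ^ n) := by
                refine setLIntegral_mono measurable_const fun t _ => ?_
                rw [← hQvol]
                exact measure_mono inter_subset_left
            _ = ENNReal.ofReal (d ^ n) * volume (Icc 0 t₀) := setLIntegral_const _ _
            _ = ENNReal.ofReal (d ^ n) * ENNReal.ofReal t₀ := by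
                rw [Real.volume_Icc, sub_zero]
        · have hmeas : Measurable fun t : ℝ => ENNReal.ofReal ((t ^ n)⁻¹) * ENNReal.ofReal m :=
            (((measurable_id.pow_const n).inv).ennreal_ofReal).mul_const _
          calc ∫⁻ t in Ioc t₀ 1,
                volume (Icc a (fun i => a i + d) ∩ (fun z => t • (z - x) + x) ⁻¹' E)
              ≤ ∫⁻ t in Ioc t₀ 1, ENNReal.ofReal ((t ^ n)⁻¹) * ENNReal.ofReal m := by
                refine setLIntegral_mono hmeas fun t ht => ?_
                have ht0 : 0 < t := lt_of_le_of_lt ht₀0 ht.1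
                calc volume (Icc a (fun i => a i + d) ∩ (fun z => t • (z - x) + x) ⁻¹' E)
                    ≤ volume ((fun z : Fin n → ℝ => t • (z - x) + x) ⁻¹' E) :=
                      measure_mono inter_subset_right
                  _ = ENNReal.ofReal ((t ^ n)⁻¹) * volume E := scaling hn0 ht0 E x
                  _ = ENNReal.ofReal ((t ^ n)⁻¹) * ENNReal.ofReal m := by rw [hVm]
            _ = (∫⁻ t in Ioc t₀ 1, ENNReal.ofReal ((t ^ n)⁻¹)) * ENNReal.ofReal m :=
                lintegral_mul_const _ ((measurable_id.pow_const n).inv).ennreal_ofReal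
            _ ≤ ENNReal.ofReal ((t₀ ^ (n-1))⁻¹) * ENNReal.ofReal m := by
                rcases eq_or_lt_of_le hm0 with hm | hm
                · simp [← hm]
                · have ht₀pos : 0 < t₀ := by
                    rw [ht₀def]
                    exact div_pos (Real.rpow_pos_of_pos hm _) hd
                  exact mul_le_mul_left (integral_pow_inv hn ht₀pos ht₀1) _
    _ ≤ 2 * ENNReal.ofReal (d ^ (n - 1)) * (volume E) ^ ((1:ℝ)/n) := by
        rcases eq_or_lt_of_le hm0 with hm | hm
        · have ht₀z : t₀ = 0 := by
            rw [ht₀def, ← hm, Real.zero_rpow (by positivity), zero_div]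
          simp [ht₀z, ← hm]
        · have hmn : (ENNReal.ofReal m) ^ ((1:ℝ)/n) = ENNReal.ofReal (m ^ ((1:ℝ)/n)) :=
            ENNReal.ofReal_rpow_of_pos hm
          have hkey : d ^ n * t₀ = d ^ (n-1) * m ^ ((1:ℝ)/n) := by
            rw [ht₀def]
            have : d ^ n = d ^ (n-1) * d := by
              rw [← pow_succ]
              congr 1
              omega
            rw [this]
            field_simp
          have hcast : ((n-1:ℕ):ℝ) = (n:ℝ) - 1 := by
            have h1n : (1:ℕ) ≤ n := by omega
            push_cast [h1n]
            ring
          have hpow : (m ^ ((1:ℝ)/n)) ^ (n-1) = m ^ (((n:ℝ)-1)/n) := by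
            rw [← Real.rpow_natCast (m ^ ((1:ℝ)/n)) (n-1), ← Real.rpow_mul hm0]
            congr 1
            rw [hcast]
            ring
          have hprod : m ^ ((1:ℝ)/n) * m ^ (((n:ℝ)-1)/n) = m := by
            rw [← Real.rpow_add hm]
            rw [show (1:ℝ)/n + ((n:ℝ)-1)/n = 1 by field_simp; ring]
            exact Real.rpow_one m
          have hpos : (0:ℝ) < m ^ (((n:ℝ)-1)/n) := Real.rpow_pos_of_pos hm _
          have hkey2 : (t₀ ^ (n-1))⁻¹ * m = d ^ (n-1) * m ^ ((1:ℝ)/n) := by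
            rw [ht₀def, div_pow, inv_div, hpow, div_mul_eq_mul_div, mul_div_assoc]
            congr 1
            rw [div_eq_iff (ne_of_gt hpos), hprod]
          rw [hVm, hmn, ← ENNReal.ofReal_mul (by positivity), ← ENNReal.ofReal_mul (by positivity),
            hkey, hkey2, ← two_mul, ENNReal.ofReal_mul (by positivity : (0:ℝ) ≤ d ^ (n-1))]
          exact le_of_eq (by ring)


lemma pigeon {α : Type*} [MeasurableSpace α] {μ : Measure α} {Q : Set α} (hQ0 : μ Q ≠ 0)
    (hQt : μ Q ≠ ∞) {G : α → ℝ≥0∞} (hG : Measurable G) {M : ℝ≥0∞} (hM : M ≠ ∞)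
    (h : ∫⁻ z in Q, G z ∂μ ≤ 4 * M * μ Q) : ∃ z ∈ Q, G z ≤ 5 * M := by
  by_contra hc
  push_neg at hc
  rcases eq_or_ne M 0 with hM0 | hM0
  · have h0 : ∫⁻ z in Q, G z ∂μ = 0 :=
      le_antisymm (by simpa [hM0] using h) zero_le
    rw [lintegral_eq_zero_iff hG] at h0
    have h1 : (μ.restrict Q) {z | ¬ G z = 0} = 0 := by
      have := h0
      rw [Filter.EventuallyEq, ae_iff] at this
      simpa using this
    have h2 : μ Q ≤ (μ.restrict Q) {z | ¬ G z = 0} := by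
      rw [← Measure.restrict_apply_self]
      apply measure_mono
      intro z hz
      have := hc z hz
      rw [hM0, mul_zero] at this
      exact ne_of_gt this
    rw [h1] at h2
    exact hQ0 (le_antisymm h2 zero_le)
  · have hle : ∀ z ∈ Q, 5 * M ≤ G z := fun z hz => (hc z hz).le
    have hchain : 5 * M * μ Q ≤ 4 * M * μ Q := by
      calc 5 * M * μ Q = ∫⁻ _ in Q, 5 * M ∂μ := (setLIntegral_const _ _).symm
        _ ≤ ∫⁻ z in Q, G z ∂μ := setLIntegral_mono hG hle
        _ ≤ 4 * M * μ Q := h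
    have hMQ : M * μ Q ≠ 0 := mul_ne_zero hM0 hQ0
    have hMQt : M * μ Q ≠ ∞ := ENNReal.mul_ne_top hM hQt
    rw [mul_assoc, mul_assoc] at hchain
    have h5 : (5:ℝ≥0∞) ≤ 4 := (ENNReal.mul_le_mul_iff_left hMQ hMQt).mp hchain
    norm_num at h5

end TwoSegAux

open TwoSegAux in
/-- **Two-segment connection lemma.** -/
theorem exists_two_segment_path_avoiding (n : ℕ) (hn : 0 < n) :
    ∃ C : ℝ, 0 < C ∧ ∀ Q E : Set (Fin n → ℝ), IsCube Q → E ⊆ Q → MeasurableSet E →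
      ∀ x ∈ Q, ∀ y ∈ Q, ∃ z ∈ Q,
        μH[(1 : ℝ)] (segment ℝ x z ∩ E) + μH[(1 : ℝ)] (segment ℝ z y ∩ E) ≤
            ENNReal.ofReal C * (μH[(n : ℝ)] E) ^ ((1 : ℝ) / n) ∧
        segment ℝ x z ∪ segment ℝ z y ⊆ Q ∧
        dist x z + dist z y ≤ 2 * Metric.diam Q := by
  refine ⟨5, by norm_num, ?_⟩
  rintro Q E ⟨a, d, hd, rfl⟩ hEQ hE x hx y hy
  have hQconv : Convex ℝ (Icc a fun i => a i + d) := convex_Icc _ _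
  have hQbdd : Bornology.IsBounded (Icc a fun i => a i + d) := isCompact_Icc.isBounded
  have hdistQ : ∀ u ∈ Icc a (fun i => a i + d), ∀ v ∈ Icc a (fun i => a i + d),
      dist u v ≤ d := by
    intro u hu v hv
    rw [dist_pi_le_iff hd.le]
    intro i
    have h1 : a i ≤ u i := hu.1 i
    have h2 : u i ≤ a i + d := hu.2 i
    have h3 : a i ≤ v i := hv.1 i
    have h4 : v i ≤ a i + d := hv.2 i
    rw [Real.dist_eq, abs_le]
    constructor <;> linarith
  have hdiam : ∀ z ∈ Icc a (fun i => a i + d),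
      dist x z + dist z y ≤ 2 * Metric.diam (Icc a fun i => a i + d) := by
    intro z hz
    have h1 := Metric.dist_le_diam_of_mem hQbdd hx hz
    have h2 := Metric.dist_le_diam_of_mem hQbdd hz hy
    linarith
  have hHn : (μH[(n:ℝ)] : Measure (Fin n → ℝ)) = volume := by
    have := hausdorffMeasure_pi_real (ι := Fin n)
    simpa using this
  by_cases h1 : n = 1
  · subst h1
    refine ⟨x, hx, ?_, ?_, hdiam x hx⟩
    · have e1 : μH[(1:ℝ)] (segment ℝ x x ∩ E) = 0 := by
        refine le_antisymm ?_ zero_le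
        calc μH[(1:ℝ)] (segment ℝ x x ∩ E) ≤ μH[(1:ℝ)] (segment ℝ x x) :=
              measure_mono inter_subset_left
          _ = edist x x := hausdorffMeasure_segment x x
          _ = 0 := edist_self x
      rw [e1, zero_add]
      rw [Nat.cast_one, one_div_one, ENNReal.rpow_one]
      calc μH[(1:ℝ)] (segment ℝ x y ∩ E) ≤ μH[(1:ℝ)] E := measure_mono inter_subset_right
        _ ≤ ENNReal.ofReal 5 * μH[(1:ℝ)] E := by
            apply le_mul_of_one_le_left zero_le
            rw [show (1:ℝ≥0∞) = ENNReal.ofReal 1 by simp]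
            exact ENNReal.ofReal_le_ofReal (by norm_num)
    · apply union_subset
      · rw [segment_same]
        exact singleton_subset_iff.mpr hx
      · exact hQconv.segment_subset hx hy
  · have h2n : 2 ≤ n := by omega
    have hQvol : volume (Icc a (fun i => a i + d)) = ENNReal.ofReal (d ^ n) := by
      rw [Real.volume_Icc_pi]
      simp only [add_sub_cancel_left]
      rw [Finset.prod_const, Finset.card_univ, Fintype.card_fin, ← ENNReal.ofReal_pow hd.le]
    have hQ0 : volume (Icc a (fun i => a i + d)) ≠ 0 := by
      rw [hQvol]
      simp only [ne_eq, ENNReal.ofReal_eq_zero, not_le]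
      positivity
    have hQt : volume (Icc a (fun i => a i + d)) ≠ ∞ := by
      rw [hQvol]; exact ENNReal.ofReal_ne_top
    have hVne : volume E ≠ ∞ := ne_top_of_le_ne_top hQt (measure_mono hEQ)
    set M : ℝ≥0∞ := (volume E) ^ ((1:ℝ)/n) with hM
    have hMne : M ≠ ∞ := ENNReal.rpow_ne_top_of_nonneg (by positivity) hVne
    have hmx := measurable_measure_prodMk_right (μ := (volume : Measure ℝ))
      (measurableSet_W hE x)
    have hmy := measurable_measure_prodMk_right (μ := (volume : Measure ℝ))
      (measurableSet_W hE y)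
    set G : (Fin n → ℝ) → ℝ≥0∞ := fun z => ENNReal.ofReal d *
      (volume ((fun t => (t, z)) ⁻¹' W E x) + volume ((fun t => (t, z)) ⁻¹' W E y)) with hG
    have hGmeas : Measurable G := ((hmx.add hmy).const_mul _)
    have hint : ∫⁻ z in Icc a (fun i => a i + d), G z ≤
        4 * M * volume (Icc a (fun i => a i + d)) := by
      calc ∫⁻ z in Icc a (fun i => a i + d), G z
          = ENNReal.ofReal d *
            ((∫⁻ z in Icc a (fun i => a i + d), volume ((fun t => (t, z)) ⁻¹' W E x))
              + ∫⁻ z in Icc a (fun i => a i + d), volume ((fun t => (t, z)) ⁻¹' W E y)) := by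
            rw [hG]
            rw [lintegral_const_mul _ (by exact hmx.add hmy), lintegral_add_left hmx]
        _ ≤ ENNReal.ofReal d *
            (2 * ENNReal.ofReal (d ^ (n-1)) * M + 2 * ENNReal.ofReal (d ^ (n-1)) * M) := by
            gcongr
            · exact key h2n hd hEQ hE x
            · exact key h2n hd hEQ hE y
        _ = 4 * M * (ENNReal.ofReal d * ENNReal.ofReal (d ^ (n-1))) := by ring
        _ = 4 * M * volume (Icc a (fun i => a i + d)) := by
            rw [← ENNReal.ofReal_mul hd.le, hQvol]
            congr 2
            rw [← pow_succ']
            congr 1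
            omega
    obtain ⟨z, hz, hGz⟩ := pigeon hQ0 hQt hGmeas hMne hint
    refine ⟨z, hz, ?_, ?_, hdiam z hz⟩
    · calc μH[(1:ℝ)] (segment ℝ x z ∩ E) + μH[(1:ℝ)] (segment ℝ z y ∩ E)
          ≤ ENNReal.ofReal d * volume ((fun t => (t, z)) ⁻¹' W E x)
            + ENNReal.ofReal d * volume ((fun t => (t, z)) ⁻¹' W E y) := by
            gcongr
            · exact seg_le (hdistQ x hx z hz)
            · rw [segment_symm]
              exact seg_le (hdistQ y hy z hz)
        _ = G z := by simp only [hG]; ring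
        _ ≤ 5 * M := hGz
        _ = ENNReal.ofReal 5 * (μH[(n:ℝ)] E) ^ ((1:ℝ)/n) := by
            rw [hHn, hM]
            congr 1
            simp
    · exact union_subset (hQconv.segment_subset hx hz) (hQconv.segment_subset hz hy)
end
end

section
/- If η = (η_1, η_2, …) : [a,b] → ℓ∞ is a Lipschitz curve, then each component η_i : [a,b] → ℝ is differentiable almost everywhere, and the length of η satisfies ℓ(η) ≤ ∫_a^b ‖η'(t)‖_∞ dt, where ‖η'(t)‖_∞ = sup_i |η_i'(t)|. -/
open MeasureTheory Set ENNReal NNReal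

noncomputable section

/-- `ℓ∞`: the Banach space of bounded real sequences with the supremum norm. -/
abbrev lInfty : Type := lp (fun _ : ℕ => ℝ) ⊤

open Filter in
/-- FTC-type inequality for Lipschitz real functions, lower bound direction. -/
lemma lip_sub_le_integral_deriv {K : ℝ≥0} {g : ℝ → ℝ} (hg : LipschitzWith K g)
    {u v : ℝ} (huv : u ≤ v) :
    g v - g u ≤ ∫ t in Ioc u v, deriv g t := by
  set m : ℝ → ℝ := fun t => K * t - g t with hm_def
  have hm : Monotone m := by
    intro s t hst
    have h := hg.dist_le_mul t s
    rw [Real.dist_eq, Real.dist_eq, abs_of_nonneg (sub_nonneg.2 hst)] at h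
    have h3 : g t - g s ≤ (K : ℝ) * (t - s) := (le_abs_self _).trans h
    rw [mul_sub] at h3
    simp only [hm_def]
    linarith
  have hc : Continuous m := (continuous_const.mul continuous_id).sub hg.continuous
  have hSm : ∀ x, hm.stieltjesFunction x = m x := by
    intro x
    rw [hm.stieltjesFunction_eq]
    exact rightLim_eq_of_tendsto
      ((hc.tendsto x).mono_left nhdsWithin_le_nhds)
  set μ := hm.stieltjesFunction.measure with hμ_def
  set d : ℝ → ℝ≥0∞ := μ.rnDeriv volume with hd_def
  have hle : ∫⁻ t in Ioc u v, d t ≤ μ (Ioc u v) := Measure.setLIntegral_rnDeriv_le _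
  have hμIoc : μ (Ioc u v) = ENNReal.ofReal (m v - m u) := by
    rw [hμ_def, StieltjesFunction.measure_Ioc, hSm, hSm]
  have hne : ∫⁻ t in Ioc u v, d t ≠ ⊤ :=
    (hle.trans_lt (hμIoc ▸ ofReal_lt_top)).ne
  have hdmeas : AEMeasurable d (volume.restrict (Ioc u v)) :=
    (Measure.measurable_rnDeriv μ volume).aemeasurable
  have hdint : Integrable (fun t => (d t).toReal) (volume.restrict (Ioc u v)) :=
    integrable_toReal_of_lintegral_ne_top hdmeas hne
  have hint_d : ∫ t in Ioc u v, (d t).toReal ≤ m v - m u := by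
    rw [integral_toReal hdmeas (ae_restrict_of_ae (Measure.rnDeriv_lt_top μ volume))]
    refine ENNReal.toReal_le_of_le_ofReal (sub_nonneg.2 (hm huv)) ?_
    exact hμIoc ▸ hle
  have hae : ∀ᵐ t ∂(volume : Measure ℝ), deriv g t = (K : ℝ) - (d t).toReal := by
    filter_upwards [hm.ae_hasDerivAt] with t ht
    have hK : HasDerivAt (fun s : ℝ => (K : ℝ) * s) (K : ℝ) t := by
      simpa using (hasDerivAt_id t).const_mul (K : ℝ)
    have heq : (fun s => (K : ℝ) * s - m s) = g := by
      funext s; simp [hm_def]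
    have hg' : HasDerivAt g ((K : ℝ) - (d t).toReal) t := heq ▸ hK.sub ht
    exact hg'.deriv
  have hKint : Integrable (fun _ : ℝ => (K : ℝ)) (volume.restrict (Ioc u v)) :=
    integrableOn_const measure_Ioc_lt_top.ne
  calc g v - g u = (K : ℝ) * (v - u) - (m v - m u) := by simp [hm_def]; ring
    _ ≤ (K : ℝ) * (v - u) - ∫ t in Ioc u v, (d t).toReal := by linarith
    _ = ∫ t in Ioc u v, ((K : ℝ) - (d t).toReal) := by
        rw [integral_sub hKint hdint, setIntegral_const]
        simp [Real.volume_Ioc, ENNReal.toReal_ofReal (sub_nonneg.2 huv)]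
        rw [max_eq_left (sub_nonneg.2 huv)]
        ring
    _ = ∫ t in Ioc u v, deriv g t := by
        refine integral_congr_ae (ae_restrict_of_ae (hae.mono fun t ht => ht.symm))

lemma lip_deriv_integrable {K : ℝ≥0} {g : ℝ → ℝ} (hg : LipschitzWith K g) (u v : ℝ) :
    Integrable (deriv g) (volume.restrict (Ioc u v)) := by
  have hK : Integrable (fun _ : ℝ => (K : ℝ)) (volume.restrict (Ioc u v)) :=
    integrableOn_const measure_Ioc_lt_top.ne
  refine hK.mono' (stronglyMeasurable_deriv g).aestronglyMeasurable
    (ae_of_all _ fun t => ?_)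
  exact norm_deriv_le_of_lipschitz hg

lemma lip_abs_sub_le_integral_abs_deriv {K : ℝ≥0} {g : ℝ → ℝ} (hg : LipschitzWith K g)
    {u v : ℝ} (huv : u ≤ v) :
    |g v - g u| ≤ ∫ t in Ioc u v, |deriv g t| := by
  have hint := lip_deriv_integrable hg u v
  have hint_abs : Integrable (fun t => |deriv g t|) (volume.restrict (Ioc u v)) := hint.abs
  rw [abs_sub_le_iff]
  constructor
  · exact (lip_sub_le_integral_deriv hg huv).trans
      (integral_mono hint hint_abs fun t => le_abs_self _)
  · have hgneg : LipschitzWith K (fun t => -g t) := hg.neg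
    have h := lip_sub_le_integral_deriv hgneg huv
    simp only [deriv.fun_neg] at h
    have h2 : ∫ t in Ioc u v, -deriv g t = -∫ t in Ioc u v, deriv g t := integral_neg _
    rw [h2] at h
    have h3 : -∫ t in Ioc u v, deriv g t ≤ ∫ t in Ioc u v, |deriv g t| := by
      rw [← integral_neg]
      exact integral_mono hint.neg hint_abs fun t => neg_le_abs _
    linarith

/-- **Length bound for Lipschitz curves in `ℓ∞`.** If `η = (η₁, η₂, …) : [a,b] → ℓ∞` is
Lipschitz, then each component `ηᵢ` is differentiable almost everywhere on `[a,b]`, and the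
length of `η` (its total variation on `[a,b]`) is bounded by `∫_a^b ‖η'(t)‖_∞ dt`, where
`‖η'(t)‖_∞ = supᵢ |ηᵢ'(t)|`. -/
theorem length_le_integral_sup_deriv
    (a b : ℝ) (hab : a ≤ b) (K : ℝ≥0) (η : ℝ → lInfty)
    (hη : LipschitzOnWith K η (Set.Icc a b)) :
    (∀ i : ℕ, ∀ᵐ t ∂(volume.restrict (Set.Icc a b)),
      DifferentiableWithinAt ℝ (fun s => (η s : ℕ → ℝ) i) (Set.Icc a b) t) ∧
    eVariationOn η (Set.Icc a b) ≤
      ∫⁻ t in Set.Icc a b, ⨆ i : ℕ,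
        (‖derivWithin (fun s => (η s : ℕ → ℝ) i) (Set.Icc a b) t‖₊ : ℝ≥0∞) := by
  -- each component is Lipschitz on `Icc a b`
  have hfl : ∀ i : ℕ, LipschitzOnWith K (fun s => (η s : ℕ → ℝ) i) (Set.Icc a b) := by
    intro i
    refine LipschitzOnWith.of_dist_le_mul fun s hs t ht => ?_
    have h1 : dist ((η s : ℕ → ℝ) i) ((η t : ℕ → ℝ) i) = ‖(η s - η t : lInfty) i‖ := by
      rw [Real.dist_eq, lp.coeFn_sub, Real.norm_eq_abs]; rfl
    calc dist ((η s : ℕ → ℝ) i) ((η t : ℕ → ℝ) i) = ‖(η s - η t : lInfty) i‖ := h1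
      _ ≤ ‖(η s - η t : lInfty)‖ := lp.norm_apply_le_norm ENNReal.top_ne_zero _ i
      _ = dist (η s) (η t) := (dist_eq_norm _ _).symm
      _ ≤ K * dist s t := hη.dist_le_mul s hs t ht
  -- extend each component to a Lipschitz function on all of `ℝ`
  have hext : ∀ i : ℕ, ∃ g : ℝ → ℝ, LipschitzWith K g ∧
      EqOn (fun s => (η s : ℕ → ℝ) i) g (Set.Icc a b) := fun i => (hfl i).extend_real
  choose g hgl hge using hext
  -- `derivWithin` agrees with `deriv g i` on the interior
  have hderiv_eq : ∀ i : ℕ, ∀ t ∈ Ioo a b,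
      derivWithin (fun s => (η s : ℕ → ℝ) i) (Set.Icc a b) t = deriv (g i) t := by
    intro i t ht
    rw [derivWithin_congr (hge i) (hge i (Ioo_subset_Icc_self ht)),
      derivWithin_of_mem_nhds (Icc_mem_nhds ht.1 ht.2)]
  -- a.e. membership in the open interval
  have hIoo_ae : ∀ (s : Set ℝ), MeasurableSet s → s ⊆ Set.Icc a b →
      ∀ᵐ t ∂(volume.restrict s), t ∈ Ioo a b := by
    intro s hms hs
    have hna : ∀ᵐ t : ℝ ∂volume, t ≠ a := by
      rw [ae_iff]; simp [not_not]
    have hnb : ∀ᵐ t : ℝ ∂volume, t ≠ b := by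
      rw [ae_iff]; simp [not_not]
    filter_upwards [ae_restrict_of_ae hna, ae_restrict_of_ae hnb, ae_restrict_mem hms]
      with t hta htb hmem
    have h := hs hmem
    exact ⟨lt_of_le_of_ne h.1 (Ne.symm hta), lt_of_le_of_ne h.2 htb⟩
  -- Part 1: a.e. differentiability
  have part1 : ∀ i : ℕ, ∀ᵐ t ∂(volume.restrict (Set.Icc a b)),
      DifferentiableWithinAt ℝ (fun s => (η s : ℕ → ℝ) i) (Set.Icc a b) t := by
    intro i
    filter_upwards [hIoo_ae _ measurableSet_Icc (subset_refl _),
      ae_restrict_of_ae ((hgl i).ae_differentiableAt (μ := volume))] with t ht hdiff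
    exact hdiff.differentiableWithinAt.congr (fun y hy => hge i hy)
      (hge i (Ioo_subset_Icc_self ht))
  refine ⟨part1, ?_⟩
  -- Part 2: the length bound
  set D : ℝ → ℝ≥0∞ := fun t => ⨆ i : ℕ,
    (‖derivWithin (fun s => (η s : ℕ → ℝ) i) (Set.Icc a b) t‖₊ : ℝ≥0∞) with hD_def
  -- key segment estimate
  have key : ∀ x ∈ Set.Icc a b, ∀ y ∈ Set.Icc a b, x ≤ y →
      edist (η y) (η x) ≤ ∫⁻ t in Ioc x y, D t := by
    intro x hx y hy hxy
    have hsub : Ioc x y ⊆ Set.Icc a b :=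
      Ioc_subset_Icc_self.trans (Icc_subset_Icc hx.1 hy.2)
    have hmem := hIoo_ae (Ioc x y) measurableSet_Ioc hsub
    have hDle : ∀ᵐ t ∂(volume.restrict (Ioc x y)), D t ≤ (K : ℝ≥0∞) := by
      filter_upwards [hmem] with t ht
      refine iSup_le fun i => ?_
      rw [hderiv_eq i t ht]
      exact_mod_cast (by
        simpa [← NNReal.coe_le_coe, coe_nnnorm] using
          norm_deriv_le_of_lipschitz (x₀ := t) (hgl i) : ‖deriv (g i) t‖₊ ≤ K)
    have hfin : ∫⁻ t in Ioc x y, D t ≠ ⊤ := by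
      refine ((lintegral_mono_ae hDle).trans_lt ?_).ne
      rw [lintegral_const]
      exact ENNReal.mul_lt_top ENNReal.coe_lt_top
        ((Measure.restrict_apply_univ _).symm ▸ measure_Ioc_lt_top)
    rw [edist_eq_enorm_sub, ← ofReal_norm_eq_enorm]
    refine ENNReal.ofReal_le_of_le_toReal ?_
    rw [lp.norm_eq_ciSup]
    refine ciSup_le fun i => ?_
    have hcoord : (η y - η x : lInfty) i = (η y : ℕ → ℝ) i - (η x : ℕ → ℝ) i := by
      rw [lp.coeFn_sub]; rfl
    have hgy : (η y : ℕ → ℝ) i = g i y := hge i hy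
    have hgx : (η x : ℕ → ℝ) i = g i x := hge i hx
    rw [hcoord, Real.norm_eq_abs, hgy, hgx]
    refine (lip_abs_sub_le_integral_abs_deriv (hgl i) hxy).trans ?_
    have heq : ∫ t in Ioc x y, |deriv (g i) t| =
        (∫⁻ t in Ioc x y, (‖deriv (g i) t‖₊ : ℝ≥0∞)).toReal := by
      have := integral_norm_eq_lintegral_enorm
        (f := deriv (g i)) (μ := volume.restrict (Ioc x y))
        (stronglyMeasurable_deriv (g i)).aestronglyMeasurable
      simpa [Real.norm_eq_abs, enorm_eq_nnnorm] using this
    rw [heq]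
    refine ENNReal.toReal_mono hfin (lintegral_mono_ae ?_)
    filter_upwards [hmem] with t ht
    rw [← hderiv_eq i t ht]
    exact le_iSup (fun j : ℕ => (‖derivWithin (fun s => (η s : ℕ → ℝ) j)
      (Set.Icc a b) t‖₊ : ℝ≥0∞)) i
  -- sum over partitions
  unfold eVariationOn
  refine iSup_le ?_
  rintro ⟨n, u, hu, us⟩
  have hsum : ∀ m : ℕ, ∑ k ∈ Finset.range m, edist (η (u (k + 1))) (η (u k)) ≤
      ∫⁻ t in Ioc (u 0) (u m), D t := by
    intro m
    induction m with
    | zero => simp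
    | succ m ih =>
      rw [Finset.sum_range_succ]
      have h1 : Ioc (u 0) (u m) ∪ Ioc (u m) (u (m + 1)) = Ioc (u 0) (u (m + 1)) :=
        Ioc_union_Ioc_eq_Ioc (hu (Nat.zero_le m)) (hu (Nat.le_succ m))
      rw [← h1, lintegral_union measurableSet_Ioc (Ioc_disjoint_Ioc_of_le le_rfl)]
      exact add_le_add ih (key (u m) (us m) (u (m + 1)) (us (m + 1)) (hu (Nat.le_succ m)))
  refine (hsum n).trans (lintegral_mono_set ?_)
  exact Ioc_subset_Icc_self.trans (Icc_subset_Icc (us 0).1 (us n).2)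
end
end

section
/- Let (X, d) be a complete metric space that is quasiconvex with constant C_q, let F ⊂ [a,b] be a closed subset containing a and b, and let h : F → X be an L-Lipschitz map. Then h extends to a C_q L-Lipschitz curve Γ : [a,b] → X with Γ = h on F. -/
open MeasureTheory Set ENNReal NNReal

noncomputable section

lemma evar_small_right {X : Type*} [PseudoEMetricSpace X] {γ : ℝ → X} {A B : ℝ} (hAB : A < B)
    (hc : ContinuousWithinAt γ (Icc A B) A) (hfin : eVariationOn γ (Icc A B) ≠ ⊤)
    {ε : ℝ≥0∞} (hε : 0 < ε) :
    ∃ t ∈ Ioc A B, eVariationOn γ (Icc A t) ≤ ε := by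
  set W := eVariationOn γ (Icc A B) with hW
  by_cases hWε : W ≤ ε
  · exact ⟨B, ⟨hAB, le_rfl⟩, hWε⟩
  push_neg at hWε
  have hε2 : (0:ℝ≥0∞) < ε / 2 := ENNReal.div_pos hε.ne' (by norm_num)
  have hlt : W - ε / 2 < W := ENNReal.sub_lt_self hfin (hε.trans hWε).ne' hε2.ne'
  -- get a partition with large sum
  rw [hW] at hlt
  unfold eVariationOn at hlt
  obtain ⟨⟨n, ⟨u, hu, us⟩⟩, hsum⟩ := lt_iSup_iff.mp hlt
  simp only at hsum
  -- continuity: get δ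
  have hball : γ ⁻¹' (Metric.eball (γ A) (ε / 2)) ∈ nhdsWithin A (Icc A B) :=
    hc (Metric.eball_mem_nhds (γ A) hε2)
  obtain ⟨δ, hδ, hδsub⟩ := EMetric.mem_nhdsWithin_iff.mp hball
  by_cases hex : ∃ j, A < u j
  swap
  · push_neg at hex
    have : ∀ j, u j = A := fun j => le_antisymm (hex j) (us j).1
    have hz : (∑ i ∈ Finset.range n, edist (γ (u (i + 1))) (γ (u i))) = 0 := by
      simp [this]
    rw [hz] at hsum
    exact absurd hsum (by simp [tsub_pos_iff_lt.mpr ((ENNReal.half_le_self (a := ε)).trans_lt hWε)])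
  classical
  set k := Nat.find hex with hk
  have hkA : A < u k := Nat.find_spec hex
  have hlow : ∀ j < k, u j = A := fun j hj =>
    le_antisymm (not_lt.mp (Nat.find_min hex hj)) (us j).1
  -- pick real δ' with ofReal δ' ≤ δ
  obtain ⟨δ', hδ'pos, hδ'le⟩ : ∃ δ' : ℝ, 0 < δ' ∧ ENNReal.ofReal δ' ≤ δ := by
    rcases eq_or_ne δ ⊤ with hT | hT
    · exact ⟨1, one_pos, by simp [hT]⟩
    · exact ⟨δ.toReal, ENNReal.toReal_pos hδ.ne' hT, by rw [ENNReal.ofReal_toReal hT]⟩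
  -- the cut point
  set t₀ : ℝ := min (u k) (min B (A + δ' / 2)) with ht₀
  have ht₀A : A < t₀ := lt_min hkA (lt_min hAB (by linarith))
  have ht₀B : t₀ ≤ B := (min_le_right _ _).trans (min_le_left _ _)
  have ht₀uk : t₀ ≤ u k := min_le_left _ _
  have ht₀mem : t₀ ∈ Icc A B := ⟨ht₀A.le, ht₀B⟩
  have ht₀close : edist (γ t₀) (γ A) < ε / 2 := by
    have : t₀ ∈ Metric.eball A δ ∩ Icc A B := by
      refine ⟨?_, ht₀mem⟩
      rw [Metric.mem_eball, edist_dist, Real.dist_eq, abs_of_nonneg (by linarith)]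
      refine lt_of_lt_of_le ?_ hδ'le
      have h1 : t₀ - A ≤ δ' / 2 := by
        have := min_le_right (u k) (min B (A + δ' / 2))
        have := min_le_right B (A + δ' / 2)
        have : t₀ ≤ A + δ' / 2 := (min_le_right _ _).trans (min_le_right _ _)
        linarith
      exact (ENNReal.ofReal_le_ofReal h1).trans_lt (ENNReal.ofReal_lt_ofReal_iff hδ'pos |>.mpr (by linarith))
    have := hδsub this
    rwa [mem_preimage, Metric.mem_eball] at this
  -- modified partition
  set u' : ℕ → ℝ := fun i => max (u i) t₀ with hu'
  have hu'mono : Monotone u' := hu.max monotone_const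
  have hu'mem : ∀ i, u' i ∈ Icc t₀ B := fun i => ⟨le_max_right _ _, max_le (us i).2 ht₀B⟩
  have hSubSum : (∑ i ∈ Finset.range n, edist (γ (u' (i + 1))) (γ (u' i)))
      ≤ eVariationOn γ (Icc t₀ B) := eVariationOn.sum_le (f := γ) (n := n) hu'mono hu'mem
  -- pointwise comparison
  have hpt : ∀ i, edist (γ (u (i + 1))) (γ (u i))
      ≤ edist (γ (u' (i + 1))) (γ (u' i)) + (if i + 1 = k then ε / 2 else 0) := by
    intro i
    rcases lt_trichotomy (i + 1) k with hik | hik | hik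
    · have h1 : u (i + 1) = A := hlow _ hik
      have h2 : u i = A := hlow _ (lt_of_le_of_lt (Nat.le_succ i) hik)
      simp [h1, h2]
    · -- i + 1 = k
      have hik' : i < k := by omega
      have h2 : u i = A := hlow _ hik'
      have hmax1 : u' (i + 1) = u (i + 1) := by
        rw [hu']; exact max_eq_left (by rw [hik]; exact ht₀uk)
      have hmax2 : u' i = t₀ := by
        rw [hu']; exact max_eq_right (by rw [h2]; exact ht₀A.le)
      rw [hmax1, hmax2, if_pos hik, h2]
      calc edist (γ (u (i + 1))) (γ A)
          ≤ edist (γ (u (i + 1))) (γ t₀) + edist (γ t₀) (γ A) := edist_triangle _ _ _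
        _ ≤ edist (γ (u (i + 1))) (γ t₀) + ε / 2 := by gcongr
    · -- k < i + 1, so k ≤ i
      have hki : k ≤ i := by omega
      have hmax1 : u' (i + 1) = u (i + 1) := max_eq_left (ht₀uk.trans (hu (by omega)))
      have hmax2 : u' i = u i := max_eq_left (ht₀uk.trans (hu hki))
      simp [hmax1, hmax2]
  have hScomp : (∑ i ∈ Finset.range n, edist (γ (u (i + 1))) (γ (u i)))
      ≤ (∑ i ∈ Finset.range n, edist (γ (u' (i + 1))) (γ (u' i))) + ε / 2 := by
    calc (∑ i ∈ Finset.range n, edist (γ (u (i + 1))) (γ (u i)))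
        ≤ ∑ i ∈ Finset.range n,
            (edist (γ (u' (i + 1))) (γ (u' i)) + (if i + 1 = k then ε / 2 else 0)) :=
          Finset.sum_le_sum fun i _ => hpt i
      _ = (∑ i ∈ Finset.range n, edist (γ (u' (i + 1))) (γ (u' i)))
            + ∑ i ∈ Finset.range n, (if i + 1 = k then ε / 2 else 0) := Finset.sum_add_distrib
      _ ≤ (∑ i ∈ Finset.range n, edist (γ (u' (i + 1))) (γ (u' i))) + ε / 2 := by
          gcongr
          rcases k with _ | k'
          · simp
          · have : ∀ i, (if i + 1 = k' + 1 then ε / 2 else 0) = (if i = k' then ε / 2 else 0) := by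
              intro i; simp
            simp_rw [this]
            rw [Finset.sum_ite_eq' (Finset.range n) k' (fun _ => ε / 2)]
            split <;> simp
  -- conclude
  have hWle : W ≤ eVariationOn γ (Icc t₀ B) + ε := by
    have h1 : W ≤ (∑ i ∈ Finset.range n, edist (γ (u (i + 1))) (γ (u i))) + ε / 2 :=
      tsub_le_iff_right.mp hsum.le
    calc W ≤ (∑ i ∈ Finset.range n, edist (γ (u (i + 1))) (γ (u i))) + ε / 2 := h1
      _ ≤ (eVariationOn γ (Icc t₀ B) + ε / 2) + ε / 2 := by gcongr; exact hScomp.trans (by gcongr)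
      _ = eVariationOn γ (Icc t₀ B) + ε := by rw [add_assoc, ENNReal.add_halves]
  have hsplit : eVariationOn γ (Icc A t₀) + eVariationOn γ (Icc t₀ B) = W := by
    have := eVariationOn.Icc_add_Icc γ (le_of_lt ht₀A) ht₀B ht₀mem (s := Icc A B)
    rwa [Set.inter_eq_self_of_subset_right (Icc_subset_Icc_right ht₀B),
      Set.inter_eq_self_of_subset_right (Icc_subset_Icc_left ht₀A.le),
      Set.inter_self] at this
  refine ⟨t₀, ⟨ht₀A, ht₀B⟩, ?_⟩
  have htB_fin : eVariationOn γ (Icc t₀ B) ≠ ⊤ := by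
    intro hT; rw [← hsplit, hT] at hfin; simp at hfin
  have : eVariationOn γ (Icc A t₀) + eVariationOn γ (Icc t₀ B)
      ≤ ε + eVariationOn γ (Icc t₀ B) := by
    rw [hsplit]; rw [add_comm ε]; exact hWle
  exact (ENNReal.add_le_add_iff_right htB_fin).mp this

lemma evar_small_left {X : Type*} [PseudoEMetricSpace X] {γ : ℝ → X} {A B : ℝ} (hAB : A < B)
    (hc : ContinuousWithinAt γ (Icc A B) B) (hfin : eVariationOn γ (Icc A B) ≠ ⊤)
    {ε : ℝ≥0∞} (hε : 0 < ε) :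
    ∃ t ∈ Ico A B, eVariationOn γ (Icc t B) ≤ ε := by
  set φ : ℝ → ℝ := fun x => A + B - x with hφ
  have hφanti : ∀ t : Set ℝ, AntitoneOn φ t := fun t x _ y _ hxy => by simp [hφ]; linarith
  have hφimg : ∀ c d : ℝ, φ '' Icc c d = Icc (A + B - d) (A + B - c) := fun c d => by
    rw [hφ]; exact Set.image_const_sub_Icc _ _ _
  have hmaps : MapsTo φ (Icc A B) (Icc A B) := by
    intro x hx; simp only [hφ, mem_Icc] at hx ⊢; constructor <;> linarith [hx.1, hx.2]
  have hvar : eVariationOn (γ ∘ φ) (Icc A B) = eVariationOn γ (Icc A B) := by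
    rw [eVariationOn.comp_eq_of_antitoneOn γ φ (hφanti _), hφimg]
    norm_num
  have hcont : ContinuousWithinAt (γ ∘ φ) (Icc A B) A := by
    have hφc : ContinuousWithinAt φ (Icc A B) A := (continuous_const.sub continuous_id).continuousWithinAt
    have hφA : φ A = B := by simp [hφ]
    exact ContinuousWithinAt.comp (by rw [hφA]; exact hc) hφc hmaps
  obtain ⟨t, ⟨htA, htB⟩, hvt⟩ := evar_small_right hAB hcont (by rwa [hvar]) hε
  refine ⟨A + B - t, ⟨by linarith, by linarith⟩, ?_⟩
  have : eVariationOn (γ ∘ φ) (Icc A t) = eVariationOn γ (Icc (A + B - t) B) := by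
    rw [eVariationOn.comp_eq_of_antitoneOn γ φ (hφanti _), hφimg]
    norm_num
  rwa [this] at hvt

lemma abs_min_sub_min_le' {a b c : ℝ} : |min a c - min b c| ≤ |a - b| := by
  rcases le_total a c with h1 | h1 <;> rcases le_total b c with h2 | h2 <;>
    rw [abs_sub_le_iff] <;> constructor <;>
    · simp only [min_eq_left, min_eq_right, h1, h2] <;> skip
      rcases abs_cases (a - b) with h | h <;>
      rcases le_total a b with h3 | h3 <;>
      simp [min_eq_left, min_eq_right, h1, h2] <;> linarith

lemma gap_curve {X : Type*} [MetricSpace X] {Cq : ℝ≥0} (hX : IsQuasiconvexWith X Cq)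
    (p q : X) (M : ℝ≥0) (hM : (Cq : ℝ≥0∞) * edist p q ≤ M) :
    ∃ g : ℝ → X, g 0 = p ∧ g 1 = q ∧ LipschitzOnWith M g (Icc 0 1) := by
  obtain ⟨γ, hγc, hγ0, hγ1, hγv⟩ := hX p q
  have hvarM : eVariationOn γ (Icc 0 1) ≤ (M : ℝ≥0∞) := hγv.trans hM
  have hfin : eVariationOn γ (Icc 0 1) ≠ ⊤ := (hvarM.trans_lt coe_lt_top).ne
  have hlbv : LocallyBoundedVariationOn γ (Icc 0 1) :=
    BoundedVariationOn.locallyBoundedVariationOn hfin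
  set I : Set ℝ := Icc 0 1 with hI
  set v : ℝ → ℝ := variationOnFromTo γ I 0 with hv
  have h0I : (0:ℝ) ∈ I := by rw [hI]; exact ⟨le_refl _, zero_le_one⟩
  have h1I : (1:ℝ) ∈ I := by rw [hI]; exact ⟨zero_le_one, le_refl _⟩
  have hsub : ∀ {x y : ℝ}, x ∈ I → y ∈ I → x ≤ y →
      eVariationOn γ (I ∩ Icc x y) = ENNReal.ofReal (v y - v x) := by
    intro x y hx hy hxy
    have hadd := variationOnFromTo.add hlbv h0I hx hy
    have heq := variationOnFromTo.eq_of_le γ I hxy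
    have hfin' : eVariationOn γ (I ∩ Icc x y) ≠ ⊤ :=
      ((eVariationOn.mono γ inter_subset_left).trans_lt (lt_top_iff_ne_top.mpr hfin)).ne
    rw [show v y - v x = variationOnFromTo γ I x y by rw [hv]; linarith, heq,
      ENNReal.ofReal_toReal hfin']
  have hedist : ∀ {x y : ℝ}, x ∈ I → y ∈ I → x ≤ y →
      edist (γ x) (γ y) ≤ ENNReal.ofReal (v y - v x) := by
    intro x y hx hy hxy
    rw [← hsub hx hy hxy]
    exact eVariationOn.edist_le γ ⟨hx, le_refl x, hxy⟩ ⟨hy, hxy, le_refl y⟩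
  have hdistv : ∀ {x y : ℝ}, x ∈ I → y ∈ I → x ≤ y →
      dist (v y) (v x) = (eVariationOn γ (I ∩ Icc x y)).toReal := by
    intro x y hx hy hxy
    have hnn : 0 ≤ v y - v x := by
      have := variationOnFromTo.nonneg_of_le (f := γ) (s := I) hxy
      have hadd := variationOnFromTo.add hlbv h0I hx hy
      rw [hv]; linarith
    rw [hsub hx hy hxy, ENNReal.toReal_ofReal hnn, Real.dist_eq, abs_of_nonneg hnn]
  -- continuity of v on I
  have hvcont : ContinuousOn v I := by
    intro t₀ ht₀
    rw [Metric.continuousWithinAt_iff]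
    intro ε hε
    have hεo : (0:ℝ≥0∞) < ENNReal.ofReal (ε / 2) := by
      rw [ENNReal.ofReal_pos]; linarith
    have hIt₀ := ht₀
    rw [hI, mem_Icc] at hIt₀
    obtain ⟨tR, htRgt, hvR⟩ : ∃ tR, t₀ < tR ∧ ∀ y ∈ I, t₀ ≤ y → y ≤ tR →
        dist (v y) (v t₀) < ε := by
      rcases lt_or_ge t₀ 1 with ht1 | ht1
      · have hconR : ContinuousWithinAt γ (Icc t₀ 1) t₀ :=
          (hγc t₀ ht₀).mono (Icc_subset_Icc hIt₀.1 le_rfl)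
        have hfinR : eVariationOn γ (Icc t₀ 1) ≠ ⊤ :=
          ((eVariationOn.mono γ (Icc_subset_Icc hIt₀.1 le_rfl)).trans_lt
            (lt_top_iff_ne_top.mpr hfin)).ne
        obtain ⟨tR, ⟨htR1, _⟩, hvar⟩ := evar_small_right ht1 hconR hfinR hεo
        refine ⟨tR, htR1, fun y hy hty hytR => ?_⟩
        have h1 : eVariationOn γ (I ∩ Icc t₀ y) ≤ ENNReal.ofReal (ε / 2) :=
          (eVariationOn.mono γ (show I ∩ Icc t₀ y ⊆ Icc t₀ tR from fun z hz => ⟨hz.2.1, hz.2.2.trans hytR⟩)).trans hvar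
        rw [hdistv ht₀ hy hty]
        calc (eVariationOn γ (I ∩ Icc t₀ y)).toReal
            ≤ (ENNReal.ofReal (ε / 2)).toReal := ENNReal.toReal_mono ofReal_ne_top h1
          _ = ε / 2 := ENNReal.toReal_ofReal (by linarith)
          _ < ε := by linarith
      · refine ⟨t₀ + 1, by linarith, fun y hy hty _ => ?_⟩
        have hy1 : y ≤ 1 := by rw [hI, mem_Icc] at hy; exact hy.2
        have : y = t₀ := le_antisymm (hy1.trans ht1) hty
        simp [this, hε]
    obtain ⟨tL, htLlt, hvL⟩ : ∃ tL, tL < t₀ ∧ ∀ y ∈ I, tL ≤ y → y ≤ t₀ →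
        dist (v y) (v t₀) < ε := by
      rcases lt_or_ge 0 t₀ with ht1 | ht1
      · have hconL : ContinuousWithinAt γ (Icc 0 t₀) t₀ :=
          (hγc t₀ ht₀).mono (Icc_subset_Icc le_rfl hIt₀.2)
        have hfinL : eVariationOn γ (Icc 0 t₀) ≠ ⊤ :=
          ((eVariationOn.mono γ (Icc_subset_Icc le_rfl hIt₀.2)).trans_lt
            (lt_top_iff_ne_top.mpr hfin)).ne
        obtain ⟨tL, ⟨_, htL2⟩, hvar⟩ := evar_small_left ht1 hconL hfinL hεo
        refine ⟨tL, htL2, fun y hy htLy hyt => ?_⟩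
        have h1 : eVariationOn γ (I ∩ Icc y t₀) ≤ ENNReal.ofReal (ε / 2) :=
          (eVariationOn.mono γ (show I ∩ Icc y t₀ ⊆ Icc tL t₀ from fun z hz => ⟨htLy.trans hz.2.1, hz.2.2⟩)).trans hvar
        rw [dist_comm, hdistv hy ht₀ hyt]
        calc (eVariationOn γ (I ∩ Icc y t₀)).toReal
            ≤ (ENNReal.ofReal (ε / 2)).toReal := ENNReal.toReal_mono ofReal_ne_top h1
          _ = ε / 2 := ENNReal.toReal_ofReal (by linarith)
          _ < ε := by linarith
      · refine ⟨t₀ - 1, by linarith, fun y hy htLy hyt => ?_⟩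
        have hy0 : 0 ≤ y := by rw [hI, mem_Icc] at hy; exact hy.1
        have : y = t₀ := le_antisymm hyt (ht1.trans hy0)
        simp [this, hε]
    refine ⟨min (tR - t₀) (t₀ - tL), lt_min (by linarith) (by linarith), fun y hy hdy => ?_⟩
    rw [Real.dist_eq] at hdy
    rcases le_total t₀ y with hty | hty
    · refine hvR y hy hty ?_
      have h1 : |y - t₀| < tR - t₀ := hdy.trans_le (min_le_left _ _)
      rw [abs_of_nonneg (by linarith)] at h1; linarith
    · refine hvL y hy ?_ hty
      have h1 : |y - t₀| < t₀ - tL := hdy.trans_le (min_le_right _ _)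
      rw [abs_of_nonpos (by linarith)] at h1; linarith
  -- IVT
  have hv0 : v 0 = 0 := variationOnFromTo.self γ I 0
  set Vr : ℝ := v 1 with hVr
  have hVr0 : 0 ≤ Vr := by
    have := variationOnFromTo.nonneg_of_le (f := γ) (s := I) (zero_le_one (α := ℝ))
    rw [hVr, hv]
    exact this
  have hVrM : Vr ≤ (M : ℝ) := by
    have h1 : v 1 = (eVariationOn γ (I ∩ Icc 0 1)).toReal := by
      rw [hv]; exact variationOnFromTo.eq_of_le γ I zero_le_one
    rw [hVr, h1, show I ∩ Icc 0 1 = Icc 0 1 by rw [hI, inter_self]]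
    calc (eVariationOn γ (Icc 0 1)).toReal ≤ ((M : ℝ≥0∞)).toReal :=
        ENNReal.toReal_mono coe_ne_top hvarM
      _ = (M : ℝ) := by simp
  have hIVT : Icc 0 Vr ⊆ v '' I := by
    have := intermediate_value_Icc (zero_le_one (α := ℝ)) hvcont
    rw [hv0] at this
    exact this
  set ψ : ℝ → ℝ := Function.invFunOn v I with hψ
  have hψmem : ∀ {w : ℝ}, w ∈ Icc 0 Vr → ψ w ∈ I ∧ v (ψ w) = w := by
    intro w hw
    obtain ⟨x, hx, hvx⟩ := hIVT hw
    exact ⟨Function.invFunOn_mem ⟨x, hx, hvx⟩, Function.invFunOn_eq ⟨x, hx, hvx⟩⟩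
  have hkey : ∀ {w w' : ℝ}, w ∈ Icc 0 Vr → w' ∈ Icc 0 Vr →
      edist (γ (ψ w)) (γ (ψ w')) ≤ ENNReal.ofReal |w' - w| := by
    intro w w' hw hw'
    obtain ⟨hm, he⟩ := hψmem hw
    obtain ⟨hm', he'⟩ := hψmem hw'
    rcases le_total (ψ w) (ψ w') with hle | hle
    · exact (hedist hm hm' hle).trans
        (by rw [he, he']; exact ENNReal.ofReal_le_ofReal (le_abs_self _))
    · rw [edist_comm]
      refine (hedist hm' hm hle).trans ?_
      rw [he, he']
      exact ENNReal.ofReal_le_ofReal (by rw [abs_sub_comm]; exact le_abs_self _)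
  refine ⟨fun s => γ (ψ (min ((M : ℝ) * s) Vr)), ?_, ?_, ?_⟩
  · show γ (ψ (min ((M : ℝ) * 0) Vr)) = p
    rw [mul_zero, min_eq_left hVr0]
    obtain ⟨hm, he⟩ := hψmem (⟨le_refl _, hVr0⟩ : (0:ℝ) ∈ Icc 0 Vr)
    have h1 : edist (γ 0) (γ (ψ 0)) = 0 := le_antisymm
      ((hedist h0I hm hm.1).trans (by rw [he, hv0]; simp)) zero_le
    rw [← hγ0]
    exact (edist_eq_zero.mp h1).symm
  · show γ (ψ (min ((M : ℝ) * 1) Vr)) = q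
    rw [mul_one, min_eq_right hVrM]
    obtain ⟨hm, he⟩ := hψmem (⟨hVr0, le_refl _⟩ : Vr ∈ Icc 0 Vr)
    have h1 : edist (γ (ψ Vr)) (γ 1) = 0 := le_antisymm
      ((hedist hm h1I hm.2).trans (by rw [he, ← hVr]; simp)) zero_le
    rw [← hγ1]
    exact edist_eq_zero.mp h1
  · intro s hs s' hs'
    have hws : min ((M : ℝ) * s) Vr ∈ Icc 0 Vr := by
      rw [hI, mem_Icc] at hs
      exact ⟨le_min (mul_nonneg M.2 hs.1) hVr0, min_le_right _ _⟩
    have hws' : min ((M : ℝ) * s') Vr ∈ Icc 0 Vr := by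
      rw [hI, mem_Icc] at hs'
      exact ⟨le_min (mul_nonneg M.2 hs'.1) hVr0, min_le_right _ _⟩
    calc edist (γ (ψ (min ((M : ℝ) * s) Vr))) (γ (ψ (min ((M : ℝ) * s') Vr)))
        ≤ ENNReal.ofReal |min ((M : ℝ) * s') Vr - min ((M : ℝ) * s) Vr| := hkey hws hws'
      _ ≤ ENNReal.ofReal ((M : ℝ) * |s - s'|) := by
          refine ENNReal.ofReal_le_ofReal ?_
          calc |min ((M : ℝ) * s') Vr - min ((M : ℝ) * s) Vr|
              ≤ |(M : ℝ) * s' - (M : ℝ) * s| := abs_min_sub_min_le'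
            _ = (M : ℝ) * |s' - s| := by rw [← mul_sub, abs_mul, NNReal.abs_eq]
            _ = (M : ℝ) * |s - s'| := by rw [abs_sub_comm]
      _ = (M : ℝ≥0∞) * edist s s' := by
          rw [ENNReal.ofReal_mul (NNReal.coe_nonneg M), edist_dist, Real.dist_eq, ENNReal.ofReal_coe_nnreal]

/-- **Lipschitz extension along an interval.** If `X` is complete and quasiconvex with constant
`C_q`, `F ⊆ [a,b]` is closed and contains `a` and `b`, and `h : F → X` is `L`-Lipschitz, then `h`
extends to a `C_q L`-Lipschitz curve `Γ : [a,b] → X` with `Γ = h` on `F`. -/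
theorem exists_lipschitz_extension_of_quasiconvex
    {X : Type*} [MetricSpace X] [CompleteSpace X]
    (Cq : ℝ≥0) (hCq : 1 ≤ Cq) (hX : IsQuasiconvexWith X Cq)
    (a b : ℝ) (hab : a ≤ b) (F : Set ℝ) (hFclosed : IsClosed F) (hFsub : F ⊆ Set.Icc a b)
    (haF : a ∈ F) (hbF : b ∈ F)
    (L : ℝ≥0) (h : ℝ → X) (hh : LipschitzOnWith L h F) :
    ∃ Γ : ℝ → X, LipschitzOnWith (Cq * L) Γ (Set.Icc a b) ∧ Set.EqOn Γ h F := by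
  classical
  set ct : ℝ → ℝ := fun t => sSup (F ∩ Iic t) with hct
  set dt : ℝ → ℝ := fun t => sInf (F ∩ Ici t) with hdt
  -- basic facts about ct/dt
  have hne1 : ∀ {x}, x ∈ Icc a b → (F ∩ Iic x).Nonempty := fun hx => ⟨a, haF, hx.1⟩
  have hbdd1 : ∀ x : ℝ, BddAbove (F ∩ Iic x) := fun x => ⟨x, fun z hz => hz.2⟩
  have hne2 : ∀ {x}, x ∈ Icc a b → (F ∩ Ici x).Nonempty := fun hx => ⟨b, hbF, hx.2⟩
  have hbdd2 : ∀ x : ℝ, BddBelow (F ∩ Ici x) := fun x => ⟨x, fun z hz => hz.2⟩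
  have hctF : ∀ {x}, x ∈ Icc a b → ct x ∈ F := fun hx =>
    ((hFclosed.inter isClosed_Iic).csSup_mem (hne1 hx) (hbdd1 _)).1
  have hctle : ∀ x : ℝ, x ∈ Icc a b → ct x ≤ x := fun x hx =>
    csSup_le (hne1 hx) (fun z hz => hz.2)
  have hdtF : ∀ {x}, x ∈ Icc a b → dt x ∈ F := fun hx =>
    ((hFclosed.inter isClosed_Ici).csInf_mem (hne2 hx) (hbdd2 _)).1
  have hdtge : ∀ x : ℝ, x ∈ Icc a b → x ≤ dt x := fun x hx =>
    le_csInf (hne2 hx) (fun z hz => hz.2)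
  have hctmem : ∀ {x}, x ∈ F → x ≤ x → x ∈ F ∩ Iic x := fun hx hxx => ⟨hx, hxx⟩
  have hctF_eq : ∀ {x}, x ∈ Icc a b → x ∈ F → ct x = x := fun {x} hx hxF =>
    le_antisymm (hctle x hx) (le_csSup (hbdd1 _) ⟨hxF, mem_Iic.mpr le_rfl⟩)
  have hdtF_eq : ∀ {x}, x ∈ Icc a b → x ∈ F → dt x = x := fun {x} hx hxF =>
    le_antisymm (csInf_le (hbdd2 _) ⟨hxF, mem_Ici.mpr le_rfl⟩) (hdtge x hx)
  have hle_ct : ∀ {x z}, z ∈ F → z ≤ x → z ≤ ct x := fun hz hzx => le_csSup (hbdd1 _) ⟨hz, mem_Iic.mpr hzx⟩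
  have hdt_le : ∀ {x z}, z ∈ F → x ≤ z → dt x ≤ z := fun hz hxz => csInf_le (hbdd2 _) ⟨hz, mem_Ici.mpr hxz⟩
  -- the gap curves
  have hgap : ∀ c d : ℝ, ∃ g : ℝ → X, c ∈ F → d ∈ F → c ≤ d →
      g 0 = h c ∧ g 1 = h d ∧
        LipschitzOnWith (Cq * L * Real.toNNReal (d - c)) g (Icc 0 1) := by
    intro c d
    by_cases hcd : c ∈ F ∧ d ∈ F ∧ c ≤ d
    · obtain ⟨hcF, hdF, hcdle⟩ := hcd
      have hM : (Cq : ℝ≥0∞) * edist (h c) (h d) ≤ (Cq * L * Real.toNNReal (d - c) : ℝ≥0) := by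
        have h1 : edist (h c) (h d) ≤ (L : ℝ≥0∞) * edist c d := hh hcF hdF
        have h2 : edist c d = (Real.toNNReal (d - c) : ℝ≥0∞) := by
          rw [edist_dist, Real.dist_eq, abs_sub_comm, abs_of_nonneg (by linarith),
            ENNReal.ofReal]
        calc (Cq : ℝ≥0∞) * edist (h c) (h d) ≤ (Cq : ℝ≥0∞) * ((L : ℝ≥0∞) * edist c d) := by
              gcongr
          _ = (Cq * L * Real.toNNReal (d - c) : ℝ≥0) := by
              rw [h2]; push_cast; ring
      obtain ⟨g, hg0, hg1, hglip⟩ := gap_curve hX (h c) (h d) _ hM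
      exact ⟨g, fun _ _ _ => ⟨hg0, hg1, hglip⟩⟩
    · exact ⟨fun _ => h a, fun h1 h2 h3 => absurd ⟨h1, h2, h3⟩ hcd⟩
  choose g hg using hgap
  set Γ : ℝ → X := fun t =>
    if t ∈ F then h t else g (ct t) (dt t) ((t - ct t) / (dt t - ct t)) with hΓ
  have hCqL : (L : ℝ) ≤ (Cq : ℝ) * L := by
    have h1 : (1 : ℝ) ≤ (Cq : ℝ) := by exact_mod_cast hCq
    nlinarith [L.coe_nonneg]
  -- the two-sided bound at each point
  have hBound : ∀ x ∈ Icc a b, dist (Γ x) (h (ct x)) ≤ (Cq : ℝ) * L * (x - ct x) ∧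
      dist (Γ x) (h (dt x)) ≤ (Cq : ℝ) * L * (dt x - x) := by
    intro x hx
    by_cases hxF : x ∈ F
    · rw [hctF_eq hx hxF, hdtF_eq hx hxF]
      have : Γ x = h x := if_pos hxF
      rw [this]
      simp
    · have hcx : ct x < x := lt_of_le_of_ne (hctle x hx) (fun he => hxF (he ▸ hctF hx))
      have hxd : x < dt x := lt_of_le_of_ne (hdtge x hx) (fun he => hxF (he ▸ hdtF hx))
      have hcd : ct x < dt x := hcx.trans hxd
      obtain ⟨hg0, hg1, hglip⟩ := hg (ct x) (dt x) (hctF hx) (hdtF hx) hcd.le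
      have hne0 : dt x - ct x ≠ 0 := ne_of_gt (by linarith)
      set u : ℝ := (x - ct x) / (dt x - ct x) with hu
      have hu0 : 0 ≤ u := div_nonneg (by linarith) (by linarith)
      have hu1 : u ≤ 1 := (div_le_one (by linarith)).mpr (by linarith)
      have hΓx : Γ x = g (ct x) (dt x) u := if_neg hxF
      have hMr : ((Cq * L * Real.toNNReal (dt x - ct x) : ℝ≥0) : ℝ)
          = (Cq : ℝ) * L * (dt x - ct x) := by
        push_cast
        rw [Real.coe_toNNReal _ (by linarith)]
      constructor
      · rw [hΓx, ← hg0]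
        calc dist (g (ct x) (dt x) u) (g (ct x) (dt x) 0)
            ≤ ((Cq * L * Real.toNNReal (dt x - ct x) : ℝ≥0) : ℝ) * dist u 0 :=
              hglip.dist_le_mul u ⟨hu0, hu1⟩ 0 ⟨le_rfl, zero_le_one⟩
          _ = (Cq : ℝ) * L * (x - ct x) := by
              rw [hMr, Real.dist_eq, sub_zero, abs_of_nonneg hu0, hu]
              field_simp [hne0]
      · rw [hΓx, ← hg1]
        calc dist (g (ct x) (dt x) u) (g (ct x) (dt x) 1)
            ≤ ((Cq * L * Real.toNNReal (dt x - ct x) : ℝ≥0) : ℝ) * dist u 1 :=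
              hglip.dist_le_mul u ⟨hu0, hu1⟩ 1 ⟨zero_le_one, le_rfl⟩
          _ = (Cq : ℝ) * L * (dt x - x) := by
              rw [hMr, Real.dist_eq, abs_of_nonpos (by linarith), hu]
              field_simp [hne0]
              ring
  -- the ordered key estimate
  have key : ∀ x ∈ Icc a b, ∀ y ∈ Icc a b, x ≤ y →
      dist (Γ x) (Γ y) ≤ (Cq : ℝ) * L * (y - x) := by
    intro x hx y hy hxy
    by_cases hcase : dt x ≤ y
    · -- there is a point of F between x and y
      have hDF : dt x ∈ F := hdtF hx
      have hCF : ct y ∈ F := hctF hy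
      have hDC : dt x ≤ ct y := hle_ct hDF hcase
      have hxD : x ≤ dt x := hdtge x hx
      have hCy : ct y ≤ y := hctle y hy
      have h1 := (hBound x hx).2
      have h2 := (hBound y hy).1
      have h3 : dist (h (dt x)) (h (ct y)) ≤ (L : ℝ) * (ct y - dt x) := by
        have := hh.dist_le_mul (dt x) hDF (ct y) hCF
        rwa [Real.dist_eq, abs_of_nonpos (by linarith), neg_sub] at this
      calc dist (Γ x) (Γ y)
          ≤ dist (Γ x) (h (dt x)) + dist (h (dt x)) (Γ y) := dist_triangle _ _ _
        _ ≤ dist (Γ x) (h (dt x)) + (dist (h (dt x)) (h (ct y)) + dist (h (ct y)) (Γ y)) := by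
            gcongr; exact dist_triangle _ _ _
        _ ≤ (Cq : ℝ) * L * (dt x - x) + ((L : ℝ) * (ct y - dt x) + (Cq : ℝ) * L * (y - ct y)) := by
            gcongr
            · rw [dist_comm]; exact h2
        _ ≤ (Cq : ℝ) * L * (y - x) := by
            have hLC : (L : ℝ) * (ct y - dt x) ≤ (Cq : ℝ) * L * (ct y - dt x) := by
              apply mul_le_mul_of_nonneg_right hCqL (by linarith)
            nlinarith [hLC]
    · -- x and y lie in the same gap
      push_neg at hcase
      have hxF : x ∉ F := fun hxF' => (not_le.mpr hcase) (by rw [hdtF_eq hx hxF']; exact hxy)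
      have hyF : y ∉ F := fun hyF' => (not_le.mpr hcase) (hdt_le hyF' hxy)
      have hcx : ct x < x := lt_of_le_of_ne (hctle x hx) (fun he => hxF (he ▸ hctF hx))
      have hxd : x < dt x := lt_of_le_of_ne (hdtge x hx) (fun he => hxF (he ▸ hdtF hx))
      have hcty : ct y = ct x := by
        refine le_antisymm (csSup_le (hne1 hy) (fun z hz => ?_)) (hle_ct (hctF hx) ((hctle x hx).trans hxy))
        rcases le_total z x with hzx | hzx
        · exact hle_ct hz.1 hzx
        · exact absurd (hdt_le hz.1 hzx) (not_le.mpr (lt_of_le_of_lt hz.2 (lt_of_le_of_lt (le_refl y) hcase)))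
      have hdty : dt y = dt x := by
        refine le_antisymm (hdt_le (hdtF hx) hcase.le) (le_csInf (hne2 hy) (fun z hz => ?_))
        exact hdt_le hz.1 (hxy.trans hz.2)
      obtain ⟨hg0, hg1, hglip⟩ := hg (ct x) (dt x) (hctF hx) (hdtF hx) (hcx.trans hxd).le
      have hΓx : Γ x = g (ct x) (dt x) ((x - ct x) / (dt x - ct x)) := if_neg hxF
      have hΓy : Γ y = g (ct x) (dt x) ((y - ct x) / (dt x - ct x)) := by
        rw [hΓ]
        simp only [if_neg hyF, hcty, hdty]
      have hcd : ct x < dt x := hcx.trans hxd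
      have hne0 : dt x - ct x ≠ 0 := ne_of_gt (by linarith)
      have hu0 : 0 ≤ (x - ct x) / (dt x - ct x) := div_nonneg (by linarith) (by linarith)
      have hu1 : (x - ct x) / (dt x - ct x) ≤ 1 := (div_le_one (by linarith)).mpr (by linarith)
      have hv0 : 0 ≤ (y - ct x) / (dt x - ct x) := div_nonneg (by linarith) (by linarith)
      have hv1 : (y - ct x) / (dt x - ct x) ≤ 1 := by
        rw [div_le_one (by linarith)]
        have : y ≤ dt x := hcase.le
        linarith
      have hMr : ((Cq * L * Real.toNNReal (dt x - ct x) : ℝ≥0) : ℝ)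
          = (Cq : ℝ) * L * (dt x - ct x) := by
        push_cast
        rw [Real.coe_toNNReal _ (by linarith)]
      rw [hΓx, hΓy]
      calc dist (g (ct x) (dt x) ((x - ct x) / (dt x - ct x)))
            (g (ct x) (dt x) ((y - ct x) / (dt x - ct x)))
          ≤ ((Cq * L * Real.toNNReal (dt x - ct x) : ℝ≥0) : ℝ) *
            dist ((x - ct x) / (dt x - ct x)) ((y - ct x) / (dt x - ct x)) :=
            hglip.dist_le_mul _ ⟨hu0, hu1⟩ _ ⟨hv0, hv1⟩
        _ = (Cq : ℝ) * L * (y - x) := by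
            rw [hMr, Real.dist_eq, div_sub_div_same, abs_div,
              abs_of_nonpos (by linarith), abs_of_nonneg (by linarith), neg_sub]
            field_simp [hne0]
            ring
  refine ⟨Γ, LipschitzOnWith.of_dist_le_mul (fun x hx y hy => ?_), fun t ht => if_pos ht⟩
  rcases le_total x y with hxy | hxy
  · have := key x hx y hy hxy
    rw [Real.dist_eq, abs_of_nonpos (by linarith)]
    calc dist (Γ x) (Γ y) ≤ (Cq : ℝ) * L * (y - x) := this
      _ = ((Cq * L : ℝ≥0) : ℝ) * -(x - y) := by push_cast; ring
  · have := key y hy x hx hxy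
    rw [dist_comm, Real.dist_eq, abs_of_nonneg (by linarith)]
    calc dist (Γ y) (Γ x) ≤ (Cq : ℝ) * L * (x - y) := this
      _ = ((Cq * L : ℝ≥0) : ℝ) * (x - y) := by push_cast; ring
end
end

section
/- Let n > m be positive integers. There is no mapping Φ : ℝ^n → ℝ^m such that ℓ(Φ∘γ) = ℓ(γ) for every rectifiable curve γ in ℝ^n; that is, there is no curve-length preserving mapping from ℝ^n into ℝ^m when m < n. -/
open MeasureTheory Set ENNReal NNReal

open Filter

set_option linter.unusedSectionVars false
set_option maxHeartbeats 1000000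
set_option synthInstance.maxHeartbeats 1000000

noncomputable section

set_option linter.unusedSectionVars false


lemma eVariationOn_isometry {α E : Type*} [LinearOrder α] [PseudoEMetricSpace α]
    [PseudoEMetricSpace E] {f : α → E}
    (h : ∀ x y, edist (f x) (f y) = edist x y) (s : Set α) :
    eVariationOn f s = eVariationOn id s := by
  unfold eVariationOn
  congr 1
  funext p
  congr 1
  funext i
  exact h _ _

lemma eVariationOn_id_Icc' {a b : ℝ} (hab : a ≤ b) :
    eVariationOn (id : ℝ → ℝ) (Icc a b) = ENNReal.ofReal (b - a) := by
  apply le_antisymm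
  · have h := MonotoneOn.eVariationOn_le (f := (id : ℝ → ℝ)) (s := Icc a b)
      (fun x _ y _ hxy => hxy) (Set.left_mem_Icc.2 hab) (Set.right_mem_Icc.2 hab)
    simpa using h
  · have h := eVariationOn.edist_le (id : ℝ → ℝ) (Set.left_mem_Icc.2 hab)
      (Set.right_mem_Icc.2 hab)
    rw [edist_dist, Real.dist_eq, abs_of_nonpos (by simpa using hab)] at h
    simpa [neg_sub] using h


section lines
variable {E : Type*} [NormedAddCommGroup E] [NormedSpace ℝ E]

lemma line_edist {v : E} (hv : ‖v‖ = 1) (x : E) (s t : ℝ) :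
    edist (x + s • v) (x + t • v) = edist s t := by
  rw [edist_dist, edist_dist, dist_eq_norm, Real.dist_eq]
  congr 1
  have : x + s • v - (x + t • v) = (s - t) • v := by
    rw [sub_smul]; abel
  rw [this, norm_smul, hv, Real.norm_eq_abs, mul_one]

lemma line_eVar {v : E} (hv : ‖v‖ = 1) (x : E) {a b : ℝ} (hab : a ≤ b) :
    eVariationOn (fun t => x + t • v) (Icc a b) = ENNReal.ofReal (b - a) := by
  rw [eVariationOn_isometry (fun s t => line_edist hv x s t), eVariationOn_id_Icc' hab]

variable {F : Type*} [NormedAddCommGroup F] [NormedSpace ℝ F]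

lemma phi_line_var (Φ : E → F)
    (hΦ : ∀ (a b : ℝ) (γ : ℝ → E),
      ContinuousOn γ (Set.Icc a b) → eVariationOn γ (Set.Icc a b) ≠ ⊤ →
      eVariationOn (Φ ∘ γ) (Set.Icc a b) = eVariationOn γ (Set.Icc a b))
    {v : E} (hv : ‖v‖ = 1) (x : E) {a b : ℝ} (hab : a ≤ b) :
    eVariationOn (fun t => Φ (x + t • v)) (Icc a b) = ENNReal.ofReal (b - a) := by
  have hcont : ContinuousOn (fun t : ℝ => x + t • v) (Icc a b) :=
    (continuous_const.add (continuous_id.smul continuous_const)).continuousOn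
  have h := hΦ a b _ hcont (by rw [line_eVar hv x hab]; exact ofReal_ne_top)
  rw [line_eVar hv x hab] at h
  exact h

lemma phi_lip (Φ : E → F)
    (hΦ : ∀ (a b : ℝ) (γ : ℝ → E),
      ContinuousOn γ (Set.Icc a b) → eVariationOn γ (Set.Icc a b) ≠ ⊤ →
      eVariationOn (Φ ∘ γ) (Set.Icc a b) = eVariationOn γ (Set.Icc a b)) :
    LipschitzWith 1 Φ := by
  intro x y
  rcases eq_or_ne x y with rfl | hxy
  · simp
  · set d := ‖y - x‖ with hd
    have hd0 : 0 < d := by simpa [hd] using sub_ne_zero.2 hxy.symm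
    set v : E := d⁻¹ • (y - x) with hvdef
    have hv : ‖v‖ = 1 := by
      rw [hvdef, norm_smul, norm_inv, Real.norm_eq_abs, abs_of_pos hd0, inv_mul_cancel₀ hd0.ne']
    have h0 : x + (0:ℝ) • v = x := by simp
    have hdv : x + d • v = y := by
      rw [hvdef, smul_smul, mul_inv_cancel₀ hd0.ne', one_smul]; abel
    have hvar := phi_line_var Φ hΦ hv x (le_of_lt hd0)
    have h1 : edist (Φ x) (Φ y) ≤ eVariationOn (fun t => Φ (x + t • v)) (Icc 0 d) := by
      have := eVariationOn.edist_le (fun t => Φ (x + t • v))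
        (Set.left_mem_Icc.2 hd0.le) (Set.right_mem_Icc.2 hd0.le)
      simp only [h0, hdv] at this
      exact this
    rw [hvar, sub_zero] at h1
    calc edist (Φ x) (Φ y) ≤ ENNReal.ofReal d := h1
      _ = edist x y := by
          rw [edist_dist, dist_eq_norm, hd, norm_sub_rev]
      _ ≤ 1 * edist x y := by simp


section oneD
variable {F : Type*} [NormedAddCommGroup F] [NormedSpace ℝ F] [CompleteSpace F]

def uspTerm (g : ℝ → F) (k : ℕ) (t : ℝ) : ℝ≥0∞ :=
  ENNReal.ofReal (((k : ℝ) + 1) * ‖g (t + ((k : ℝ) + 1)⁻¹) - g t‖)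

/-- The (upper, discrete) metric speed of `g`. -/
def usp (g : ℝ → F) : ℝ → ℝ≥0∞ := fun t => Filter.limsup (fun k : ℕ => uspTerm g k t) atTop

omit [NormedSpace ℝ F] [CompleteSpace F] in
lemma usp_term_le_one {g : ℝ → F} (hg : LipschitzWith 1 g) (t : ℝ) (k : ℕ) :
    uspTerm g k t ≤ 1 := by
  have hk : (0 : ℝ) < (k : ℝ) + 1 := by positivity
  have h1 : ‖g (t + ((k : ℝ) + 1)⁻¹) - g t‖ ≤ ((k : ℝ) + 1)⁻¹ := by
    have := hg.dist_le_mul (t + ((k : ℝ) + 1)⁻¹) t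
    rw [dist_eq_norm] at this
    simpa [Real.dist_eq, abs_of_pos hk] using this
  calc uspTerm g k t
      ≤ ENNReal.ofReal (((k : ℝ) + 1) * ((k : ℝ) + 1)⁻¹) :=
        ENNReal.ofReal_le_ofReal (by nlinarith [norm_nonneg (g (t + ((k : ℝ) + 1)⁻¹) - g t)])
    _ = 1 := by rw [mul_inv_cancel₀ hk.ne']; exact ENNReal.ofReal_one

omit [NormedSpace ℝ F] [CompleteSpace F] in
lemma usp_le_one {g : ℝ → F} (hg : LipschitzWith 1 g) (t : ℝ) : usp g t ≤ 1 :=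
  Filter.limsup_le_of_le (by isBoundedDefault)
    (Filter.Eventually.of_forall fun k => usp_term_le_one hg t k)

omit [NormedSpace ℝ F] [CompleteSpace F] in
lemma uspTerm_measurable {g : ℝ → F} (hg : Continuous g) (k : ℕ) :
    Measurable (uspTerm g k) := by
  apply ENNReal.measurable_ofReal.comp
  apply Measurable.const_mul
  exact ((hg.comp (continuous_id.add continuous_const)).sub hg).norm.measurable

omit [NormedSpace ℝ F] [CompleteSpace F] in
lemma usp_measurable {g : ℝ → F} (hg : Continuous g) : Measurable (usp g) :=
  Measurable.limsup fun k => uspTerm_measurable hg k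

lemma usp_chord {g : ℝ → F} (hg : LipschitzWith 1 g) {c d : ℝ} (hcd : c ≤ d) :
    ENNReal.ofReal ‖g d - g c‖ ≤ ∫⁻ t in Ioc c d, usp g t := by
  have hcont : Continuous g := hg.continuous
  set G : ℝ → F := fun x => ∫ t in (0:ℝ)..x, g t with hGdef
  have hG : ∀ x : ℝ, HasDerivAt G (g x) x := fun x =>
    intervalIntegral.integral_hasDerivAt_right (hcont.intervalIntegrable _ _)
      (hcont.stronglyMeasurableAtFilter _ _) hcont.continuousAt
  have hkpos : ∀ k : ℕ, (0 : ℝ) < ((k : ℝ) + 1)⁻¹ := fun k => by positivity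
  have hktend : Tendsto (fun k : ℕ => ((k : ℝ) + 1)⁻¹) atTop (nhds 0) := by
    simpa [one_div] using tendsto_one_div_add_atTop_nhds_zero_nat (𝕜 := ℝ)
  -- difference quotients of G converge to g
  have hslope : ∀ x : ℝ,
      Tendsto (fun k : ℕ => ((k : ℝ) + 1) • (G (x + ((k : ℝ) + 1)⁻¹) - G x)) atTop (nhds (g x)) := by
    intro x
    have h1 : Tendsto (slope G x) (nhdsWithin x {x}ᶜ) (nhds (g x)) :=
      hasDerivAt_iff_tendsto_slope.mp (hG x)
    have h2 : Tendsto (fun k : ℕ => x + ((k : ℝ) + 1)⁻¹) atTop (nhdsWithin x {x}ᶜ) := by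
      apply tendsto_nhdsWithin_of_tendsto_nhds_of_eventually_within
      · simpa using tendsto_const_nhds.add hktend
      · exact Filter.Eventually.of_forall fun k => by
          simp [add_eq_left, (hkpos k).ne']
    have h3 := h1.comp h2
    refine h3.congr fun k => ?_
    rw [Function.comp_apply, slope_def_module]
    simp [add_sub_cancel_left]
  -- the integral identity
  have hint : ∀ k : ℕ, (∫ t in c..d, (g (t + ((k : ℝ) + 1)⁻¹) - g t)) =
      (G (d + ((k : ℝ) + 1)⁻¹) - G d) - (G (c + ((k : ℝ) + 1)⁻¹) - G c) := by
    intro k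
    have i1 : IntervalIntegrable (fun t => g (t + ((k : ℝ) + 1)⁻¹)) volume c d :=
      (hcont.comp (continuous_id.add continuous_const)).intervalIntegrable _ _
    have i2 : IntervalIntegrable g volume c d := hcont.intervalIntegrable _ _
    rw [intervalIntegral.integral_sub i1 i2, intervalIntegral.integral_comp_add_right]
    have e1 : (∫ x in c + ((k : ℝ) + 1)⁻¹..d + ((k : ℝ) + 1)⁻¹, g x)
        = G (d + ((k : ℝ) + 1)⁻¹) - G (c + ((k : ℝ) + 1)⁻¹) :=
      (intervalIntegral.integral_interval_sub_left (hcont.intervalIntegrable _ _)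
        (hcont.intervalIntegrable _ _)).symm
    have e2 : (∫ x in c..d, g x) = G d - G c :=
      (intervalIntegral.integral_interval_sub_left (hcont.intervalIntegrable _ _)
        (hcont.intervalIntegrable _ _)).symm
    rw [e1, e2]; abel
  set S : ℕ → F := fun k => ((k : ℝ) + 1) • (∫ t in c..d, (g (t + ((k : ℝ) + 1)⁻¹) - g t))
    with hSdef
  have hS : Tendsto S atTop (nhds (g d - g c)) := by
    refine ((hslope d).sub (hslope c)).congr fun k => ?_
    rw [hSdef]
    simp only
    rw [hint k]; simp [smul_sub]
  have hnorm : ∀ k : ℕ, ENNReal.ofReal ‖S k‖ ≤ ∫⁻ t in Ioc c d, uspTerm g k t := by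
    intro k
    have hb : ‖S k‖ ≤ ∫ t in Ioc c d, ((k : ℝ) + 1) * ‖g (t + ((k : ℝ) + 1)⁻¹) - g t‖ := by
      rw [hSdef]
      simp only
      rw [norm_smul, Real.norm_eq_abs, abs_of_pos (by positivity : (0:ℝ) < (k:ℝ)+1),
        MeasureTheory.integral_const_mul]
      have h1 : ‖∫ t in c..d, (g (t + ((k : ℝ) + 1)⁻¹) - g t)‖
          ≤ ∫ t in Set.uIoc c d, ‖g (t + ((k : ℝ) + 1)⁻¹) - g t‖ :=
        intervalIntegral.norm_integral_le_integral_norm_uIoc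
      rw [Set.uIoc_of_le hcd] at h1
      exact mul_le_mul_of_nonneg_left h1 (by positivity)
    calc ENNReal.ofReal ‖S k‖
        ≤ ENNReal.ofReal (∫ t in Ioc c d, ((k : ℝ) + 1) * ‖g (t + ((k : ℝ) + 1)⁻¹) - g t‖) :=
          ENNReal.ofReal_le_ofReal hb
      _ = ∫⁻ t in Ioc c d, uspTerm g k t := by
          apply ofReal_integral_eq_lintegral_ofReal
          · apply Continuous.integrableOn_Ioc
            exact continuous_const.mul
              (((hcont.comp (continuous_id.add continuous_const)).sub hcont).norm)
          · exact Filter.Eventually.of_forall fun t => by positivity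
  have hlim : ENNReal.ofReal ‖g d - g c‖ = limsup (fun k => ENNReal.ofReal ‖S k‖) atTop := by
    symm
    exact Filter.Tendsto.limsup_eq ((ENNReal.continuous_ofReal.tendsto _).comp hS.norm)
  rw [hlim]
  calc limsup (fun k => ENNReal.ofReal ‖S k‖) atTop
      ≤ limsup (fun k => ∫⁻ t in Ioc c d, uspTerm g k t) atTop :=
        Filter.limsup_le_limsup (Filter.Eventually.of_forall hnorm)
    _ ≤ ∫⁻ t in Ioc c d, usp g t := by
        apply limsup_lintegral_le (fun _ => (1 : ℝ≥0∞))
        · exact fun k => uspTerm_measurable hcont k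
        · exact fun k => Filter.Eventually.of_forall fun t => usp_term_le_one hg t k
        · simp [Real.volume_Ioc]




lemma var_le_lintegral {g : ℝ → F} (hg : LipschitzWith 1 g) {a b : ℝ} :
    eVariationOn g (Icc a b) ≤ ∫⁻ t in Icc a b, usp g t := by
  apply iSup_le
  rintro ⟨N, u, hu, hus⟩
  have key : ∀ M : ℕ, ∑ i ∈ Finset.range M, edist (g (u (i + 1))) (g (u i))
      ≤ ∫⁻ t in Ioc (u 0) (u M), usp g t := by
    intro M
    induction M with
    | zero => simp
    | succ M ih =>
      rw [Finset.sum_range_succ]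
      have hstep : edist (g (u (M + 1))) (g (u M)) ≤ ∫⁻ t in Ioc (u M) (u (M + 1)), usp g t := by
        rw [edist_dist, dist_eq_norm]
        exact usp_chord hg (hu (Nat.le_succ M))
      calc ∑ i ∈ Finset.range M, edist (g (u (i + 1))) (g (u i))
            + edist (g (u (M + 1))) (g (u M))
          ≤ (∫⁻ t in Ioc (u 0) (u M), usp g t) + ∫⁻ t in Ioc (u M) (u (M + 1)), usp g t :=
            add_le_add ih hstep
        _ = ∫⁻ t in Ioc (u 0) (u M) ∪ Ioc (u M) (u (M + 1)), usp g t :=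
            (lintegral_union measurableSet_Ioc (Set.Ioc_disjoint_Ioc_of_le le_rfl)).symm
        _ = ∫⁻ t in Ioc (u 0) (u (M + 1)), usp g t := by
            rw [Set.Ioc_union_Ioc_eq_Ioc (hu (Nat.zero_le M)) (hu (Nat.le_succ M))]
    
  calc ∑ i ∈ Finset.range N, edist (g (u (i + 1))) (g (u i))
      ≤ ∫⁻ t in Ioc (u 0) (u N), usp g t := key N
    _ ≤ ∫⁻ t in Icc a b, usp g t :=
        lintegral_mono_set (Set.Ioc_subset_Icc_self.trans
          (Set.Icc_subset_Icc (hus 0).1 (hus N).2))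



lemma usp_ae_one {g : ℝ → F} (hg : LipschitzWith 1 g)
    (hvar : ∀ a b : ℝ, a ≤ b → eVariationOn g (Icc a b) = ENNReal.ofReal (b - a)) :
    volume {t : ℝ | usp g t < 1} = 0 := by
  have hum : Measurable (usp g) := usp_measurable hg.continuous
  have key : ∀ j J : ℕ,
      volume ({t : ℝ | usp g t ≤ ENNReal.ofReal (1 - ((j : ℝ) + 1)⁻¹)} ∩ Icc (-(J:ℝ)) J) = 0 := by
    intro j J
    set ε : ℝ := ((j : ℝ) + 1)⁻¹ with hε
    have hε0 : 0 < ε := by positivity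
    have hε1 : ε ≤ 1 := by
      rw [hε]
      rw [inv_le_one_iff₀]
      right; simp
    set c : ℝ≥0∞ := ENNReal.ofReal (1 - ε)
    set A : Set ℝ := Icc (-(J:ℝ)) J with hA
    set T : Set ℝ := {t : ℝ | usp g t ≤ c} ∩ A with hT
    have hTA : T ⊆ A := Set.inter_subset_right
    have hTmeas : MeasurableSet T := (hum measurableSet_Iic).inter measurableSet_Icc
    have hJJ : -(J:ℝ) ≤ (J:ℝ) := by simp [neg_le_self_iff]
    have hAvol : volume A = ENNReal.ofReal ((J:ℝ) - (-(J:ℝ))) := by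
      rw [hA, Real.volume_Icc]
    have hAfin : volume A ≠ ⊤ := by rw [hAvol]; exact ofReal_ne_top
    have hTfin : volume T ≠ ⊤ := fun h => hAfin (top_le_iff.1 (h ▸ measure_mono hTA))
    -- lower bound
    have hlow : volume A ≤ ∫⁻ t in A, usp g t := by
      rw [hAvol, ← hvar _ _ hJJ]
      exact var_le_lintegral hg
    -- upper bound
    have hsplit : (∫⁻ t in A, usp g t) = (∫⁻ t in T, usp g t) + ∫⁻ t in A \ T, usp g t := by
      rw [← lintegral_union (measurableSet_Icc.diff hTmeas) disjoint_sdiff_right,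
        Set.union_diff_cancel hTA]
    have hup1 : (∫⁻ t in T, usp g t) ≤ c * volume T := by
      calc (∫⁻ t in T, usp g t) ≤ ∫⁻ _ in T, c :=
            setLIntegral_mono measurable_const fun t ht => ht.1
        _ = c * volume T := setLIntegral_const T c
    have hup2 : (∫⁻ t in A \ T, usp g t) ≤ volume A - volume T := by
      calc (∫⁻ t in A \ T, usp g t) ≤ ∫⁻ _ in A \ T, 1 :=
            setLIntegral_mono measurable_const fun t _ => usp_le_one hg t
        _ = volume (A \ T) := by rw [setLIntegral_const, one_mul]
        _ = volume A - volume T := measure_diff hTA hTmeas.nullMeasurableSet hTfin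
    -- combine
    have hc1 : c * volume T + ε.toNNReal * volume T = volume T := by
      rw [← add_mul]
      have : c + ε.toNNReal = 1 := by
        rw [← ofReal_coe_nnreal, Real.coe_toNNReal _ hε0.le, ← ENNReal.ofReal_add (by linarith) hε0.le]
        simp
      rw [this, one_mul]
    have hmain : volume A + ε.toNNReal * volume T ≤ volume A := by
      calc volume A + ε.toNNReal * volume T
          ≤ (c * volume T + (volume A - volume T)) + ε.toNNReal * volume T :=
            add_le_add_left (hlow.trans (hsplit.le.trans (add_le_add hup1 hup2))) _
        _ = (c * volume T + ε.toNNReal * volume T) + (volume A - volume T) := by ring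
        _ = volume T + (volume A - volume T) := by rw [hc1]
        _ = volume A := by
            rw [add_comm, tsub_add_cancel_of_le (measure_mono hTA)]
    have : ε.toNNReal * volume T = 0 := by
      by_contra h
      have := ENNReal.lt_add_right hAfin h
      exact absurd hmain (by simpa using this.not_ge)
    rcases mul_eq_zero.1 this with h | h
    · exfalso
      have : ε.toNNReal ≠ 0 := by
        simp only [ne_eq, ENNReal.coe_eq_zero]
        exact fun hh => absurd (Real.toNNReal_eq_zero.1 hh) (not_le.2 hε0)
      exact this (by exact_mod_cast h)
    · exact h
  -- cover {usp < 1} by the countable family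
  have hcover : {t : ℝ | usp g t < 1} ⊆
      ⋃ j : ℕ, ⋃ J : ℕ, ({t : ℝ | usp g t ≤ ENNReal.ofReal (1 - ((j : ℝ) + 1)⁻¹)} ∩ Icc (-(J:ℝ)) J) := by
    intro t ht
    simp only [mem_setOf_eq] at ht
    have htop : usp g t ≠ ⊤ := ht.ne_top
    set r : ℝ := (usp g t).toReal with hr
    have hrlt : r < 1 := by
      rw [hr]
      exact ENNReal.toReal_lt_of_lt_ofReal (by simpa [ENNReal.ofReal_one] using ht)
    obtain ⟨j, hj⟩ := exists_nat_gt (1 - r)⁻¹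
    obtain ⟨J, hJ⟩ := exists_nat_ge |t|
    simp only [mem_iUnion]
    refine ⟨j, J, ⟨?_, ?_⟩⟩
    · simp only [mem_setOf_eq]
      have h1r : 0 < 1 - r := by linarith
      have hjj : ((j : ℝ) + 1)⁻¹ < 1 - r := by
        rw [inv_lt_comm₀ (by positivity) h1r]
        calc (1 - r)⁻¹ < j := hj
          _ ≤ (j : ℝ) + 1 := by linarith
      have : r ≤ 1 - ((j : ℝ) + 1)⁻¹ := by linarith
      calc usp g t = ENNReal.ofReal r := by rw [hr, ENNReal.ofReal_toReal htop]
        _ ≤ ENNReal.ofReal (1 - ((j : ℝ) + 1)⁻¹) := ENNReal.ofReal_le_ofReal this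
    · exact ⟨(abs_le.1 hJ).1, (abs_le.1 hJ).2⟩
  exact measure_mono_null hcover (measure_iUnion_null fun j => measure_iUnion_null fun J => key j J)



lemma usp_eq_deriv {g : ℝ → F} {t : ℝ} (hdiff : DifferentiableAt ℝ g t) :
    usp g t = ENNReal.ofReal ‖deriv g t‖ := by
  have hkpos : ∀ k : ℕ, (0 : ℝ) < ((k : ℝ) + 1)⁻¹ := fun k => by positivity
  have hktend : Tendsto (fun k : ℕ => ((k : ℝ) + 1)⁻¹) atTop (nhds 0) := by
    simpa [one_div] using tendsto_one_div_add_atTop_nhds_zero_nat (𝕜 := ℝ)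
  have h1 : Tendsto (slope g t) (nhdsWithin t {t}ᶜ) (nhds (deriv g t)) :=
    hasDerivAt_iff_tendsto_slope.mp hdiff.hasDerivAt
  have h2 : Tendsto (fun k : ℕ => t + ((k : ℝ) + 1)⁻¹) atTop (nhdsWithin t {t}ᶜ) := by
    apply tendsto_nhdsWithin_of_tendsto_nhds_of_eventually_within
    · simpa using tendsto_const_nhds.add hktend
    · exact Filter.Eventually.of_forall fun k => by
        simp [add_eq_left, (hkpos k).ne']
  have h3 : Tendsto (fun k : ℕ => uspTerm g k t) atTop (nhds (ENNReal.ofReal ‖deriv g t‖)) := by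
    have h4 := (ENNReal.continuous_ofReal.tendsto _).comp ((h1.comp h2).norm)
    refine h4.congr fun k => ?_
    simp only [Function.comp_apply]
    rw [slope_def_module, uspTerm]
    congr 1
    rw [norm_smul, Real.norm_eq_abs, add_sub_cancel_left, inv_inv, abs_of_pos (by positivity : (0:ℝ) < (k:ℝ)+1)]
  exact h3.limsup_eq

end oneD

lemma oneD_null {F : Type*} [NormedAddCommGroup F] [NormedSpace ℝ F] [CompleteSpace F]
    {g : ℝ → F} (hg : LipschitzWith 1 g)
    (hvar : ∀ a b : ℝ, a ≤ b → eVariationOn g (Icc a b) = ENNReal.ofReal (b - a)) :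
    volume {t : ℝ | DifferentiableAt ℝ g t ∧ ‖deriv g t‖ < 1} = 0 := by
  apply measure_mono_null _ (usp_ae_one hg hvar)
  rintro t ⟨hd, hlt⟩
  show usp g t < 1
  rw [usp_eq_deriv hd]
  exact ENNReal.ofReal_lt_one.2 hlt



lemma null_of_null_lines {k : ℕ} {B : Set (EuclideanSpace ℝ (Fin (k+1)))} (hB : MeasurableSet B)
    (h : ∀ x : EuclideanSpace ℝ (Fin (k+1)),
      volume {t : ℝ | x + t • (EuclideanSpace.single 0 1 : EuclideanSpace ℝ (Fin (k+1))) ∈ B} = 0) :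
    volume B = 0 := by
  set e := (MeasurableEquiv.toLp 2 (Fin (k+1) → ℝ)).symm with he_def
  have he := EuclideanSpace.volume_preserving_symm_measurableEquiv_toLp (Fin (k+1))
  set B1 : Set (Fin (k+1) → ℝ) := e.symm ⁻¹' B with hB1
  have hB1m : MeasurableSet B1 := e.symm.measurable hB
  have h1 : volume B = volume B1 := by
    have : e ⁻¹' B1 = B := by
      rw [hB1, ← Set.preimage_comp]
      simp
    rw [← this]
    exact he.measure_preimage hB1m.nullMeasurableSet
  set p := MeasurableEquiv.piFinSuccAbove (fun _ : Fin (k+1) => ℝ) 0 with hp_def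
  have hp := measurePreserving_piFinSuccAbove (fun _ : Fin (k+1) => (volume : Measure ℝ)) 0
  set B2 : Set (ℝ × (Fin k → ℝ)) := p.symm ⁻¹' B1 with hB2
  have hB2m : MeasurableSet B2 := p.symm.measurable hB1m
  have h2 : volume B1 = ((volume : Measure ℝ).prod (Measure.pi fun _ : Fin k => volume)) B2 := by
    have h3 := hp.measure_preimage (s := B2) hB2m.nullMeasurableSet
    have h4 : p ⁻¹' B2 = B1 := by
      rw [hB2, ← Set.preimage_comp]
      simp
    rw [h4] at h3
    rw [← h3, volume_pi]
  rw [h1, h2, Measure.prod_apply_symm hB2m]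
  have hzero : ∀ y : Fin k → ℝ, volume ((fun t => (t, y)) ⁻¹' B2) = 0 := by
    intro y
    have hsec : ((fun t => (t, y)) ⁻¹' B2) =
        {t : ℝ | (e.symm (Fin.insertNth 0 0 y)) + t • (EuclideanSpace.single 0 1 :
          EuclideanSpace ℝ (Fin (k+1))) ∈ B} := by
      ext t
      simp only [hB2, hB1, Set.mem_preimage, Set.mem_setOf_eq]
      have hps : p.symm (t, y) = Fin.insertNth 0 t y := rfl
      rw [hps]
      have key : (e.symm (Fin.insertNth 0 t y) : EuclideanSpace ℝ (Fin (k+1))) =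
          e.symm (Fin.insertNth 0 0 y) + t • (EuclideanSpace.single 0 1 :
            EuclideanSpace ℝ (Fin (k+1))) := by
        apply PiLp.ext
        intro i
        rw [PiLp.add_apply, PiLp.smul_apply, EuclideanSpace.single_apply, smul_eq_mul]
        have hsymm : ∀ f : Fin (k+1) → ℝ, ∀ i, (e.symm f) i = f i := fun f i => rfl
        rw [hsymm, hsymm]
        induction i using Fin.cases with
        | zero =>
          rw [Fin.insertNth_apply_same, Fin.insertNth_apply_same]
          simp
        | succ j =>
          rw [← Fin.succAbove_zero, Fin.insertNth_apply_succAbove, Fin.insertNth_apply_succAbove]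
          simp [Fin.succ_ne_zero j]
      rw [key]
    rw [hsec]
    exact h _
  simp only [hzero]
  exact lintegral_zero

lemma eVariationOn_comp_isom {α E F : Type*} [LinearOrder α]
    [PseudoEMetricSpace E] [PseudoEMetricSpace F] {R : E → F}
    (hR : ∀ x y, edist (R x) (R y) = edist x y) (γ : α → E) (s : Set α) :
    eVariationOn (fun t => R (γ t)) s = eVariationOn γ s := by
  unfold eVariationOn
  congr 1
  funext p
  congr 1
  funext i
  exact hR _ _

section main
variable {k m : ℕ}

lemma lipschitz_line {E : Type*} [NormedAddCommGroup E] [NormedSpace ℝ E]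
    {v : E} (hv : ‖v‖ = 1) (x : E) : LipschitzWith 1 (fun t : ℝ => x + t • v) :=
  LipschitzWith.of_edist_le fun s t => le_of_eq (line_edist hv x s t)

lemma bad_null_e0 (Φ : EuclideanSpace ℝ (Fin (k+1)) → EuclideanSpace ℝ (Fin m))
    (hΦ : ∀ (a b : ℝ) (γ : ℝ → EuclideanSpace ℝ (Fin (k+1))),
      ContinuousOn γ (Set.Icc a b) → eVariationOn γ (Set.Icc a b) ≠ ⊤ →
      eVariationOn (Φ ∘ γ) (Set.Icc a b) = eVariationOn γ (Set.Icc a b)) :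
    volume {z : EuclideanSpace ℝ (Fin (k+1)) | DifferentiableAt ℝ Φ z ∧
      ‖fderiv ℝ Φ z (EuclideanSpace.single 0 1)‖ < 1} = 0 := by
  set v₀ : EuclideanSpace ℝ (Fin (k+1)) := EuclideanSpace.single 0 1 with hv₀def
  have hv₀ : ‖v₀‖ = 1 := by rw [hv₀def, EuclideanSpace.norm_single]; simp
  have hlip : LipschitzWith 1 Φ := phi_lip Φ hΦ
  apply null_of_null_lines
  · exact (measurableSet_of_differentiableAt ℝ Φ).inter
      (measurableSet_lt ((measurable_fderiv_apply_const ℝ Φ v₀).norm) measurable_const)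
  · intro x
    set g : ℝ → EuclideanSpace ℝ (Fin m) := fun t => Φ (x + t • v₀) with hg_def
    have hg : LipschitzWith 1 g := by
      have := hlip.comp (lipschitz_line hv₀ x)
      rw [mul_one] at this
      exact this
    have hgvar : ∀ a b : ℝ, a ≤ b → eVariationOn g (Icc a b) = ENNReal.ofReal (b - a) :=
      fun a b hab => phi_line_var Φ hΦ hv₀ x hab
    apply measure_mono_null _ (oneD_null hg hgvar)
    rintro t ⟨hd, hlt⟩
    have hline : HasDerivAt (fun s : ℝ => x + s • v₀) v₀ t := by
      simpa using (((hasDerivAt_id t).smul_const v₀).const_add x)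
    have hcomp : HasDerivAt g (fderiv ℝ Φ (x + t • v₀) v₀) t :=
      (hd.hasFDerivAt.comp_hasDerivAt t hline)
    exact ⟨hcomp.differentiableAt, by rwa [hcomp.deriv]⟩

lemma bad_null_v (Φ : EuclideanSpace ℝ (Fin (k+1)) → EuclideanSpace ℝ (Fin m))
    (hΦ : ∀ (a b : ℝ) (γ : ℝ → EuclideanSpace ℝ (Fin (k+1))),
      ContinuousOn γ (Set.Icc a b) → eVariationOn γ (Set.Icc a b) ≠ ⊤ →
      eVariationOn (Φ ∘ γ) (Set.Icc a b) = eVariationOn γ (Set.Icc a b))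
    {v : EuclideanSpace ℝ (Fin (k+1))} (hv : ‖v‖ = 1) :
    volume {z : EuclideanSpace ℝ (Fin (k+1)) | DifferentiableAt ℝ Φ z ∧
      ‖fderiv ℝ Φ z v‖ < 1} = 0 := by
  set v₀ : EuclideanSpace ℝ (Fin (k+1)) := EuclideanSpace.single 0 1 with hv₀def
  have hv₀ : ‖v₀‖ = 1 := by rw [hv₀def, EuclideanSpace.norm_single]; simp
  set R := Submodule.reflection (ℝ ∙ (v₀ - v))ᗮ with hRdef
  have hRv₀ : R v₀ = v := Submodule.reflection_sub (by rw [hv₀, hv])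
  have hRisom : ∀ x y, edist (R x) (R y) = edist x y := fun x y => R.edist_map x y
  set Φ' := fun z => Φ (R z) with hΦ'def
  have hΦ' : ∀ (a b : ℝ) (γ : ℝ → EuclideanSpace ℝ (Fin (k+1))),
      ContinuousOn γ (Set.Icc a b) → eVariationOn γ (Set.Icc a b) ≠ ⊤ →
      eVariationOn (Φ' ∘ γ) (Set.Icc a b) = eVariationOn γ (Set.Icc a b) := by
    intro a b γ hcont hfin
    have hvarR : eVariationOn (fun t => R (γ t)) (Set.Icc a b) = eVariationOn γ (Set.Icc a b) :=
      eVariationOn_comp_isom hRisom γ _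
    have h1 : eVariationOn (Φ ∘ fun t => R (γ t)) (Set.Icc a b)
        = eVariationOn (fun t => R (γ t)) (Set.Icc a b) :=
      hΦ a b _ (R.continuous.comp_continuousOn hcont) (by rw [hvarR]; exact hfin)
    calc eVariationOn (Φ' ∘ γ) (Set.Icc a b)
        = eVariationOn (Φ ∘ fun t => R (γ t)) (Set.Icc a b) := rfl
      _ = eVariationOn γ (Set.Icc a b) := by rw [h1, hvarR]
  have h0 := bad_null_e0 Φ' hΦ'
  -- identify the bad set for `Φ'` with the preimage under `R` of the bad set for `Φ`
  set M : Set (EuclideanSpace ℝ (Fin (k+1))) :=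
    {y | DifferentiableAt ℝ Φ y ∧ ‖fderiv ℝ Φ y v‖ < 1} with hMdef
  have hMmeas : MeasurableSet M := (measurableSet_of_differentiableAt ℝ Φ).inter
      (measurableSet_lt ((measurable_fderiv_apply_const ℝ Φ v).norm) measurable_const)
  set e := R.toContinuousLinearEquiv with he_def
  have hecoe : ∀ z, e z = R z := fun z => rfl
  have hpre : {z : EuclideanSpace ℝ (Fin (k+1)) | DifferentiableAt ℝ Φ' z ∧
      ‖fderiv ℝ Φ' z v₀‖ < 1} = ⇑R ⁻¹' M := by
    ext z
    have hdiff_iff : DifferentiableAt ℝ Φ' z ↔ DifferentiableAt ℝ Φ (R z) := by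
      have : Φ' = Φ ∘ e := rfl
      rw [this]
      exact e.comp_right_differentiableAt_iff
    simp only [mem_setOf_eq, Set.mem_preimage, hMdef]
    constructor
    · rintro ⟨hd, hlt⟩
      refine ⟨hdiff_iff.1 hd, ?_⟩
      have hfd : fderiv ℝ Φ' z = (fderiv ℝ Φ (e z)).comp (e : _ →L[ℝ] _) := by
        have : Φ' = Φ ∘ e := rfl
        rw [this]
        exact e.comp_right_fderiv
      rw [hfd] at hlt
      simpa [hecoe, hRv₀] using hlt
    · rintro ⟨hd, hlt⟩
      have hd' : DifferentiableAt ℝ Φ' z := hdiff_iff.2 hd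
      refine ⟨hd', ?_⟩
      have hfd : fderiv ℝ Φ' z = (fderiv ℝ Φ (e z)).comp (e : _ →L[ℝ] _) := by
        have : Φ' = Φ ∘ e := rfl
        rw [this]
        exact e.comp_right_fderiv
      rw [hfd]
      simpa [hecoe, hRv₀] using hlt
  rw [hpre] at h0
  have hmp : MeasurePreserving (⇑R) (volume : Measure (EuclideanSpace ℝ (Fin (k+1)))) volume :=
    R.measurePreserving
  rwa [hmp.measure_preimage hMmeas.nullMeasurableSet] at h0
end main

set_option synthInstance.maxHeartbeats 400000 in
/-- **No curve-length preserving map `ℝⁿ → ℝᵐ` for `m < n`.** If `n > m` are positive integers,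
there is no map `Φ : ℝⁿ → ℝᵐ` (with the Euclidean metrics) such that `ℓ(Φ ∘ γ) = ℓ(γ)` for every
rectifiable curve `γ` in `ℝⁿ`. -/
theorem no_length_preserving_map (n m : ℕ) (hm : 0 < m) (hmn : m < n) :
    ¬ ∃ Φ : EuclideanSpace ℝ (Fin n) → EuclideanSpace ℝ (Fin m),
        ∀ (a b : ℝ) (γ : ℝ → EuclideanSpace ℝ (Fin n)),
          ContinuousOn γ (Set.Icc a b) → eVariationOn γ (Set.Icc a b) ≠ ⊤ →
          eVariationOn (Φ ∘ γ) (Set.Icc a b) = eVariationOn γ (Set.Icc a b) := by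
  rintro ⟨Φ, hΦ⟩
  obtain ⟨k, rfl⟩ : ∃ k, n = k + 1 := ⟨n - 1, by omega⟩
  classical
  have hlip : LipschitzWith 1 Φ := phi_lip Φ hΦ
  have hae : ∀ᵐ z ∂(volume : Measure (EuclideanSpace ℝ (Fin (k+1)))),
      DifferentiableAt ℝ Φ z := hlip.ae_differentiableAt
  obtain ⟨D, hDc, hDd⟩ :=
    TopologicalSpace.exists_countable_dense (EuclideanSpace ℝ (Fin (k+1)))
  set S : EuclideanSpace ℝ (Fin (k+1)) → Set (EuclideanSpace ℝ (Fin (k+1))) := fun d =>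
    if d = 0 then ∅
    else {z | DifferentiableAt ℝ Φ z ∧ ‖fderiv ℝ Φ z (‖d‖⁻¹ • d)‖ < 1} with hSdef
  have hS : ∀ d, volume (S d) = 0 := by
    intro d
    by_cases hd : d = 0
    · simp [hSdef, hd]
    · have hnorm : ‖(‖d‖⁻¹ • d : EuclideanSpace ℝ (Fin (k+1)))‖ = 1 := by
        rw [norm_smul, norm_inv, norm_norm, inv_mul_cancel₀ (norm_ne_zero_iff.2 hd)]
      simp only [hSdef, if_neg hd]
      exact bad_null_v Φ hΦ hnorm
  have hN : volume ({z : EuclideanSpace ℝ (Fin (k+1)) | ¬ DifferentiableAt ℝ Φ z}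
      ∪ ⋃ d ∈ D, S d) = 0 := by
    apply measure_union_null
    · exact ae_iff.1 hae
    · exact (measure_biUnion_null_iff hDc).2 fun d _ => hS d
  have huniv : volume (univ : Set (EuclideanSpace ℝ (Fin (k+1)))) ≠ 0 :=
    isOpen_univ.measure_ne_zero volume univ_nonempty
  have hne : (({z : EuclideanSpace ℝ (Fin (k+1)) | ¬ DifferentiableAt ℝ Φ z}
      ∪ ⋃ d ∈ D, S d)ᶜ).Nonempty := by
    by_contra h
    rw [Set.not_nonempty_iff_eq_empty, Set.compl_empty_iff] at h
    exact huniv (h ▸ hN)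
  obtain ⟨z, hz⟩ := hne
  rw [Set.mem_compl_iff, Set.mem_union, not_or] at hz
  obtain ⟨hz1, hz2⟩ := hz
  have hdiff : DifferentiableAt ℝ Φ z := not_not.1 hz1
  have hz2' : ∀ d ∈ D, z ∉ S d := by
    intro d hd hmem
    exact hz2 (Set.mem_biUnion hd hmem)
  set T := fderiv ℝ Φ z with hTdef
  have hTdir : ∀ d ∈ D, d ≠ 0 → 1 ≤ ‖T (‖d‖⁻¹ • d)‖ := by
    intro d hdD hd0
    by_contra hlt
    apply hz2' d hdD
    simp only [hSdef, if_neg hd0, Set.mem_setOf_eq]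
    exact ⟨hdiff, by rw [← hTdef]; linarith⟩
  have hinj : Function.Injective T := by
    rw [injective_iff_map_eq_zero]
    intro w hw
    by_contra hw0
    set w' : EuclideanSpace ℝ (Fin (k+1)) := ‖w‖⁻¹ • w with hw'def
    have hw'norm : ‖w'‖ = 1 := by
      rw [hw'def, norm_smul, norm_inv, norm_norm, inv_mul_cancel₀ (norm_ne_zero_iff.2 hw0)]
    have hTw' : T w' = 0 := by rw [hw'def, T.map_smul, hw, smul_zero]
    have hop : (0:ℝ) < ‖T‖ + 1 := by positivity
    set ε : ℝ := min (1/2) (1/(2 * (‖T‖ + 1))) with hεdef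
    have hε0 : 0 < ε := lt_min (by norm_num) (by positivity)
    have hεhalf : ε ≤ 1/2 := min_le_left _ _
    have hεsmall : ε ≤ 1/(2 * (‖T‖ + 1)) := min_le_right _ _
    obtain ⟨d, hdD, hdist⟩ := hDd.exists_dist_lt w' hε0
    rw [dist_eq_norm] at hdist
    have hdw : ‖d - w'‖ < ε := by rwa [norm_sub_rev] at hdist
    have hdlow : (1:ℝ)/2 ≤ ‖d‖ := by
      have h1 : ‖w'‖ - ‖d‖ ≤ ‖w' - d‖ := norm_sub_norm_le _ _
      rw [hw'norm] at h1
      linarith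
    have hd0 : d ≠ 0 := by
      intro h
      rw [h, norm_zero] at hdlow
      linarith
    have hd1 : 1 ≤ ‖T (‖d‖⁻¹ • d)‖ := hTdir d hdD hd0
    have hTd : ‖T d‖ ≤ ‖T‖ * ε := by
      calc ‖T d‖ = ‖T (d - w')‖ := by rw [map_sub, hTw', sub_zero]
        _ ≤ ‖T‖ * ‖d - w'‖ := T.le_opNorm _
        _ ≤ ‖T‖ * ε := mul_le_mul_of_nonneg_left hdw.le (norm_nonneg _)
    have hchain : (1:ℝ) ≤ ‖d‖⁻¹ * (‖T‖ * ε) := by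
      calc (1:ℝ) ≤ ‖T (‖d‖⁻¹ • d)‖ := hd1
        _ = ‖d‖⁻¹ * ‖T d‖ := by rw [T.map_smul, norm_smul, norm_inv, norm_norm]
        _ ≤ ‖d‖⁻¹ * (‖T‖ * ε) := mul_le_mul_of_nonneg_left hTd (by positivity)
    have hdinv : ‖d‖⁻¹ ≤ 2 := by
      have h2 : (0:ℝ) < 1/2 := by norm_num
      calc ‖d‖⁻¹ ≤ (1/2 : ℝ)⁻¹ := by
            apply inv_anti₀ h2 hdlow
        _ = 2 := by norm_num
    have hfinal : ‖d‖⁻¹ * (‖T‖ * ε) < 1 := by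
      have h3 : ‖d‖⁻¹ * (‖T‖ * ε) ≤ 2 * (‖T‖ * ε) :=
        mul_le_mul_of_nonneg_right hdinv (by positivity)
      have h4 : ‖T‖ * ε ≤ ‖T‖ * (1/(2 * (‖T‖ + 1))) :=
        mul_le_mul_of_nonneg_left hεsmall (norm_nonneg _)
      have h5 : 2 * (‖T‖ * (1/(2 * (‖T‖ + 1)))) < 1 := by
        have e : 2 * (‖T‖ * (1/(2*(‖T‖+1)))) = ‖T‖ / (‖T‖+1) := by
          field_simp
        rw [e, div_lt_one hop]
        linarith
      linarith
    linarith
  have hinj' : Function.Injective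
      ((T : EuclideanSpace ℝ (Fin (k+1)) →ₗ[ℝ] EuclideanSpace ℝ (Fin m))) := hinj
  have hfin := LinearMap.finrank_le_finrank_of_injective hinj'
  rw [finrank_euclideanSpace_fin, finrank_euclideanSpace_fin] at hfin
  omega
end lines
end
end
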